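/- arXiv:2410.15000 — 8 statements merged into one kernel-verified Lean document; each statement's English description precedes it below -/
import Mathlib

section
/- Let G be a finite simple connected C-canonical graph of order n and diameter d with d ≡ 0 (mod 3) and m_G(−1) = n − d − 1, and let P = v_1 v_2 ⋯ v_{d+1} be a diameter path of G. If x and y are distinct vertices of G not on P each having exactly one neighbor on P, then x is adjacent to y and their unique neighbors on P are v_m and v_{m+3} for some m. Consequently, there are at most two vertices not on P having exactly one neighbor on P. -/
attribute [local instance] Classical.propDecidable

/-- The multiplicity of `-1` as an eigenvalue of the adjacency matrix of `G`,
i.e. the dimension over `ℝ` of the kernel of `A + I`. -/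
noncomputable def multNegOne {V : Type*} [Fintype V] (G : SimpleGraph V) : ℕ :=
  Module.finrank ℝ (LinearMap.ker (Matrix.toLin' (G.adjMatrix ℝ + 1)))

/-- The set of indices `i ∈ {1, …, d+1}` such that `x` is adjacent to the vertex `v i`
of the diameter path `v 1, v 2, …, v (d+1)`. -/
noncomputable def pathNbrs {V : Type*} (G : SimpleGraph V) (d : ℕ) (v : ℕ → V) (x : V) :
    Finset ℕ :=
  (Finset.Icc 1 (d + 1)).filter fun i => G.Adj x (v i)

noncomputable def fpat (r : ℕ) : ℝ := if r % 3 = 0 then 1 else if r % 3 = 1 then -1 else 0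

lemma fpat_step (j : ℕ) : fpat j + fpat (j+1) + fpat (j+2) = 0 := by
  have h : j % 3 = 0 ∨ j % 3 = 1 ∨ j % 3 = 2 := by omega
  rcases h with h | h | h <;>
  · have h1 : (j+1) % 3 = (j % 3 + 1) % 3 := by omega
    have h2 : (j+2) % 3 = (j % 3 + 2) % 3 := by omega
    simp [fpat, h, h1, h2]

lemma rec_left (c : ℕ → ℝ) (T : ℕ)
    (h0 : 1 ≤ T → c 0 + c 1 = 0)
    (hstep : ∀ j, j + 2 ≤ T → c j + c (j+1) + c (j+2) = 0) :
    ∀ i, i ≤ T → c i = fpat i * c 0 := by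
  intro i
  induction i using Nat.strong_induction_on with
  | _ i ih =>
    intro hi
    match i, hi with
    | 0, hi => simp [fpat]
    | 1, hi =>
      have := h0 hi
      have hf : fpat 1 = -1 := by norm_num [fpat]
      rw [hf]; linarith
    | (j+2), hi =>
      have e := hstep j hi
      rw [ih j (by omega) (by omega), ih (j+1) (by omega) (by omega)] at e
      linear_combination e - c 0 * fpat_step j

lemma homog (d : ℕ) (hd3 : d % 3 = 0) (cc : ℕ → ℝ)
    (hhi : ∀ i, d < i → cc i = 0)
    (heq : ∀ j, j ≤ d → (if j = 0 then 0 else cc (j-1)) + cc j + cc (j+1) = 0) :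
    ∀ i, cc i = 0 := by
  have hL : ∀ i, i ≤ d → cc i = fpat i * cc 0 := by
    apply rec_left
    · intro h1
      have := heq 0 (by omega)
      simpa using this
    · intro j hj
      have h := heq (j+1) (by omega)
      rw [if_neg (by omega : ¬(j+1 = 0)), Nat.add_sub_cancel] at h
      linarith
  have hc0 : cc 0 = 0 := by
    rcases Nat.eq_zero_or_pos d with hd | hd
    · have := heq 0 (by omega)
      have h1 : cc 1 = 0 := hhi 1 (by omega)
      subst hd
      simp [h1] at this
      linarith [this]
    · have := heq d (by omega)
      have h1 : cc (d+1) = 0 := hhi (d+1) (by omega)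
      rw [if_neg (by omega), h1, hL (d-1) (by omega), hL d (by omega)] at this
      have hf1 : fpat (d-1) = 0 := by
        have : (d-1) % 3 = 2 := by omega
        simp [fpat, this]
      have hf2 : fpat d = 1 := by simp [fpat, hd3]
      rw [hf1, hf2] at this
      linarith
  intro i
  rcases le_or_gt i d with h | h
  · rw [hL i h, hc0]; ring
  · exact hhi i h

lemma tri_sum (N : ℕ) (cc : ℕ → ℝ) (hcc : ∀ i, N ≤ i → cc i = 0) (j : ℕ) (hj : j < N) :
    (∑ i ∈ Finset.range N, cc i * (if i ≤ j + 1 ∧ j ≤ i + 1 then (1:ℝ) else 0)) =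
      (if j = 0 then 0 else cc (j-1)) + cc j + cc (j+1) := by
  set g : ℕ → ℝ := fun i => cc i * (if i ≤ j + 1 ∧ j ≤ i + 1 then (1:ℝ) else 0) with hg
  have hA : ∑ i ∈ Finset.range N, g i = ∑ i ∈ Finset.range (N + j + 2), g i := by
    apply Finset.sum_subset (Finset.range_subset_range.mpr (by omega))
    intro i hi hni
    simp only [Finset.mem_range] at hi hni
    have : cc i = 0 := hcc i (by omega)
    simp [hg, this]
  have hB : ∑ i ∈ Finset.range (j+2), g i = ∑ i ∈ Finset.range (N + j + 2), g i := by
    apply Finset.sum_subset (Finset.range_subset_range.mpr (by omega))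
    intro i hi hni
    simp only [Finset.mem_range] at hi hni
    have h2 : ¬(i ≤ j + 1 ∧ j ≤ i + 1) := by omega
    simp only [hg]
    rw [if_neg h2, mul_zero]
  rw [hA, ← hB]
  rcases j with _ | k
  · rw [Finset.sum_range_succ, Finset.sum_range_succ, Finset.sum_range_zero]
    norm_num [hg]
  · show ∑ i ∈ Finset.range (k+3), g i = _
    rw [Finset.sum_range_succ, Finset.sum_range_succ, Finset.sum_range_succ]
    have h0 : ∑ i ∈ Finset.range k, g i = 0 := by
      apply Finset.sum_eq_zero
      intro i hi
      simp only [Finset.mem_range] at hi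
      have h2 : ¬(i ≤ k + 1 + 1 ∧ k + 1 ≤ i + 1) := by omega
      simp only [hg]
      rw [if_neg h2, mul_zero]
    rw [h0]
    have c1 : k ≤ k+1+1 ∧ k+1 ≤ k+1 := by omega
    have c2 : k+1 ≤ k+1+1 ∧ k+1 ≤ k+1+1 := by omega
    have c3 : k+2 ≤ k+1+1 ∧ k+1 ≤ k+2+1 := by omega
    simp only [hg, if_pos c1, if_pos c2, if_pos c3, if_neg (by omega : ¬(k+1 = 0)),
      Nat.add_sub_cancel]
    ring

/-- The per-vertex "package" predicate. -/
def Pk {V : Type*} [Fintype V] (G : SimpleGraph V) (d : ℕ) (v : ℕ → V)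
    (z : V) (t : ℕ) (cc : ℕ → ℝ) : Prop :=
  t ≤ d ∧ t % 3 = 0 ∧
  (∀ i, i ≤ d → (G.Adj z (v (i+1)) ↔ i = t)) ∧
  pathNbrs G d v z = {t+1} ∧
  (∀ i, i ≤ d → z ≠ v (i+1)) ∧
  (∀ i, d < i → cc i = 0) ∧
  (∀ s, s ≤ d → s % 3 = 0 → cc s = 1) ∧
  (∀ w, ∑ i ∈ Finset.range (d+1), cc i * (G.adjMatrix ℝ + 1) w (v (i+1))
      = (G.adjMatrix ℝ + 1) w z) ∧
  (∀ j, j ≤ d → (if j = 0 then 0 else cc (j-1)) + cc j + cc (j+1) = if j = t then 1 else 0)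

theorem stmt_11 {V : Type*} [Fintype V] (G : SimpleGraph V) (n d : ℕ)
    (hconn : G.Connected)
    (hcard : Fintype.card V = n)
    (hcanon : ∀ a b : V, (∀ z : V, (z = a ∨ G.Adj a z) ↔ (z = b ∨ G.Adj b z)) → a = b)
    (hd3 : d % 3 = 0)
    (hdiam : ∀ a b : V, G.dist a b ≤ d)
    (v : ℕ → V)
    (hpath : ∀ i ∈ Finset.Icc 1 (d + 1), ∀ j ∈ Finset.Icc 1 (d + 1),
      G.dist (v i) (v j) = max i j - min i j)
    (hmult : multNegOne G = n - d - 1)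
    (x y : V) (hxy : x ≠ y) (hxP : ∀ i ∈ Finset.Icc 1 (d + 1), x ≠ v i) (hyP : ∀ i ∈ Finset.Icc 1 (d + 1), y ≠ v i)
    (hx1 : (pathNbrs G d v x).card = 1) (hy1 : (pathNbrs G d v y).card = 1) :
    G.Adj x y ∧
    (∃ m : ℕ, (pathNbrs G d v x = {m} ∧ pathNbrs G d v y = {m + 3}) ∨
      (pathNbrs G d v y = {m} ∧ pathNbrs G d v x = {m + 3})) ∧
    {z : V | (∀ i ∈ Finset.Icc 1 (d + 1), z ≠ v i) ∧
      (pathNbrs G d v z).card = 1}.ncard ≤ 2 := by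
  classical
  -- basic entry lemma for M = A + I
  have hMent : ∀ u w : V, (G.adjMatrix ℝ + 1) u w = if u = w ∨ G.Adj u w then 1 else 0 := by
    intro u w
    by_cases h : u = w
    · subst h
      simp [Matrix.add_apply, Matrix.one_apply]
    · by_cases ha : G.Adj u w <;>
        simp [Matrix.add_apply, Matrix.one_apply, h, ha]
  -- distances along the path
  have hdistle : ∀ i j, i ≤ j → j ≤ d → G.dist (v (i+1)) (v (j+1)) = j - i := by
    intro i j hij hj
    have h := hpath (i+1) (Finset.mem_Icc.mpr ⟨by omega, by omega⟩) (j+1)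
      (Finset.mem_Icc.mpr ⟨by omega, by omega⟩)
    rw [max_eq_right (by omega), min_eq_left (by omega)] at h
    rw [h]
    omega
  have hpvne : ∀ i j, i ≤ d → j ≤ d → i ≠ j → v (i+1) ≠ v (j+1) := by
    intro i j hi hj hij he
    rcases le_total i j with h | h
    · have := hdistle i j h hj
      rw [he, SimpleGraph.dist_self] at this
      omega
    · have := hdistle j i h hi
      rw [← he, SimpleGraph.dist_self] at this
      omega
  have hadjpv : ∀ i j, i ≤ d → j ≤ d → (G.Adj (v (i+1)) (v (j+1)) ↔ (j = i + 1 ∨ i = j + 1)) := by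
    intro i j hi hj
    rcases le_total i j with h | h
    · rw [← SimpleGraph.dist_eq_one_iff_adj, hdistle i j h hj]
      omega
    · rw [G.adj_comm, ← SimpleGraph.dist_eq_one_iff_adj, hdistle j i h hi]
      omega
  have hMpp : ∀ a b, a ≤ d → b ≤ d →
      (G.adjMatrix ℝ + 1) (v (a+1)) (v (b+1)) = if b ≤ a + 1 ∧ a ≤ b + 1 then 1 else 0 := by
    intro a b ha hb
    rw [hMent]
    by_cases h : b ≤ a + 1 ∧ a ≤ b + 1
    · rw [if_pos h, if_pos]
      rcases eq_or_ne a b with e | e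
      · exact Or.inl (by rw [e])
      · refine Or.inr ?_
        rw [hadjpv a b ha hb]
        omega
    · rw [if_neg h, if_neg]
      rintro (he | ha2)
      · have : a = b := by
          by_contra hne
          exact hpvne a b ha hb hne he
        omega
      · rw [hadjpv a b ha hb] at ha2
        omega
  -- order bound
  have hn1 : d + 1 ≤ n := by
    have hinj : Function.Injective (fun i : Fin (d+1) => v (i.val+1)) := by
      intro a b hab
      have : a.val = b.val := by
        by_contra hne
        exact hpvne a.val b.val (by omega) (by omega) hne hab
      exact Fin.ext this
    have := Fintype.card_le_of_injective _ hinj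
    simpa [hcard] using this
  -- rank of A + I
  have hfr : Module.finrank ℝ (LinearMap.range (Matrix.toLin' (G.adjMatrix ℝ + 1))) = d + 1 := by
    have h1 := LinearMap.finrank_range_add_finrank_ker (Matrix.toLin' (G.adjMatrix ℝ + 1))
    have h2 : Module.finrank ℝ
        (LinearMap.ker (Matrix.toLin' (G.adjMatrix ℝ + 1))) = n - d - 1 := hmult
    have h3 : Module.finrank ℝ (V → ℝ) = n := by
      rw [Module.finrank_fintype_fun_eq_card, hcard]
    rw [h2, h3] at h1
    omega
  -- columns of A + I lie in the range
  have hcolmem : ∀ p : V, (fun w => (G.adjMatrix ℝ + 1) w p) ∈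
      LinearMap.range (Matrix.toLin' (G.adjMatrix ℝ + 1)) := by
    intro p
    refine ⟨Pi.single p 1, ?_⟩
    rw [Matrix.toLin'_apply, Matrix.mulVec_single_one]
    rfl
  -- linear independence of the path columns
  have hindep : LinearIndependent ℝ
      (fun i : Fin (d+1) => (fun w => (G.adjMatrix ℝ + 1) w (v (i.val+1)))) := by
    rw [Fintype.linearIndependent_iff]
    intro c hc
    set cc : ℕ → ℝ := fun i => if h : i < d + 1 then c ⟨i, h⟩ else 0 with hcc
    have hccv : ∀ i, d < i → cc i = 0 := by
      intro i hi
      rw [hcc]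
      exact dif_neg (by omega)
    have hsum : ∀ w, ∑ i ∈ Finset.range (d+1), cc i * (G.adjMatrix ℝ + 1) w (v (i+1)) = 0 := by
      intro w
      have h1 := congrFun hc w
      rw [Finset.sum_apply] at h1
      simp only [Pi.zero_apply] at h1
      rw [← Fin.sum_univ_eq_sum_range (fun i => cc i * (G.adjMatrix ℝ + 1) w (v (i+1))) (d+1)]
      rw [← h1]
      refine Finset.sum_congr rfl fun i _ => ?_
      simp only [hcc, dif_pos i.isLt, Fin.eta, Pi.smul_apply, smul_eq_mul]
    have heq : ∀ j, j ≤ d → (if j = 0 then 0 else cc (j-1)) + cc j + cc (j+1) = 0 := by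
      intro j hj
      have h1 := hsum (v (j+1))
      have h2 : ∑ i ∈ Finset.range (d+1), cc i * (G.adjMatrix ℝ + 1) (v (j+1)) (v (i+1))
          = ∑ i ∈ Finset.range (d+1), cc i * (if i ≤ j + 1 ∧ j ≤ i + 1 then (1:ℝ) else 0) := by
        refine Finset.sum_congr rfl fun i hi => ?_
        rw [Finset.mem_range] at hi
        rw [hMpp j i hj (by omega)]
      rw [h2, tri_sum (d+1) cc hccv j (by omega)] at h1
      exact h1
    intro i
    have := homog d hd3 cc hccv heq i.val
    rw [hcc] at this
    simpa [dif_pos i.isLt, Nat.le_of_lt_succ i.isLt] using this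
  -- every column is a combination of the path columns
  have hspan : ∀ p : V, ∃ cc : ℕ → ℝ, (∀ i, d < i → cc i = 0) ∧
      ∀ w, ∑ i ∈ Finset.range (d+1), cc i * (G.adjMatrix ℝ + 1) w (v (i+1))
        = (G.adjMatrix ℝ + 1) w p := by
    intro p
    set S := LinearMap.range (Matrix.toLin' (G.adjMatrix ℝ + 1)) with hS
    set u : Fin (d+1) → (V → ℝ) := fun i => (fun w => (G.adjMatrix ℝ + 1) w (v (i.val+1))) with hu
    have hmemS : ∀ i, u i ∈ S := fun i => hcolmem _
    set u' : Fin (d+1) → S := fun i => ⟨u i, hmemS i⟩ with hu'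
    have hind' : LinearIndependent ℝ u' := by
      apply LinearIndependent.of_comp S.subtype
      exact hindep
    have htop : Submodule.span ℝ (Set.range u') = ⊤ :=
      hind'.span_eq_top_of_card_eq_finrank (by rw [Fintype.card_fin, hfr])
    have hmem : (⟨(fun w => (G.adjMatrix ℝ + 1) w p), hcolmem p⟩ : S) ∈
        Submodule.span ℝ (Set.range u') := htop ▸ Submodule.mem_top
    have h4 : (fun w => (G.adjMatrix ℝ + 1) w p) ∈
        Submodule.map S.subtype (Submodule.span ℝ (Set.range u')) := ⟨_, hmem, rfl⟩
    rw [Submodule.map_span, ← Set.range_comp] at h4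
    have h5 : (fun w => (G.adjMatrix ℝ + 1) w p) ∈ Submodule.span ℝ (Set.range u) := h4
    obtain ⟨c, hc⟩ := (Submodule.mem_span_range_iff_exists_fun ℝ).mp h5
    refine ⟨fun i => if h : i < d + 1 then c ⟨i, h⟩ else 0, fun i hi => dif_neg (by omega), ?_⟩
    intro w
    have h1 := congrFun hc w
    rw [Finset.sum_apply] at h1
    rw [← Fin.sum_univ_eq_sum_range
      (fun i => (if h : i < d + 1 then c ⟨i, h⟩ else 0) * (G.adjMatrix ℝ + 1) w (v (i+1))) (d+1)]
    rw [← h1]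
    refine Finset.sum_congr rfl fun i _ => ?_
    simp only [dif_pos i.isLt, Fin.eta, Pi.smul_apply, smul_eq_mul, hu]
  -- entries of an off-path column at path rows
  have hentoff : ∀ (q : V) (t : ℕ), (∀ i, i ≤ d → q ≠ v (i+1)) →
      (∀ i, i ≤ d → (G.Adj q (v (i+1)) ↔ i = t)) →
      ∀ i, i ≤ d → (G.adjMatrix ℝ + 1) q (v (i+1)) = if i = t then 1 else 0 := by
    intro q t hne hiff i hi
    rw [hMent]
    by_cases h : i = t
    · rw [if_pos h, if_pos (Or.inr ((hiff i hi).mpr h))]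
    · have hcond : ¬(q = v (i+1) ∨ G.Adj q (v (i+1))) := by
        rintro (he | ha)
        · exact hne i hi he
        · exact h ((hiff i hi).mp ha)
      rw [if_neg hcond, if_neg h]
  have hdelta : ∀ (q : V) (t : ℕ) (cc : ℕ → ℝ), t ≤ d →
      (∀ i, i ≤ d → (G.adjMatrix ℝ + 1) q (v (i+1)) = if i = t then 1 else 0) →
      ∑ i ∈ Finset.range (d+1), cc i * (G.adjMatrix ℝ + 1) q (v (i+1)) = cc t := by
    intro q t cc ht hent
    have h2 : ∀ i ∈ Finset.range (d+1),
        cc i * (G.adjMatrix ℝ + 1) q (v (i+1)) = if i = t then cc i else 0 := by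
      intro i hi
      rw [Finset.mem_range] at hi
      rw [hent i (by omega)]
      split_ifs <;> ring
    rw [Finset.sum_congr rfl h2, Finset.sum_ite_eq', if_pos (Finset.mem_range.mpr (by omega))]
  -- the package for every off-path vertex with a single path neighbour
  have hPKG : ∀ z : V, (∀ i ∈ Finset.Icc 1 (d+1), z ≠ v i) → (pathNbrs G d v z).card = 1 →
      ∃ t cc, Pk G d v z t cc := by
    intro z hzP hz1
    obtain ⟨mz, hmz⟩ := Finset.card_eq_one.mp hz1
    have hmzmem : mz ∈ pathNbrs G d v z := hmz ▸ Finset.mem_singleton_self mz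
    rw [pathNbrs, Finset.mem_filter, Finset.mem_Icc] at hmzmem
    obtain ⟨⟨hmz1, hmz2⟩, hmzadj⟩ := hmzmem
    set t := mz - 1 with ht
    have htd : t ≤ d := by omega
    have hzne : ∀ i, i ≤ d → z ≠ v (i+1) := fun i hi =>
      hzP (i+1) (Finset.mem_Icc.mpr ⟨by omega, by omega⟩)
    have hziff : ∀ i, i ≤ d → (G.Adj z (v (i+1)) ↔ i = t) := by
      intro i hi
      constructor
      · intro ha
        have hmem : (i+1) ∈ pathNbrs G d v z := by
          rw [pathNbrs, Finset.mem_filter, Finset.mem_Icc]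
          exact ⟨⟨by omega, by omega⟩, ha⟩
        rw [hmz, Finset.mem_singleton] at hmem
        omega
      · intro hit
        have : i + 1 = mz := by omega
        rw [this]
        exact hmzadj
    have hpN : pathNbrs G d v z = {t+1} := by
      rw [hmz]
      congr 1
      omega
    obtain ⟨cc, hccv, hsum⟩ := hspan z
    have heqz : ∀ j, j ≤ d →
        (if j = 0 then 0 else cc (j-1)) + cc j + cc (j+1) = if j = t then 1 else 0 := by
      intro j hj
      have h1 := hsum (v (j+1))
      have h2 : ∑ i ∈ Finset.range (d+1), cc i * (G.adjMatrix ℝ + 1) (v (j+1)) (v (i+1))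
          = ∑ i ∈ Finset.range (d+1), cc i * (if i ≤ j + 1 ∧ j ≤ i + 1 then (1:ℝ) else 0) := by
        refine Finset.sum_congr rfl fun i hi => ?_
        rw [Finset.mem_range] at hi
        rw [hMpp j i hj (by omega)]
      rw [h2, tri_sum (d+1) cc hccv j (by omega)] at h1
      rw [h1, hMent]
      by_cases h : j = t
      · rw [if_pos h, if_pos (Or.inr ((hziff j hj).mpr h).symm)]
      · have hcond : ¬(v (j+1) = z ∨ G.Adj (v (j+1)) z) := by
          rintro (he | ha)
          · exact hzne j hj he.symm
          · exact h ((hziff j hj).mp ha.symm)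
        rw [if_neg hcond, if_neg h]
    have hct : cc t = 1 := by
      have h1 := hsum z
      rw [hdelta z t cc htd (hentoff z t hzne hziff)] at h1
      rw [h1, hMent, if_pos (Or.inl rfl)]
    -- left recurrence
    have hLp : ∀ i, i ≤ t → cc i = fpat i * cc 0 := by
      apply rec_left
      · intro h1
        have h := heqz 0 (by omega)
        rw [if_pos rfl, if_neg (by omega : ¬(0 = t))] at h
        linarith
      · intro j hj
        have h := heqz (j+1) (by omega)
        rw [if_neg (by omega : ¬(j+1 = 0)), Nat.add_sub_cancel,
          if_neg (by omega : ¬(j+1 = t))] at h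
        linarith
    -- right recurrence
    have hRp : ∀ k, k ≤ d - t → cc (d - k) = fpat k * cc d := by
      have h0' : 1 ≤ d - t → (fun k => cc (d - k)) 0 + (fun k => cc (d - k)) 1 = 0 := by
        intro h1
        have h := heqz d (by omega)
        rw [if_neg (by omega : ¬(d = 0)), if_neg (by omega : ¬(d = t)),
          hccv (d+1) (by omega)] at h
        simp only [Nat.sub_zero]
        linarith
      have hstep' : ∀ j, j + 2 ≤ d - t →
          (fun k => cc (d - k)) j + (fun k => cc (d - k)) (j+1) + (fun k => cc (d - k)) (j+2) = 0 := by
        intro k hk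
        have h := heqz (d - k - 1) (by omega)
        rw [if_neg (by omega : ¬(d - k - 1 = 0)), if_neg (by omega : ¬(d - k - 1 = t))] at h
        have e1 : d - k - 1 - 1 = d - (k+2) := by omega
        have e2 : d - k - 1 + 1 = d - k := by omega
        rw [e1, e2] at h
        simp only []
        have e3 : d - (k+1) = d - k - 1 := by omega
        rw [e3]
        linarith
      intro k hk
      have := rec_left (fun k => cc (d - k)) (d - t) h0' hstep' k hk
      simpa using this
    have hct3 : t % 3 = 0 ∧ cc 0 = 1 ∧ cc d = 1 := by
      have hL := hLp t le_rfl
      have hR := hRp (d - t) le_rfl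
      rw [show d - (d - t) = t by omega] at hR
      have h3 : t % 3 = 0 ∨ t % 3 = 1 ∨ t % 3 = 2 := by omega
      rcases h3 with h3 | h3 | h3
      · have hf : fpat t = 1 := by simp [fpat, h3]
        have hm : (d - t) % 3 = 0 := by omega
        have hf2 : fpat (d - t) = 1 := by simp [fpat, hm]
        rw [hf] at hL
        rw [hf2] at hR
        exact ⟨h3, by linarith, by linarith⟩
      · have hm : (d - t) % 3 = 2 := by omega
        have hf2 : fpat (d - t) = 0 := by simp [fpat, hm]
        rw [hf2, hct] at hR
        norm_num at hR
      · have hf : fpat t = 0 := by simp [fpat, h3]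
        rw [hf, hct] at hL
        norm_num at hL
    have hall : ∀ s2, s2 ≤ d → s2 % 3 = 0 → cc s2 = 1 := by
      intro s2 hs2 hs23
      rcases le_total s2 t with h | h
      · rw [hLp s2 h, hct3.2.1, show fpat s2 = 1 from by simp [fpat, hs23]]
        ring
      · have hR := hRp (d - s2) (by omega)
        rw [show d - (d - s2) = s2 by omega] at hR
        have hm : (d - s2) % 3 = 0 := by omega
        rw [hR, hct3.2.2, show fpat (d - s2) = 1 from by simp [fpat, hm]]
        ring
    exact ⟨t, cc, htd, hct3.1, hziff, hpN, hzne, hccv, hall, hsum, heqz⟩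
  -- pairwise structure
  have hPAIR : ∀ (z z' : V) (t t' : ℕ) (cc cc' : ℕ → ℝ), Pk G d v z t cc → Pk G d v z' t' cc' →
      z ≠ z' → G.Adj z z' ∧ (t' = t + 3 ∨ t = t' + 3) := by
    intro z z' t t' cc cc' p p' hne
    obtain ⟨htd, ht3, hziff, hpN, hzne, hccv, hall, hsum, heqz⟩ := p
    obtain ⟨htd', ht3', hziff', hpN', hzne', hccv', hall', hsum', heqz'⟩ := p'
    have hadj : G.Adj z z' := by
      have h1 := hsum z'
      rw [hdelta z' t' cc htd' (hentoff z' t' hzne' hziff')] at h1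
      rw [hall t' htd' ht3', hMent] at h1
      by_cases hcond : z' = z ∨ G.Adj z' z
      · rcases hcond with he | ha
        · exact absurd he.symm hne
        · exact ha.symm
      · rw [if_neg hcond] at h1
        norm_num at h1
    refine ⟨hadj, ?_⟩
    have hne' : t ≠ t' := by
      intro hEq
      have hdd := homog d hd3 (fun i => cc i - cc' i)
        (fun i hi => by show cc i - cc' i = 0; rw [hccv i hi, hccv' i hi]; ring)
        (fun j hj => by
          have e1 := heqz j hj
          have e2 := heqz' j hj
          rw [hEq] at e1
          have e12 := e1.trans e2.symm
          show (if j = 0 then 0 else cc (j-1) - cc' (j-1)) + (cc j - cc' j)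
              + (cc (j+1) - cc' (j+1)) = 0
          by_cases h0 : j = 0
          · simp only [if_pos h0] at e12 ⊢
            linarith
          · simp only [if_neg h0] at e12 ⊢
            linarith)
      have hMeq : ∀ w, (G.adjMatrix ℝ + 1) w z = (G.adjMatrix ℝ + 1) w z' := by
        intro w
        rw [← hsum w, ← hsum' w]
        refine Finset.sum_congr rfl fun i _ => ?_
        have h5 : cc i = cc' i := by
          have h6 : cc i - cc' i = 0 := hdd i
          linarith
        rw [h5]
      apply hne
      apply hcanon
      intro w
      have h := hMeq w
      rw [hMent, hMent] at h
      have hiff : (w = z ∨ G.Adj w z) ↔ (w = z' ∨ G.Adj w z') := by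
        by_cases hA : w = z ∨ G.Adj w z <;> by_cases hB : w = z' ∨ G.Adj w z'
        · exact iff_of_true hA hB
        · rw [if_pos hA, if_neg hB] at h
          norm_num at h
        · rw [if_neg hA, if_pos hB] at h
          norm_num at h
        · exact iff_of_false hA hB
      rw [G.adj_comm z w, G.adj_comm z' w]
      exact hiff
    have hdle : G.dist (v (t+1)) (v (t'+1)) ≤ 3 := by
      have e1 : G.dist (v (t+1)) z = 1 :=
        SimpleGraph.dist_eq_one_iff_adj.mpr ((hziff t htd).mpr rfl).symm
      have e2 : G.dist z z' = 1 := SimpleGraph.dist_eq_one_iff_adj.mpr hadj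
      have e3 : G.dist z' (v (t'+1)) = 1 :=
        SimpleGraph.dist_eq_one_iff_adj.mpr ((hziff' t' htd').mpr rfl)
      calc G.dist (v (t+1)) (v (t'+1)) ≤ G.dist (v (t+1)) z + G.dist z (v (t'+1)) :=
            hconn.dist_triangle
        _ ≤ G.dist (v (t+1)) z + (G.dist z z' + G.dist z' (v (t'+1))) := by
            have := hconn.dist_triangle (u := z) (v := z') (w := v (t'+1))
            omega
        _ = 3 := by rw [e1, e2, e3]
    rcases le_total t t' with h | h
    · have := hdistle t t' h htd'
      rw [this] at hdle
      omega
    · have := hdistle t' t h htd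
      rw [SimpleGraph.dist_comm] at this
      rw [this] at hdle
      omega
  -- conclude
  obtain ⟨s, cx, px⟩ := hPKG x hxP hx1
  obtain ⟨r, cy, py⟩ := hPKG y hyP hy1
  obtain ⟨hadj, hdiff⟩ := hPAIR x y s r cx cy px py hxy
  refine ⟨hadj, ?_, ?_⟩
  · rcases hdiff with h | h
    · refine ⟨s + 1, Or.inl ⟨px.2.2.2.1, ?_⟩⟩
      rw [py.2.2.2.1]
      congr 1
      omega
    · refine ⟨r + 1, Or.inr ⟨py.2.2.2.1, ?_⟩⟩
      rw [px.2.2.2.1]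
      congr 1
      omega
  · by_contra hcon
    push_neg at hcon
    obtain ⟨a, ha, b, hb, c3, hc3, hab, hac, hbc⟩ :=
      (Set.two_lt_ncard (Set.toFinite _)).mp hcon
    simp only [Set.mem_setOf_eq] at ha hb hc3
    obtain ⟨ta, ca, pa⟩ := hPKG a ha.1 ha.2
    obtain ⟨tb, cb, pb⟩ := hPKG b hb.1 hb.2
    obtain ⟨tc, cc0, pc⟩ := hPKG c3 hc3.1 hc3.2
    have h1 := (hPAIR a b ta tb ca cb pa pb hab).2
    have h2 := (hPAIR a c3 ta tc ca cc0 pa pc hac).2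
    have h3 := (hPAIR b c3 tb tc cb cc0 pb pc hbc).2
    omega
end

section
/- Let G be a finite simple connected C-canonical graph of order n and diameter d with d ≡ 0 (mod 3) and m_G(−1) = n − d − 1, and let P = v_1 v_2 ⋯ v_{d+1} be a diameter path of G. If a vertex u of G not on P is adjacent to exactly the two consecutive vertices v_m and v_{m+1} of P, then m ≡ 0 (mod 3) or m ≡ 1 (mod 3). -/
attribute [local instance] Classical.propDecidable


/-- period-3 pattern 1, -1, 0 (at indices ≡ 1, 2, 0 mod 3). -/
noncomputable def seqC : ℕ → ℝ := fun i => if i % 3 = 1 then 1 else if i % 3 = 2 then -1 else 0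

lemma seqC_rec (i : ℕ) : seqC (i + 2) = -seqC (i + 1) - seqC i := by
  have h : i % 3 = 0 ∨ i % 3 = 1 ∨ i % 3 = 2 := by omega
  rcases h with h | h | h <;>
  · have h1 : (i + 1) % 3 = (i % 3 + 1) % 3 := by omega
    have h2 : (i + 2) % 3 = (i % 3 + 2) % 3 := by omega
    simp [seqC, h, h1, h2]

lemma seqC_of_mod (i : ℕ) (h : i % 3 = 1) : seqC i = 1 := by simp [seqC, h]

lemma seq_pattern (a : ℕ → ℝ) (N : ℕ) (ha0 : a 0 = 0)
    (hrec : ∀ i, 1 ≤ i → i + 1 ≤ N → a (i + 1) = -a i - a (i - 1)) :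
    ∀ i ≤ N, a i = a 1 * seqC i := by
  intro i
  induction i using Nat.strong_induction_on with
  | _ i ih =>
    intro hiN
    match i with
    | 0 => simp [seqC, ha0]
    | 1 => simp [seqC]
    | (k + 2) =>
      have h1 := ih (k + 1) (by omega) (by omega)
      have h0 := ih k (by omega) (by omega)
      have hr := hrec (k + 1) (by omega) (by omega)
      have hk : k + 1 - 1 = k := by omega
      rw [hk] at hr
      rw [hr, h1, h0, seqC_rec]; ring

/-- Injectivity core: a sequence satisfying the full `-1`-eigen recurrence on a path
of length `d` with `d ≡ 0 [MOD 3]` vanishes. -/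
lemma core_zero (d : ℕ) (hd3 : d % 3 = 0) (a : ℕ → ℝ)
    (ha0 : a 0 = 0) (had2 : a (d + 2) = 0)
    (hrec : ∀ i, 1 ≤ i → i ≤ d + 1 → a (i - 1) + a (i + 1) + a i = 0) :
    ∀ i ≤ d + 1, a i = 0 := by
  have hL := seq_pattern a (d + 1) ha0 (by
    intro i h1 h2
    have h := hrec i h1 (by omega)
    linarith)
  have hE := hrec (d + 1) (by omega) (by omega)
  simp only [Nat.add_sub_cancel] at hE
  have h1 := hL d (by omega)
  have h2 := hL (d + 1) le_rfl
  have hcd : seqC d = 0 := by simp [seqC, hd3]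
  have hcd1 : seqC (d + 1) = 1 := seqC_of_mod _ (by omega)
  rw [hcd] at h1; rw [hcd1] at h2
  have ha1 : a 1 = 0 := by
    rw [had2] at hE
    rw [h1, h2] at hE
    linarith [hE]
  intro i hi
  have := hL i hi
  rw [ha1] at this
  simpa using this

/-- Main contradiction core. -/
lemma core_contra (d m : ℕ) (a : ℕ → ℝ)
    (hm3 : m % 3 = 2) (hd3 : d % 3 = 0) (hmd : m + 1 ≤ d)
    (ha0 : a 0 = 0) (hhigh : ∀ j, d + 1 < j → a j = 0)
    (hrec : ∀ i, 1 ≤ i → i ≤ d + 1 → i ≠ m → i ≠ m + 1 → a (i - 1) + a (i + 1) + a i = 0)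
    (hEm : a (m - 1) + a (m + 1) + 1 + a m = 0)
    (hEm1 : a m + a (m + 2) + 1 + a (m + 1) = 0)
    (hEu : a m + a (m + 1) + 1 = 0) : False := by
  have hm1 : 2 ≤ m := by omega
  have ham1 : a (m - 1) = 0 := by linarith
  have ham2 : a (m + 2) = 0 := by linarith
  -- left side
  have hL := seq_pattern a m ha0 (by
    intro i h1 h2
    have h := hrec i h1 (by omega) (by omega) (by omega)
    linarith)
  have ha1 : a 1 = 0 := by
    have h := hL (m - 1) (by omega)
    rw [seqC_of_mod _ (by omega)] at h
    rw [ham1] at h; linarith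
  have ham : a m = 0 := by
    have h := hL m le_rfl
    rw [ha1] at h; simpa using h
  -- right side
  set b : ℕ → ℝ := fun j => a (d + 2 - j) with hb
  have hb0 : b 0 = 0 := hhigh (d + 2) (by omega)
  have hR := seq_pattern b (d + 1 - m) hb0 (by
    intro j h1 h2
    have h := hrec (d + 2 - j) (by omega) (by omega) (by omega) (by omega)
    have e1 : d + 2 - j - 1 = d + 2 - (j + 1) := by omega
    have e2 : d + 2 - j + 1 = d + 2 - (j - 1) := by omega
    rw [e1, e2] at h
    show a (d + 2 - (j + 1)) = -a (d + 2 - j) - a (d + 2 - (j - 1))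
    linarith)
  have hb1 : b 1 = 0 := by
    have h := hR (d - m) (by omega)
    rw [seqC_of_mod _ (by omega)] at h
    have he : d + 2 - (d - m) = m + 2 := by omega
    have hbv : b (d - m) = a (m + 2) := by rw [hb]; simp only []; rw [he]
    rw [hbv, ham2] at h; linarith
  have ham1' : a (m + 1) = 0 := by
    have h := hR (d + 1 - m) le_rfl
    have he : d + 2 - (d + 1 - m) = m + 1 := by omega
    have hbv : b (d + 1 - m) = a (m + 1) := by rw [hb]; simp only []; rw [he]
    rw [hbv, hb1] at h
    simpa using h
  rw [ham, ham1'] at hEu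
  norm_num at hEu

set_option maxHeartbeats 1000000 in
theorem stmt_12 {V : Type*} [Fintype V] (G : SimpleGraph V) (n d : ℕ)
    (hconn : G.Connected)
    (hcard : Fintype.card V = n)
    (hcanon : ∀ a b : V, (∀ z : V, (z = a ∨ G.Adj a z) ↔ (z = b ∨ G.Adj b z)) → a = b)
    (hd3 : d % 3 = 0)
    (hdiam : ∀ a b : V, G.dist a b ≤ d)
    (v : ℕ → V)
    (hpath : ∀ i ∈ Finset.Icc 1 (d + 1), ∀ j ∈ Finset.Icc 1 (d + 1),
      G.dist (v i) (v j) = max i j - min i j)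
    (hmult : multNegOne G = n - d - 1)
    (u : V) (huP : ∀ i ∈ Finset.Icc 1 (d + 1), u ≠ v i) (m : ℕ) (hNP : pathNbrs G d v u = {m, m + 1}) :
    m % 3 = 0 ∨ m % 3 = 1 := by
  by_contra hcon
  push_neg at hcon
  have hm3 : m % 3 = 2 := by omega
  unfold pathNbrs at hNP
  -- basic membership facts
  have hmmem : m ∈ (Finset.Icc 1 (d + 1)).filter (fun i => G.Adj u (v i)) := by
    rw [hNP]; simp
  have hm1mem : m + 1 ∈ (Finset.Icc 1 (d + 1)).filter (fun i => G.Adj u (v i)) := by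
    rw [hNP]; simp
  rw [Finset.mem_filter, Finset.mem_Icc] at hmmem hm1mem
  obtain ⟨⟨hm1, hmd1⟩, hAum⟩ := hmmem
  obtain ⟨⟨_, hm1d1⟩, hAum1⟩ := hm1mem
  have hmd : m + 1 ≤ d := by omega
  -- injectivity of v on Icc
  have hvinj : ∀ i ∈ Finset.Icc 1 (d + 1), ∀ j ∈ Finset.Icc 1 (d + 1), v i = v j → i = j := by
    intro i hi j hj hij
    have h := hpath i hi j hj
    rw [hij, SimpleGraph.dist_self] at h
    rcases le_total i j with hle | hle
    · rw [max_eq_right hle, min_eq_left hle] at h; omega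
    · rw [max_eq_left hle, min_eq_right hle] at h; omega
  -- adjacency on the path
  have hadjp : ∀ i ∈ Finset.Icc 1 (d + 1), ∀ j ∈ Finset.Icc 1 (d + 1),
      (G.Adj (v i) (v j) ↔ (j + 1 = i ∨ i + 1 = j)) := by
    intro i hi j hj
    rw [← SimpleGraph.dist_eq_one_iff_adj, hpath i hi j hj]
    rcases le_total i j with hle | hle
    · rw [max_eq_right hle, min_eq_left hle]; omega
    · rw [max_eq_left hle, min_eq_right hle]; omega
  -- the path vertex set
  set S : Finset V := (Finset.Icc 1 (d + 1)).image v with hS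
  have huS : u ∉ S := by
    rw [hS]
    simp only [Finset.mem_image, not_exists]
    rintro i ⟨hi, hvi⟩
    exact huP i hi hvi.symm
  have hScard : S.card = d + 1 := by
    rw [hS, Finset.card_image_of_injOn]
    · simp
    · intro i hi j hj hij
      exact hvinj i (by simpa using hi) j (by simpa using hj) hij
  have hnd : d + 1 ≤ n := by
    rw [← hcard, ← hScard]
    exact Finset.card_le_univ S
  -- kernel
  set K := LinearMap.ker (Matrix.toLin' (G.adjMatrix ℝ + 1)) with hK
  have hmem : ∀ x : V → ℝ, x ∈ K ↔
      ∀ w : V, (∑ z ∈ G.neighborFinset w, x z) + x w = 0 := by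
    intro x
    rw [hK, LinearMap.mem_ker]
    have : Matrix.toLin' (G.adjMatrix ℝ + 1) x
        = fun w => (∑ z ∈ G.neighborFinset w, x z) + x w := by
      funext w
      simp [Matrix.toLin'_apply, Matrix.add_mulVec, Matrix.one_mulVec]
    rw [this, funext_iff]
    simp
  -- restriction map to off-path vertices
  set W := {w : V // w ∉ S} with hW
  set φ : K →ₗ[ℝ] (W → ℝ) :=
    (LinearMap.funLeft ℝ ℝ (Subtype.val : W → V)).comp K.subtype with hφ
  -- the key equation derivation
  have hkey : ∀ y : V → ℝ, y ∈ K → (∀ w, w ∉ S → w ≠ u → y w = 0) →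
      (∀ i, 1 ≤ i → i ≤ d + 1 →
        (if 1 ≤ i - 1 ∧ i - 1 ≤ d + 1 then y (v (i - 1)) else 0)
        + (if 1 ≤ i + 1 ∧ i + 1 ≤ d + 1 then y (v (i + 1)) else 0)
        + (if G.Adj u (v i) then y u else 0)
        + y (v i) = 0)
      ∧ (y (v m) + y (v (m + 1)) + y u = 0) := by
    intro y hyK hoff
    have hsum : ∀ w : V, (∑ z ∈ G.neighborFinset w, y z)
        = (∑ j ∈ Finset.Icc 1 (d + 1), if G.Adj w (v j) then y (v j) else 0)
          + (if G.Adj w u then y u else 0) := by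
      intro w
      have h1 : (∑ z ∈ G.neighborFinset w, y z)
          = ∑ z ∈ G.neighborFinset w ∩ (S ∪ {u}), y z := by
        refine (Finset.sum_subset Finset.inter_subset_left ?_).symm
        intro z hz hz2
        rw [Finset.mem_inter] at hz2
        push_neg at hz2
        have hz3 := hz2 hz
        rw [Finset.mem_union, Finset.mem_singleton] at hz3
        push_neg at hz3
        exact hoff z hz3.1 hz3.2
      have h2 : G.neighborFinset w ∩ (S ∪ {u})
          = (S ∪ {u}).filter (fun z => G.Adj w z) := by
        ext z
        simp only [Finset.mem_inter, Finset.mem_filter, SimpleGraph.mem_neighborFinset]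
        tauto
      rw [h1, h2, Finset.sum_filter,
        Finset.sum_union (Finset.disjoint_singleton_right.mpr huS),
        Finset.sum_singleton, hS, Finset.sum_image]
      intro i hi j hj hij
      exact hvinj i hi j hj hij
    constructor
    · intro i h1i hid1
      have hiIcc : i ∈ Finset.Icc 1 (d + 1) := by rw [Finset.mem_Icc]; omega
      have heq := (hmem y).mp hyK (v i)
      rw [hsum (v i)] at heq
      have hsplit : (∑ j ∈ Finset.Icc 1 (d + 1), if G.Adj (v i) (v j) then y (v j) else 0)
          = (if 1 ≤ i - 1 ∧ i - 1 ≤ d + 1 then y (v (i - 1)) else 0)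
            + (if 1 ≤ i + 1 ∧ i + 1 ≤ d + 1 then y (v (i + 1)) else 0) := by
        have hterm : ∀ j ∈ Finset.Icc 1 (d + 1),
            (if G.Adj (v i) (v j) then y (v j) else 0)
            = (if j = i - 1 then y (v j) else 0) + (if j = i + 1 then y (v j) else 0) := by
          intro j hj
          rw [if_congr (hadjp i hiIcc j hj) rfl rfl]
          by_cases hc1 : j = i - 1 <;> by_cases hc2 : j = i + 1 <;>
            [omega; skip; skip; skip] <;> simp [hc1, hc2] <;> omega
        rw [Finset.sum_congr rfl hterm, Finset.sum_add_distrib,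
          Finset.sum_ite_eq' (Finset.Icc 1 (d + 1)) (i - 1) (fun j => y (v j)),
          Finset.sum_ite_eq' (Finset.Icc 1 (d + 1)) (i + 1) (fun j => y (v j))]
        simp only [Finset.mem_Icc]
      rw [hsplit] at heq
      rw [G.adj_comm (v i) u] at heq
      linarith
    · have heq := (hmem y).mp hyK u
      rw [hsum u] at heq
      rw [if_neg (G.irrefl)] at heq
      rw [← Finset.sum_filter, hNP] at heq
      rw [Finset.sum_insert (by simp), Finset.sum_singleton] at heq
      linarith
  -- injectivity of φ
  have hinj : Function.Injective φ := by
    rw [injective_iff_map_eq_zero]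
    rintro ⟨y, hyK⟩ hx
    have hoff : ∀ w, w ∉ S → y w = 0 := by
      intro w hw
      have := congrFun hx ⟨w, hw⟩
      simpa [hφ, LinearMap.funLeft_apply] using this
    have hyu : y u = 0 := hoff u huS
    set a : ℕ → ℝ := fun i => if 1 ≤ i ∧ i ≤ d + 1 then y (v i) else 0 with ha
    have hkeyy := (hkey y hyK (fun w hw _ => hoff w hw)).1
    have hrec : ∀ i, 1 ≤ i → i ≤ d + 1 → a (i - 1) + a (i + 1) + a i = 0 := by
      intro i h1 h2
      have h := hkeyy i h1 h2
      rw [hyu] at h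
      simp only [ha, if_pos (⟨h1, h2⟩ : 1 ≤ i ∧ i ≤ d + 1)]
      simpa using h
    have hz := core_zero d hd3 a (by simp [ha]) (by simp only [ha]; rw [if_neg (by omega)]) hrec
    have hyz : ∀ w : V, y w = 0 := by
      intro w
      by_cases hwS : w ∈ S
      · rw [hS, Finset.mem_image] at hwS
        obtain ⟨i, hi, rfl⟩ := hwS
        rw [Finset.mem_Icc] at hi
        have := hz i (by omega)
        rw [ha] at this
        simpa [hi.1, hi.2] using this
      · exact hoff w hwS
    ext w
    exact hyz w
  -- dimensions
  have hfrK : Module.finrank ℝ K = n - d - 1 := hmult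
  have hfrW : Module.finrank ℝ (W → ℝ) = n - d - 1 := by
    show Module.finrank ℝ ({w : V // w ∉ S} → ℝ) = n - d - 1
    rw [Module.finrank_fintype_fun_eq_card, Fintype.card_subtype_compl]
    simp only [Fintype.card_coe]
    omega
  have hsurj : Function.Surjective φ :=
    (LinearMap.injective_iff_surjective_of_finrank_eq_finrank (by rw [hfrK, hfrW])).mp hinj
  -- construct the eigenvector
  obtain ⟨x, hx⟩ := hsurj (fun w : W => if (w : V) = u then 1 else 0)
  obtain ⟨y, hyK⟩ := x
  have hval : ∀ w (hw : w ∉ S), y w = if w = u then 1 else 0 := by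
    intro w hw
    have := congrFun hx ⟨w, hw⟩
    simpa [hφ, LinearMap.funLeft_apply] using this
  have hyu : y u = 1 := by rw [hval u huS]; simp
  have hoff : ∀ w, w ∉ S → w ≠ u → y w = 0 := by
    intro w hw hwu
    rw [hval w hw, if_neg hwu]
  obtain ⟨hE, hEu⟩ := hkey y hyK hoff
  set a : ℕ → ℝ := fun i => if 1 ≤ i ∧ i ≤ d + 1 then y (v i) else 0 with ha
  have hAiff : ∀ i, 1 ≤ i → i ≤ d + 1 → (G.Adj u (v i) ↔ (i = m ∨ i = m + 1)) := by
    intro i h1 h2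
    constructor
    · intro h
      have : i ∈ (Finset.Icc 1 (d + 1)).filter (fun i => G.Adj u (v i)) :=
        Finset.mem_filter.mpr ⟨by rw [Finset.mem_Icc]; omega, h⟩
      rw [hNP] at this
      simpa using this
    · rintro (rfl | rfl); exacts [hAum, hAum1]
  have hrec : ∀ i, 1 ≤ i → i ≤ d + 1 → i ≠ m → i ≠ m + 1 →
      a (i - 1) + a (i + 1) + a i = 0 := by
    intro i h1 h2 hne1 hne2
    have h := hE i h1 h2
    rw [if_neg (show ¬ G.Adj u (v i) by intro hc; rcases (hAiff i h1 h2).mp hc with h | h <;> omega)] at h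
    simp only [ha, if_pos (⟨h1, h2⟩ : 1 ≤ i ∧ i ≤ d + 1)]
    simpa using h
  have hEm : a (m - 1) + a (m + 1) + 1 + a m = 0 := by
    have h := hE m hm1 hmd1
    rw [if_pos hAum, hyu] at h
    simp only [ha, if_pos (⟨hm1, hmd1⟩ : 1 ≤ m ∧ m ≤ d + 1),
      if_pos (show 1 ≤ m + 1 ∧ m + 1 ≤ d + 1 by omega)]
    rw [if_pos (show 1 ≤ m + 1 ∧ m + 1 ≤ d + 1 by omega)] at h
    linarith
  have hEm1 : a m + a (m + 2) + 1 + a (m + 1) = 0 := by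
    have h := hE (m + 1) (by omega) hm1d1
    rw [if_pos hAum1, hyu] at h
    simp only [Nat.add_sub_cancel] at h
    rw [if_pos (⟨hm1, hmd1⟩ : 1 ≤ m ∧ m ≤ d + 1),
      show m + 1 + 1 = m + 2 from rfl] at h
    simp only [ha, if_pos (⟨hm1, hmd1⟩ : 1 ≤ m ∧ m ≤ d + 1),
      if_pos (show 1 ≤ m + 1 ∧ m + 1 ≤ d + 1 by omega)]
    by_cases hmc : m + 2 ≤ d + 1
    · rw [if_pos (show 1 ≤ m + 2 ∧ m + 2 ≤ d + 1 by omega)]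
      rw [if_pos (show 1 ≤ m + 2 ∧ m + 2 ≤ d + 1 by omega)] at h
      linarith
    · rw [if_neg (show ¬(1 ≤ m + 2 ∧ m + 2 ≤ d + 1) by omega)]
      rw [if_neg (show ¬(1 ≤ m + 2 ∧ m + 2 ≤ d + 1) by omega)] at h
      linarith
  have hEua : a m + a (m + 1) + 1 = 0 := by
    simp only [ha, if_pos (⟨hm1, hmd1⟩ : 1 ≤ m ∧ m ≤ d + 1),
      if_pos (show 1 ≤ m + 1 ∧ m + 1 ≤ d + 1 by omega)]
    rw [hyu] at hEu
    linarith
  exact core_contra d m a hm3 hd3 hmd (by simp [ha]) (fun j hj => by simp only [ha]; rw [if_neg (by omega)])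
    hrec hEm hEm1 hEua
end

section
/- Let G be a finite simple connected C-canonical graph of order n and diameter d with d ≡ 0 (mod 3) and m_G(−1) = n − d − 1, and let P = v_1 v_2 ⋯ v_{d+1} be a diameter path of G. Suppose u and v are vertices of G not on P such that u is adjacent to exactly v_{3a} and v_{3a+1} on P, and v is adjacent to exactly v_{3b+1} and v_{3b+2} on P. If b ≥ a, then u is adjacent to v and a = b; if b < a, then u is not adjacent to v. -/
attribute [local instance] Classical.propDecidable

set_option linter.all false in
set_option maxHeartbeats 1000000 in
theorem stmt_13 {V : Type*} [Fintype V] (G : SimpleGraph V) (n d : ℕ)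
    (hconn : G.Connected)
    (hcard : Fintype.card V = n)
    (hcanon : ∀ a b : V, (∀ z : V, (z = a ∨ G.Adj a z) ↔ (z = b ∨ G.Adj b z)) → a = b)
    (hd3 : d % 3 = 0)
    (hdiam : ∀ a b : V, G.dist a b ≤ d)
    (v : ℕ → V)
    (hpath : ∀ i ∈ Finset.Icc 1 (d + 1), ∀ j ∈ Finset.Icc 1 (d + 1),
      G.dist (v i) (v j) = max i j - min i j)
    (hmult : multNegOne G = n - d - 1)
    (u w : V) (huP : ∀ i ∈ Finset.Icc 1 (d + 1), u ≠ v i) (hwP : ∀ i ∈ Finset.Icc 1 (d + 1), w ≠ v i) (a b : ℕ)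
    (hu : pathNbrs G d v u = {3 * a, 3 * a + 1})
    (hw : pathNbrs G d v w = {3 * b + 1, 3 * b + 2}) :
    (a ≤ b → G.Adj u w ∧ a = b) ∧ (b < a → ¬ G.Adj u w) := by
  set I : Finset ℕ := Finset.Icc 1 (d + 1) with hIdef
  set M : Matrix V V ℝ := G.adjMatrix ℝ + 1 with hMdef
  set f : (V → ℝ) →ₗ[ℝ] (V → ℝ) := Matrix.toLin' M with hfdef
  have hmem : ∀ j : ℕ, j ∈ I ↔ 1 ≤ j ∧ j ≤ d + 1 := by
    intro j; simp [hIdef]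
  -- bounds coming from hu, hw
  have h3a : 1 ≤ 3 * a ∧ 3 * a + 1 ≤ d + 1 := by
    have h1 : 3 * a ∈ pathNbrs G d v u := by rw [hu]; simp
    have h2 : 3 * a + 1 ∈ pathNbrs G d v u := by rw [hu]; simp
    unfold pathNbrs at h1 h2
    simp only [Finset.mem_filter, Finset.mem_Icc] at h1 h2
    exact ⟨h1.1.1, h2.1.2⟩
  have h3b : 3 * b + 2 ≤ d + 1 := by
    have h2 : 3 * b + 2 ∈ pathNbrs G d v w := by rw [hw]; simp
    unfold pathNbrs at h2
    simp only [Finset.mem_filter, Finset.mem_Icc] at h2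
    exact h2.1.2
  have ha1 := h3a.1
  have ha2 := h3a.2
  have hd4 : 3 ≤ d := by omega
  obtain ⟨m, hm⟩ : ∃ m, d = 3 * m := ⟨d / 3, by omega⟩
  -- adjacency-to-path characterizations
  have hu' : ∀ j ∈ I, (G.Adj u (v j) ↔ (j = 3 * a ∨ j = 3 * a + 1)) := by
    intro j hj
    constructor
    · intro hadj
      have h : j ∈ pathNbrs G d v u := by
        unfold pathNbrs; rw [← hIdef]; exact Finset.mem_filter.2 ⟨hj, hadj⟩
      rw [hu] at h; simpa using h
    · intro hcase
      have h : j ∈ pathNbrs G d v u := by rw [hu]; simp [hcase]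
      unfold pathNbrs at h
      exact (Finset.mem_filter.1 h).2
  have hw' : ∀ j ∈ I, (G.Adj w (v j) ↔ (j = 3 * b + 1 ∨ j = 3 * b + 2)) := by
    intro j hj
    constructor
    · intro hadj
      have h : j ∈ pathNbrs G d v w := by
        unfold pathNbrs; rw [← hIdef]; exact Finset.mem_filter.2 ⟨hj, hadj⟩
      rw [hw] at h; simpa using h
    · intro hcase
      have h : j ∈ pathNbrs G d v w := by rw [hw]; simp [hcase]
      unfold pathNbrs at h
      exact (Finset.mem_filter.1 h).2
  -- injectivity of v on I
  have hvinj : ∀ i ∈ I, ∀ j ∈ I, v i = v j → i = j := by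
    intro i hi j hj hvij
    have h := hpath i hi j hj
    rw [hvij] at h
    simp only [SimpleGraph.dist_self] at h
    rcases le_total i j with hle | hle
    · rw [max_eq_right hle, min_eq_left hle] at h; omega
    · rw [max_eq_left hle, min_eq_right hle] at h; omega
  -- adjacency on the path
  have hadj : ∀ i ∈ I, ∀ j ∈ I, (G.Adj (v i) (v j) ↔ (i + 1 = j ∨ j + 1 = i)) := by
    intro i hi j hj
    have h := hpath i hi j hj
    constructor
    · intro hA
      have h1 : G.dist (v i) (v j) = 1 := SimpleGraph.dist_eq_one_iff_adj.2 hA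
      rw [h1] at h
      rcases le_total i j with hle | hle
      · rw [max_eq_right hle, min_eq_left hle] at h; omega
      · rw [max_eq_left hle, min_eq_right hle] at h; omega
    · intro hcase
      apply SimpleGraph.dist_eq_one_iff_adj.1
      rw [h]
      rcases hcase with hc | hc
      · rw [← hc]; simp
      · rw [← hc]; simp
  -- entries of M along the path
  have hMpath : ∀ i ∈ I, ∀ j ∈ I,
      M (v j) (v i) = ((if i + 1 = j then 1 else 0) + (if i = j then 1 else 0)
        + (if i = j + 1 then (1 : ℝ) else 0)) := by
    intro i hi j hj
    have hA : G.Adj (v j) (v i) ↔ (j + 1 = i ∨ i + 1 = j) := hadj j hj i hi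
    have hE : v j = v i ↔ j = i := ⟨hvinj j hj i hi, fun h => h ▸ rfl⟩
    rw [hMdef]
    simp only [Matrix.add_apply, SimpleGraph.adjMatrix_apply, Matrix.one_apply]
    by_cases h1 : i + 1 = j
    · rw [if_pos (hA.2 (Or.inr h1)), if_neg (fun h => by have := hE.1 h; omega),
        if_pos h1, if_neg (by omega), if_neg (by omega)]
      ring
    by_cases h2 : i = j
    · rw [if_neg (fun h => by rcases hA.1 h with h' | h' <;> omega),
        if_pos (hE.2 h2.symm), if_neg h1, if_pos h2, if_neg (by omega)]
      ring
    by_cases h3 : i = j + 1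
    · rw [if_pos (hA.2 (Or.inl h3.symm)), if_neg (fun h => by have := hE.1 h; omega),
        if_neg h1, if_neg h2, if_pos h3]
      ring
    · rw [if_neg (fun h => by rcases hA.1 h with h' | h' <;> omega),
        if_neg (fun h => by have := hE.1 h; omega), if_neg h1, if_neg h2, if_neg h3]
      ring
  -- the basic sum computation along a path row
  have hsum : ∀ c : ℕ → ℝ, (∀ k, k ∉ I → c k = 0) → ∀ j ∈ I,
      (∑ i ∈ I, c i * M (v j) (v i)) = c (j - 1) + c j + c (j + 1) := by
    intro c hc0 j hj
    have hj' := (hmem j).1 hj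
    have step : ∀ i ∈ I, c i * M (v j) (v i)
        = (if i = j - 1 then c i else 0) + (if i = j then c i else 0)
          + (if i = j + 1 then c i else 0) := by
      intro i hi
      have hi' := (hmem i).1 hi
      rw [hMpath i hi j hj]
      split_ifs <;> first | ring1 | (exfalso; omega)
    rw [Finset.sum_congr rfl step]
    rw [Finset.sum_add_distrib, Finset.sum_add_distrib,
      Finset.sum_ite_eq' I (j - 1) c, Finset.sum_ite_eq' I j c,
      Finset.sum_ite_eq' I (j + 1) c]
    have e1 : (if j - 1 ∈ I then c (j - 1) else 0) = c (j - 1) := by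
      split_ifs with h
      · rfl
      · exact (hc0 _ h).symm
    have e2 : (if j ∈ I then c j else 0) = c j := by rw [if_pos hj]
    have e3 : (if j + 1 ∈ I then c (j + 1) else 0) = c (j + 1) := by
      split_ifs with h
      · rfl
      · exact (hc0 _ h).symm
    rw [e1, e2, e3]
  -- the key recurrence lemma: a "kernel-like" sequence vanishes
  have keyA : ∀ c : ℕ → ℝ, (∀ k, k ∉ I → c k = 0) →
      (∀ j ∈ I, c (j - 1) + c j + c (j + 1) = 0) → ∀ k, c k = 0 := by
    intro c hc0 hrec
    have hc00 : c 0 = 0 := hc0 0 (by rw [hmem]; omega)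
    have pat : ∀ k : ℕ, (3 * k ≤ d + 1 → c (3 * k) = 0)
        ∧ (3 * k + 1 ≤ d + 1 → c (3 * k + 1) = c 1)
        ∧ (3 * k + 2 ≤ d + 1 → c (3 * k + 2) = - c 1) := by
      intro k
      induction k with
      | zero =>
        refine ⟨fun _ => by simpa using hc00, fun _ => by norm_num, fun _ => ?_⟩
        have h := hrec 1 ((hmem 1).2 (by omega))
        norm_num at h
        -- h : c 0 + c 1 + c 2 = 0
        have : c (3 * 0 + 2) = c 2 := by norm_num
        rw [this]
        linarith
      | succ k ih =>
        have p1 : 3 * k + 3 ≤ d + 1 → c (3 * k + 3) = 0 := by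
          intro hle
          have h := hrec (3 * k + 2) ((hmem _).2 (by omega))
          have e : 3 * k + 2 - 1 = 3 * k + 1 := by omega
          have e' : 3 * k + 2 + 1 = 3 * k + 3 := by ring
          rw [e, e'] at h
          have h1 := ih.2.1 (by omega)
          have h2 := ih.2.2 (by omega)
          linarith
        have p2 : 3 * k + 4 ≤ d + 1 → c (3 * k + 4) = c 1 := by
          intro hle
          have h := hrec (3 * k + 3) ((hmem _).2 (by omega))
          have e : 3 * k + 3 - 1 = 3 * k + 2 := by omega
          have e' : 3 * k + 3 + 1 = 3 * k + 4 := by ring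
          rw [e, e'] at h
          have h2 := ih.2.2 (by omega)
          have h3 := p1 (by omega)
          linarith
        have p3 : 3 * k + 5 ≤ d + 1 → c (3 * k + 5) = - c 1 := by
          intro hle
          have h := hrec (3 * k + 4) ((hmem _).2 (by omega))
          have e : 3 * k + 4 - 1 = 3 * k + 3 := by omega
          have e' : 3 * k + 4 + 1 = 3 * k + 5 := by ring
          rw [e, e'] at h
          have h3 := p1 (by omega)
          have h4 := p2 (by omega)
          linarith
        have e3 : 3 * (k + 1) = 3 * k + 3 := by ring
        have e4 : 3 * (k + 1) + 1 = 3 * k + 4 := by ring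
        have e5 : 3 * (k + 1) + 2 = 3 * k + 5 := by ring
        rw [e5, e4, e3]
        exact ⟨p1, p2, p3⟩
    have hc1 : c 1 = 0 := by
      have h := hrec (d + 1) ((hmem _).2 (by omega))
      have e : d + 1 - 1 = d := by omega
      rw [e] at h
      have hz : c (d + 1 + 1) = 0 := hc0 _ (by rw [hmem]; omega)
      have h1 : c d = 0 := by
        have hh := (pat m).1 (by omega)
        rwa [← hm] at hh
      have h2 : c (d + 1) = c 1 := by
        have hh := (pat m).2.1 (by omega)
        rwa [show 3 * m + 1 = d + 1 by omega] at hh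
      linarith
    intro k
    by_cases hk : k ∈ I
    · have hk' := (hmem k).1 hk
      rcases (by omega : k = 3 * (k / 3) ∨ k = 3 * (k / 3) + 1 ∨ k = 3 * (k / 3) + 2)
        with h | h | h
      · rw [h]; exact (pat _).1 (by omega)
      · rw [h, (pat _).2.1 (by omega), hc1]
      · rw [h, (pat _).2.2 (by omega), hc1]; ring
    · exact hc0 k hk
  -- u ≠ w
  have hne_uw : u ≠ w := by
    intro h
    rw [h] at hu
    have heq := hw.symm.trans hu
    have : (3 * b + 2 : ℕ) ∈ ({3 * a, 3 * a + 1} : Finset ℕ) := by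
      rw [← heq]; simp
    simp only [Finset.mem_insert, Finset.mem_singleton] at this
    omega
  -- cardinality: n ≥ d + 2
  have hn2 : d + 2 ≤ n := by
    have hcardP : (I.image v).card = d + 1 := by
      rw [Finset.card_image_of_injOn
        (fun x hx y hy hxy => hvinj x (Finset.mem_coe.1 hx) y (Finset.mem_coe.1 hy) hxy)]
      rw [hIdef, Nat.card_Icc]
      omega
    have hu_not : u ∉ I.image v := by
      intro hmemu
      obtain ⟨i, hi, hiu⟩ := Finset.mem_image.1 hmemu
      exact huP i hi hiu.symm
    have hins : (insert u (I.image v)).card = d + 2 := by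
      rw [Finset.card_insert_of_notMem hu_not, hcardP]
    calc d + 2 = (insert u (I.image v)).card := hins.symm
      _ ≤ Fintype.card V := Finset.card_le_univ _
      _ = n := hcard
  -- rank computation
  have hker : Module.finrank ℝ (LinearMap.ker f) = n - d - 1 := by
    unfold multNegOne at hmult
    rw [hfdef, hMdef]
    exact hmult
  have hrank : Module.finrank ℝ (LinearMap.range f) = d + 1 := by
    have h1 := LinearMap.finrank_range_add_finrank_ker f
    rw [hker] at h1
    have h2 : Module.finrank ℝ (V → ℝ) = n := by
      rw [Module.finrank_fintype_fun_eq_card, hcard]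
    rw [h2] at h1
    omega
  -- columns of M lie in the range of f
  have hcolmem : ∀ x : V, (fun y => M y x) ∈ LinearMap.range f := by
    intro x
    refine ⟨Pi.single x 1, ?_⟩
    ext y
    simp only [hfdef, Matrix.toLin'_apply, Matrix.mulVec_single, mul_one]
    simp
  -- the family of path columns
  set F : I → (V → ℝ) := fun i => fun y => M y (v (i : ℕ)) with hFdef
  have hind : LinearIndependent ℝ F := by
    rw [Fintype.linearIndependent_iff]
    intro g hg i
    set c : ℕ → ℝ := fun k => if h : k ∈ I then g ⟨k, h⟩ else 0 with hcdef
    have hc0 : ∀ k, k ∉ I → c k = 0 := by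
      intro k hk; rw [hcdef]; exact dif_neg hk
    have hrec : ∀ j ∈ I, c (j - 1) + c j + c (j + 1) = 0 := by
      intro j hj
      rw [← hsum c hc0 j hj]
      have hgj := congrFun hg (v j)
      simp only [Finset.sum_apply, Pi.smul_apply, smul_eq_mul, Pi.zero_apply] at hgj
      rw [← hgj]
      rw [← Finset.sum_attach I (fun i => c i * M (v j) (v i))]
      apply Finset.sum_congr rfl
      intro x _
      simp only [hcdef]
      rw [dif_pos x.2]
    have hall := keyA c hc0 hrec i
    simp only [hcdef] at hall
    rw [dif_pos i.2] at hall
    exact hall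
  set S : Submodule ℝ (V → ℝ) := Submodule.span ℝ (Set.range F) with hSdef
  have hSle : S ≤ LinearMap.range f := by
    rw [hSdef, Submodule.span_le]
    rintro _ ⟨i, rfl⟩
    exact hcolmem (v i)
  have hcardI : Fintype.card I = d + 1 := by
    rw [Fintype.card_coe, hIdef, Nat.card_Icc]
    omega
  have hSrank : Module.finrank ℝ S = d + 1 := by
    rw [hSdef, finrank_span_eq_card hind, hcardI]
  have hSeq : S = LinearMap.range f := by
    apply Submodule.eq_of_le_of_finrank_le hSle
    rw [hrank, hSrank]
  -- the coefficient function
  set c' : ℕ → ℝ := fun i =>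
    if i % 3 = 1 ∧ 3 * a + 1 ≤ i ∧ i ≤ d + 1 then 1
    else if i % 3 = 0 ∧ 3 * a + 3 ≤ i ∧ i ≤ d + 1 then -1 else 0 with hc'def
  have hc'0 : ∀ k, k ∉ I → c' k = 0 := by
    intro k hk
    rw [hmem] at hk
    simp only [hc'def]
    split_ifs with h1 h2
    · exfalso; omega
    · exfalso; omega
    · rfl
  set zf : V → ℝ := fun y => M y u - ∑ i ∈ I, c' i * M y (v i) with hzfdef
  have hzS : zf ∈ S := by
    have h1 : (fun y => M y u) ∈ S := by
      rw [hSeq]; exact hcolmem u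
    have h2 : (fun y => ∑ i ∈ I, c' i * M y (v i)) ∈ S := by
      have heq : (fun y => ∑ i ∈ I, c' i * M y (v i))
          = ∑ i ∈ I.attach, c' (i : ℕ) • F i := by
        ext y
        rw [Finset.sum_apply]
        rw [← Finset.sum_attach I (fun i => c' i * M y (v i))]
        apply Finset.sum_congr rfl
        intro x _
        simp only [Pi.smul_apply, smul_eq_mul]
        rfl
      rw [heq]
      exact Submodule.sum_mem _ (fun i _ =>
        Submodule.smul_mem _ _ (Submodule.subset_span ⟨i, rfl⟩))
    exact Submodule.sub_mem _ h1 h2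
  -- zf vanishes on path rows
  have hzpath : ∀ j ∈ I, zf (v j) = 0 := by
    intro j hj
    have hj' := (hmem j).1 hj
    have h1 : M (v j) u = if j = 3 * a ∨ j = 3 * a + 1 then 1 else 0 := by
      rw [hMdef]
      simp only [Matrix.add_apply, SimpleGraph.adjMatrix_apply, Matrix.one_apply]
      rw [if_neg (show ¬ (v j = u) from fun h => huP j hj h.symm), add_zero]
      by_cases hA : G.Adj (v j) u
      · rw [if_pos hA, if_pos ((hu' j hj).1 hA.symm)]
      · rw [if_neg hA, if_neg (fun h => hA ((hu' j hj).2 h).symm)]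
    have h2 := hsum c' hc'0 j hj
    show M (v j) u - _ = 0
    rw [h1, h2]
    simp only [hc'def]
    split_ifs <;> (try norm_num1) <;> (try (exfalso; omega))
  -- zf is zero
  have hzzero : zf = 0 := by
    have hzS' : zf ∈ Submodule.span ℝ (Set.range F) := by rw [← hSdef]; exact hzS
    obtain ⟨e, he⟩ := (Submodule.mem_span_range_iff_exists_fun _).1 hzS'
    set ce : ℕ → ℝ := fun k => if h : k ∈ I then e ⟨k, h⟩ else 0 with hcedef
    have hce0 : ∀ k, k ∉ I → ce k = 0 := by
      intro k hk; rw [hcedef]; exact dif_neg hk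
    have hrec : ∀ j ∈ I, ce (j - 1) + ce j + ce (j + 1) = 0 := by
      intro j hj
      rw [← hsum ce hce0 j hj]
      have hej := congrFun he (v j)
      simp only [Finset.sum_apply, Pi.smul_apply, smul_eq_mul] at hej
      rw [hzpath j hj] at hej
      rw [← hej]
      rw [← Finset.sum_attach I (fun i => ce i * M (v j) (v i))]
      apply Finset.sum_congr rfl
      intro x _
      simp only [hcedef]
      rw [dif_pos x.2]
    have hall := keyA ce hce0 hrec
    have heze : ∀ i : I, e i = 0 := by
      intro i
      have hh := hall i
      simp only [hcedef] at hh
      rw [dif_pos i.2] at hh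
      exact hh
    rw [← he]
    apply Finset.sum_eq_zero
    intro i _
    rw [heze i, zero_smul]
  -- evaluate at w
  have hfinal : M w u = c' (3 * b + 1) + c' (3 * b + 2) := by
    have h0 : zf w = 0 := by rw [hzzero]; rfl
    have h2 : (∑ i ∈ I, c' i * M w (v i)) = c' (3 * b + 1) + c' (3 * b + 2) := by
      have step : ∀ i ∈ I, c' i * M w (v i)
          = (if i = 3 * b + 1 then c' i else 0) + (if i = 3 * b + 2 then c' i else 0) := by
        intro i hi
        have hMw : M w (v i) = if i = 3 * b + 1 ∨ i = 3 * b + 2 then 1 else 0 := by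
          rw [hMdef]
          simp only [Matrix.add_apply, SimpleGraph.adjMatrix_apply, Matrix.one_apply]
          rw [if_neg (show ¬ (w = v i) from hwP i hi), add_zero]
          by_cases hA : G.Adj w (v i)
          · rw [if_pos hA, if_pos ((hw' i hi).1 hA)]
          · rw [if_neg hA, if_neg (fun h => hA ((hw' i hi).2 h))]
        rw [hMw]
        split_ifs <;> first | ring1 | (exfalso; omega)
      rw [Finset.sum_congr rfl step, Finset.sum_add_distrib,
        Finset.sum_ite_eq' I (3 * b + 1) c', Finset.sum_ite_eq' I (3 * b + 2) c',
        if_pos ((hmem _).2 (by omega)), if_pos ((hmem _).2 (by omega))]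
    have h0' : M w u - ∑ i ∈ I, c' i * M w (v i) = 0 := h0
    rw [h2] at h0'
    linarith
  have hval2 : c' (3 * b + 2) = 0 := by
    simp only [hc'def]
    rw [if_neg (by omega), if_neg (by omega)]
  have hval1 : c' (3 * b + 1) = if a ≤ b then 1 else 0 := by
    simp only [hc'def]
    split_ifs <;> first | rfl | (exfalso; omega)
  have hMwu : M w u = if G.Adj w u then 1 else 0 := by
    rw [hMdef]
    simp only [Matrix.add_apply, SimpleGraph.adjMatrix_apply, Matrix.one_apply]
    rw [if_neg (show ¬ (w = u) from fun h => hne_uw h.symm), add_zero]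
  constructor
  · intro hab
    have hone : (if G.Adj w u then (1 : ℝ) else 0) = 1 := by
      rw [← hMwu, hfinal, hval1, hval2, if_pos hab]; ring
    have hAdj : G.Adj w u := by
      by_contra hA
      rw [if_neg hA] at hone
      norm_num at hone
    refine ⟨hAdj.symm, ?_⟩
    have hd1 : G.dist (v (3 * a)) u = 1 :=
      SimpleGraph.dist_eq_one_iff_adj.2
        (((hu' (3 * a) ((hmem _).2 (by omega))).2 (Or.inl rfl)).symm)
    have hd2 : G.dist u w = 1 := SimpleGraph.dist_eq_one_iff_adj.2 hAdj.symm
    have hd3' : G.dist w (v (3 * b + 2)) = 1 :=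
      SimpleGraph.dist_eq_one_iff_adj.2
        ((hw' (3 * b + 2) ((hmem _).2 (by omega))).2 (Or.inr rfl))
    have hdist : G.dist (v (3 * a)) (v (3 * b + 2)) = (3 * b + 2) - 3 * a := by
      have hh := hpath (3 * a) ((hmem _).2 (by omega)) (3 * b + 2) ((hmem _).2 (by omega))
      rw [hh, max_eq_right (by omega), min_eq_left (by omega)]
    have htri : G.dist (v (3 * a)) (v (3 * b + 2)) ≤ 3 := by
      calc G.dist (v (3 * a)) (v (3 * b + 2))
          ≤ G.dist (v (3 * a)) u + G.dist u (v (3 * b + 2)) := hconn.dist_triangle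
        _ ≤ G.dist (v (3 * a)) u + (G.dist u w + G.dist w (v (3 * b + 2))) := by
            exact Nat.add_le_add_left hconn.dist_triangle _
        _ = 3 := by rw [hd1, hd2, hd3']
    rw [hdist] at htri
    omega
  · intro hba hA
    have hzero : (if G.Adj w u then (1 : ℝ) else 0) = 0 := by
      rw [← hMwu, hfinal, hval1, hval2, if_neg (by omega)]; ring
    rw [if_pos hA.symm] at hzero
    norm_num at hzero
end

section
/- Let G be a finite simple connected C-canonical graph of order n and diameter d with d ≡ 0 (mod 3) and m_G(−1) = n − d − 1, and let P = v_1 v_2 ⋯ v_{d+1} be a diameter path of G. Suppose x is a vertex not on P whose unique neighbor on P is v_i, and u is a vertex not on P adjacent to exactly v_j and v_{j+1} on P, and x is not adjacent to u. If j > i then j ≡ 0 (mod 3), and if j < i then j ≡ 1 (mod 3). -/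
attribute [local instance] Classical.propDecidable

lemma leftPattern (μ : ℕ → ℝ) (N : ℕ) (h0 : μ 0 = 0)
    (hE : ∀ m, 1 ≤ m → m + 1 ≤ N → μ (m - 1) + μ m + μ (m + 1) = 0) :
    ∀ m ≤ N, μ m = if m % 3 = 1 then μ 1 else if m % 3 = 2 then -(μ 1) else 0 := by
  intro m
  induction m using Nat.strong_induction_on with
  | _ m ih =>
    intro hm
    match m with
    | 0 => simpa
    | 1 => simp
    | (k+2) =>
      have e := hE (k+1) (by omega) (by omega)
      have h1 := ih k (by omega) (by omega)
      have h2 := ih (k+1) (by omega) (by omega)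
      simp only [Nat.add_sub_cancel] at e
      rcases (by omega : k % 3 = 0 ∨ k % 3 = 1 ∨ k % 3 = 2) with h | h | h
      · have e1 : (k+1) % 3 = 1 := by omega
        have e2 : (k+2) % 3 = 2 := by omega
        simp [h, e1] at h1 h2; simp [e2]; linarith
      · have e1 : (k+1) % 3 = 2 := by omega
        have e2 : (k+2) % 3 = 0 := by omega
        simp [h, e1] at h1 h2; simp [e2]; linarith
      · have e1 : (k+1) % 3 = 0 := by omega
        have e2 : (k+2) % 3 = 1 := by omega
        simp [h, e1] at h1 h2; simp [e2]; linarith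

lemma rightPattern (μ : ℕ → ℝ) (d i : ℕ) (hd3 : d % 3 = 0) (htop : μ (d + 2) = 0)
    (hE : ∀ m, i + 1 ≤ m → m ≤ d + 1 → μ (m - 1) + μ m + μ (m + 1) = 0) :
    ∀ m, i ≤ m → m ≤ d + 2 →
      μ m = if m % 3 = 1 then μ (d + 1) else if m % 3 = 0 then -(μ (d + 1)) else 0 := by
  suffices h : ∀ t, ∀ m, i ≤ m → m ≤ d + 2 → d + 2 - m ≤ t →
      μ m = if m % 3 = 1 then μ (d + 1) else if m % 3 = 0 then -(μ (d + 1)) else 0 by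
    intro m h1 h2; exact h (d + 2 - m) m h1 h2 le_rfl
  intro t
  induction t with
  | zero =>
    intro m h1 h2 h3
    have hm : m = d + 2 := by omega
    subst hm
    rw [htop, if_neg (by omega), if_neg (by omega)]
  | succ t ih =>
    intro m h1 h2 h3
    by_cases hc : m = d + 2
    · subst hc; rw [htop, if_neg (by omega), if_neg (by omega)]
    by_cases hc1 : m = d + 1
    · subst hc1; rw [if_pos (by omega)]
    have hm : m ≤ d := by omega
    have e := hE (m + 1) (by omega) (by omega)
    simp only [Nat.add_sub_cancel] at e
    have h1' := ih (m + 1) (by omega) (by omega) (by omega)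
    have h2' := ih (m + 2) (by omega) (by omega) (by omega)
    rcases (by omega : m % 3 = 0 ∨ m % 3 = 1 ∨ m % 3 = 2) with h | h | h
    · have e1 : (m+1) % 3 = 1 := by omega
      have e2 : (m+2) % 3 = 2 := by omega
      simp [e1] at h1'; simp [e2] at h2'; simp [h]; linarith
    · have e1 : (m+1) % 3 = 2 := by omega
      have e2 : (m+2) % 3 = 0 := by omega
      simp [e1] at h1'; simp [e2] at h2'; simp [h]; linarith
    · have e1 : (m+1) % 3 = 0 := by omega
      have e2 : (m+2) % 3 = 1 := by omega
      simp [e1] at h1'; simp [e2] at h2'; simp [h]; linarith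

theorem stmt_14 {V : Type*} [Fintype V] (G : SimpleGraph V) (n d : ℕ)
    (hconn : G.Connected)
    (hcard : Fintype.card V = n)
    (hcanon : ∀ a b : V, (∀ z : V, (z = a ∨ G.Adj a z) ↔ (z = b ∨ G.Adj b z)) → a = b)
    (hd3 : d % 3 = 0)
    (hdiam : ∀ a b : V, G.dist a b ≤ d)
    (v : ℕ → V)
    (hpath : ∀ i ∈ Finset.Icc 1 (d + 1), ∀ j ∈ Finset.Icc 1 (d + 1),
      G.dist (v i) (v j) = max i j - min i j)
    (hmult : multNegOne G = n - d - 1)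
    (x u : V) (hxP : ∀ i ∈ Finset.Icc 1 (d + 1), x ≠ v i) (huP : ∀ i ∈ Finset.Icc 1 (d + 1), u ≠ v i) (i j : ℕ)
    (hx : pathNbrs G d v x = {i})
    (hu : pathNbrs G d v u = {j, j + 1})
    (hnadj : ¬ G.Adj x u) :
    (i < j → j % 3 = 0) ∧ (j < i → j % 3 = 1) := by
  -- membership facts
  have hiI : 1 ≤ i ∧ i ≤ d + 1 := by
    have h1 : i ∈ pathNbrs G d v x := by rw [hx]; exact Finset.mem_singleton_self i
    have := Finset.mem_of_mem_filter i h1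
    simpa using this
  have hjI : 1 ≤ j ∧ j ≤ d := by
    have h1 : j + 1 ∈ pathNbrs G d v u := by rw [hu]; simp
    have h2 : j ∈ pathNbrs G d v u := by rw [hu]; simp
    have := Finset.mem_of_mem_filter _ h1
    have := Finset.mem_of_mem_filter _ h2
    simp only [Finset.mem_Icc] at *
    omega
  -- adjacency characterizations
  have hxa : ∀ l, 1 ≤ l → l ≤ d + 1 → (G.Adj x (v l) ↔ l = i) := by
    intro l h1 h2
    constructor
    · intro h
      have hmem : l ∈ pathNbrs G d v x := by
        simp only [pathNbrs, Finset.mem_filter, Finset.mem_Icc]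
        exact ⟨⟨h1, h2⟩, h⟩
      rw [hx] at hmem; simpa using hmem
    · rintro rfl
      have hmem : l ∈ pathNbrs G d v x := by rw [hx]; simp
      simp only [pathNbrs, Finset.mem_filter] at hmem
      exact hmem.2
  have hua : ∀ l, 1 ≤ l → l ≤ d + 1 → (G.Adj u (v l) ↔ (l = j ∨ l = j + 1)) := by
    intro l h1 h2
    constructor
    · intro h
      have hmem : l ∈ pathNbrs G d v u := by
        simp only [pathNbrs, Finset.mem_filter, Finset.mem_Icc]
        exact ⟨⟨h1, h2⟩, h⟩
      rw [hu] at hmem; simpa using hmem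
    · intro h
      have hmem : l ∈ pathNbrs G d v u := by
        rw [hu]; simp only [Finset.mem_insert, Finset.mem_singleton]; exact h
      simp only [pathNbrs, Finset.mem_filter] at hmem
      exact hmem.2
  -- injectivity of the path
  have hvne : ∀ k l, 1 ≤ k → k ≤ d + 1 → 1 ≤ l → l ≤ d + 1 → k ≠ l → v k ≠ v l := by
    intro k l hk1 hk2 hl1 hl2 hne he
    have hdkl := hpath k (by simp only [Finset.mem_Icc]; omega) l
      (by simp only [Finset.mem_Icc]; omega)
    rw [he, SimpleGraph.dist_self] at hdkl
    omega
  -- adjacency on the path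
  have hpadj : ∀ k l, 1 ≤ k → k ≤ d + 1 → 1 ≤ l → l ≤ d + 1 →
      (G.Adj (v k) (v l) ↔ max k l - min k l = 1) := by
    intro k l hk1 hk2 hl1 hl2
    rw [← SimpleGraph.dist_eq_one_iff_adj, hpath k (by simp only [Finset.mem_Icc]; omega) l
      (by simp only [Finset.mem_Icc]; omega)]
  have hux : u ≠ x := by
    intro he
    rw [he, hx] at hu
    have h1 : j ∈ ({i} : Finset ℕ) := by rw [hu]; simp
    have h2 : j + 1 ∈ ({i} : Finset ℕ) := by rw [hu]; simp
    simp only [Finset.mem_singleton] at h1 h2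
    omega
  unfold multNegOne at hmult
  set M := G.adjMatrix ℝ + 1 with hM
  have hMapp : ∀ a b : V, M a b = (if G.Adj a b then 1 else 0) + (if a = b then 1 else 0) := by
    intro a b
    simp [hM, Matrix.add_apply, Matrix.one_apply, SimpleGraph.adjMatrix_apply]
  -- entry lemmas
  have hMxx : M x x = 1 := by
    rw [hMapp, if_neg (G.irrefl), if_pos rfl]; ring
  have hMxv : ∀ l, 1 ≤ l → l ≤ d + 1 → M x (v l) = if l = i then 1 else 0 := by
    intro l h1 h2
    rw [hMapp, if_neg (hxP l (by simp only [Finset.mem_Icc]; omega))]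
    by_cases h : l = i
    · rw [if_pos ((hxa l h1 h2).mpr h), if_pos h]; ring
    · rw [if_neg (fun hc => h ((hxa l h1 h2).mp hc)), if_neg h]; ring
  have hMvx : ∀ m, 1 ≤ m → m ≤ d + 1 → M (v m) x = if m = i then 1 else 0 := by
    intro m h1 h2
    have hne : v m ≠ x := fun hc => (hxP m (by simp only [Finset.mem_Icc]; omega)) hc.symm
    have hiff : G.Adj (v m) x ↔ m = i := by rw [G.adj_comm]; exact hxa m h1 h2
    rw [hMapp, if_neg hne]
    by_cases h : m = i
    · rw [if_pos (hiff.mpr h), if_pos h]; ring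
    · rw [if_neg (fun hc => h (hiff.mp hc)), if_neg h]; ring
  have hMux : M u x = 0 := by
    rw [hMapp, if_neg hux, if_neg (fun hc => hnadj (G.adj_symm hc))]; ring
  have hMuv : ∀ l, 1 ≤ l → l ≤ d + 1 → M u (v l) = if (l = j ∨ l = j + 1) then 1 else 0 := by
    intro l h1 h2
    rw [hMapp, if_neg (huP l (by simp only [Finset.mem_Icc]; omega))]
    by_cases h : l = j ∨ l = j + 1
    · rw [if_pos ((hua l h1 h2).mpr h), if_pos h]; ring
    · rw [if_neg (fun hc => h ((hua l h1 h2).mp hc)), if_neg h]; ring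
  have hMvv : ∀ m l, 1 ≤ m → m ≤ d + 1 → 1 ≤ l → l ≤ d + 1 →
      M (v m) (v l) = if (m ≤ l + 1 ∧ l ≤ m + 1) then 1 else 0 := by
    intro m l hm1 hm2 hl1 hl2
    rw [hMapp]
    by_cases he : m = l
    · subst he
      rw [if_neg (G.irrefl), if_pos rfl, if_pos (by omega)]; ring
    · rw [if_neg (hvne m l hm1 hm2 hl1 hl2 he)]
      have hiff := hpadj m l hm1 hm2 hl1 hl2
      by_cases hcond : m ≤ l + 1 ∧ l ≤ m + 1
      · rw [if_pos (hiff.mpr (by omega)), if_pos hcond]; ring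
      · rw [if_neg (fun hc => hcond (by have := hiff.mp hc; omega)), if_neg hcond]; ring
  -- dimension count
  have hcV : d + 1 ≤ Fintype.card V := by
    have hinj : Set.InjOn v (Finset.Icc 1 (d + 1)) := by
      intro a ha b hb he
      by_contra hne
      simp only [Finset.coe_Icc, Set.mem_Icc] at ha hb
      exact hvne a b ha.1 ha.2 hb.1 hb.2 hne he
    have h1 : ((Finset.Icc 1 (d + 1)).image v).card = d + 1 := by
      rw [Finset.card_image_of_injOn hinj, Nat.card_Icc]; omega
    calc d + 1 = ((Finset.Icc 1 (d + 1)).image v).card := h1.symm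
      _ ≤ (Finset.univ : Finset V).card := Finset.card_le_univ _
      _ = Fintype.card V := Finset.card_univ
  have hker := hmult
  have hrange : Module.finrank ℝ (LinearMap.range (Matrix.toLin' M)) = d + 1 := by
    have h1 := LinearMap.finrank_range_add_finrank_ker (Matrix.toLin' M)
    rw [Module.finrank_fintype_fun_eq_card, hcard] at h1
    rw [hcard] at hcV
    omega
  set vert : Fin (d + 2) → V := fun k => if h : (k : ℕ) < d + 1 then v ((k : ℕ) + 1) else x
    with hvert
  have hnli : ¬ LinearIndependent ℝ (fun k => M.mulVec (Pi.single (vert k) (1 : ℝ))) := by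
    intro hli
    have hmem : ∀ k, M.mulVec (Pi.single (vert k) (1 : ℝ)) ∈ LinearMap.range (Matrix.toLin' M) :=
      fun k => ⟨Pi.single (vert k) 1, rfl⟩
    have hli2 : LinearIndependent ℝ
        (fun k => (⟨M.mulVec (Pi.single (vert k) 1), hmem k⟩ :
          LinearMap.range (Matrix.toLin' M))) :=
      LinearIndependent.of_comp (LinearMap.range (Matrix.toLin' M)).subtype hli
    have hcardle := hli2.fintype_card_le_finrank
    rw [Fintype.card_fin, hrange] at hcardle
    omega
  obtain ⟨g, hg0, k0, hk0⟩ := Fintype.not_linearIndependent_iff.mp hnli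
  set lx := g ⟨d + 1, by omega⟩ with hlxdef
  set μ : ℕ → ℝ := fun m => if h : 1 ≤ m ∧ m ≤ d + 1 then g ⟨m - 1, by omega⟩ else 0 with hmudef
  have hμ0 : μ 0 = 0 := by rw [hmudef]; simp only; rw [dif_neg (by omega)]
  have hμtop : μ (d + 2) = 0 := by rw [hmudef]; simp only; rw [dif_neg (by omega)]
  have heval : ∀ a : V,
      (∑ l ∈ Finset.range (d + 1), μ (l + 1) * M a (v (l + 1))) + lx * M a x = 0 := by
    intro a
    have h1 := congrFun hg0 a
    simp only [Finset.sum_apply, Pi.smul_apply, smul_eq_mul, Pi.zero_apply,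
      Matrix.mulVec_single, MulOpposite.op_one, one_smul, Matrix.col_apply, mul_one] at h1
    rw [Fin.sum_univ_castSucc] at h1
    have hlast : vert (Fin.last (d + 1)) = x := by
      rw [hvert]; simp only; rw [dif_neg (by simp [Fin.last])]
    have hglast : g (Fin.last (d + 1)) = lx := congrArg g (Fin.ext rfl)
    have hterm : ∀ k : Fin (d + 1),
        g k.castSucc * M a (vert k.castSucc) = μ ((k : ℕ) + 1) * M a (v ((k : ℕ) + 1)) := by
      intro k
      have hv : vert k.castSucc = v ((k : ℕ) + 1) := by
        rw [hvert]; simp only [Fin.coe_castSucc]; rw [dif_pos k.isLt]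
      have hgk : g k.castSucc = μ ((k : ℕ) + 1) := by
        rw [hmudef]; simp only; rw [dif_pos ⟨by omega, by omega⟩]
        try exact congrArg g (Fin.ext (by simp))
      rw [hv, hgk]
    rw [Finset.sum_congr rfl (fun k _ => hterm k)] at h1
    rw [Fin.sum_univ_eq_sum_range (fun l => μ (l + 1) * M a (v (l + 1))) (d + 1)] at h1
    rw [hglast, hlast] at h1
    exact h1
  have hEx : μ i + lx = 0 := by
    have h1 := heval x
    rw [hMxx, mul_one] at h1
    have hswap : ∀ l ∈ Finset.range (d + 1),
        μ (l + 1) * M x (v (l + 1)) = if l = i - 1 then μ (l + 1) else 0 := by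
      intro l hl
      rw [Finset.mem_range] at hl
      rw [hMxv (l + 1) (by omega) (by omega)]
      by_cases h : l = i - 1
      · rw [if_pos (by omega), if_pos h, mul_one]
      · rw [if_neg (by omega), if_neg h, mul_zero]
    rw [Finset.sum_congr rfl hswap,
      Finset.sum_ite_eq' (Finset.range (d + 1)) (i - 1) (fun l => μ (l + 1)),
      if_pos (Finset.mem_range.mpr (by omega)), show i - 1 + 1 = i by omega] at h1
    exact h1
  have hEu : μ j + μ (j + 1) = 0 := by
    have h1 := heval u
    rw [hMux, mul_zero, add_zero] at h1
    have hswap : ∀ l ∈ Finset.range (d + 1), μ (l + 1) * M u (v (l + 1)) =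
        (if l = j - 1 then μ (l + 1) else 0) + (if l = j then μ (l + 1) else 0) := by
      intro l hl
      rw [Finset.mem_range] at hl
      rw [hMuv (l + 1) (by omega) (by omega)]
      by_cases h : l = j - 1
      · rw [if_pos (by omega), if_pos h, if_neg (by omega), mul_one, add_zero]
      · by_cases h' : l = j
        · rw [if_pos (by omega), if_neg h, if_pos h', mul_one, zero_add]
        · rw [if_neg (by omega), if_neg h, if_neg h', mul_zero, add_zero]
    rw [Finset.sum_congr rfl hswap, Finset.sum_add_distrib,
      Finset.sum_ite_eq' (Finset.range (d + 1)) (j - 1) (fun l => μ (l + 1)),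
      Finset.sum_ite_eq' (Finset.range (d + 1)) j (fun l => μ (l + 1)),
      if_pos (Finset.mem_range.mpr (by omega)), if_pos (Finset.mem_range.mpr (by omega)),
      show j - 1 + 1 = j by omega] at h1
    exact h1
  have hEv : ∀ m, 1 ≤ m → m ≤ d + 1 →
      μ (m - 1) + μ m + μ (m + 1) + (if m = i then lx else 0) = 0 := by
    intro m hm1 hm2
    have h1 := heval (v m)
    rw [hMvx m hm1 hm2] at h1
    have hswap : ∀ l ∈ Finset.range (d + 1), μ (l + 1) * M (v m) (v (l + 1)) =
        (if l = m - 2 ∧ 2 ≤ m then μ (l + 1) else 0) + (if l = m - 1 then μ (l + 1) else 0)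
          + (if l = m then μ (l + 1) else 0) := by
      intro l hl
      rw [Finset.mem_range] at hl
      rw [hMvv m (l + 1) hm1 hm2 (by omega) (by omega)]
      by_cases c1 : l = m - 2 ∧ 2 ≤ m
      · rw [if_pos (by omega), if_pos c1, if_neg (by omega), if_neg (by omega), mul_one]; ring
      · by_cases c2 : l = m - 1
        · rw [if_pos (by omega), if_neg c1, if_pos c2, if_neg (by omega), mul_one]; ring
        · by_cases c3 : l = m
          · rw [if_pos (by omega), if_neg c1, if_neg c2, if_pos c3, mul_one]; ring
          · rw [if_neg (by omega), if_neg c1, if_neg c2, if_neg c3, mul_zero]; ring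
    rw [Finset.sum_congr rfl hswap, Finset.sum_add_distrib, Finset.sum_add_distrib] at h1
    have hfirst : (∑ l ∈ Finset.range (d + 1),
        if l = m - 2 ∧ 2 ≤ m then μ (l + 1) else 0) = μ (m - 1) := by
      by_cases hm : 2 ≤ m
      · rw [Finset.sum_congr rfl (fun l _ => if_congr (and_iff_left hm) rfl rfl),
          Finset.sum_ite_eq' (Finset.range (d + 1)) (m - 2) (fun l => μ (l + 1)),
          if_pos (Finset.mem_range.mpr (by omega)), show m - 2 + 1 = m - 1 by omega]
      · rw [Finset.sum_eq_zero (fun l _ => if_neg (by tauto)), show m - 1 = 0 by omega]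
        exact hμ0.symm
    have hsecond : (∑ l ∈ Finset.range (d + 1), if l = m - 1 then μ (l + 1) else 0) = μ m := by
      rw [Finset.sum_ite_eq' (Finset.range (d + 1)) (m - 1) (fun l => μ (l + 1)),
        if_pos (Finset.mem_range.mpr (by omega)), show m - 1 + 1 = m by omega]
    have hthird : (∑ l ∈ Finset.range (d + 1), if l = m then μ (l + 1) else 0) = μ (m + 1) := by
      rw [Finset.sum_ite_eq' (Finset.range (d + 1)) m (fun l => μ (l + 1))]
      by_cases hm : m ≤ d
      · rw [if_pos (Finset.mem_range.mpr (by omega))]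
      · rw [if_neg (by simp only [Finset.mem_range]; omega), show m + 1 = d + 2 by omega]
        exact hμtop.symm
    rw [hfirst, hsecond, hthird] at h1
    by_cases h : m = i
    · rw [if_pos h]; rw [if_pos h, mul_one] at h1; linarith
    · rw [if_neg h]; rw [if_neg h, mul_zero] at h1; linarith
  have hnz : ¬ (lx = 0 ∧ ∀ m, μ m = 0) := by
    rintro ⟨hl0, hall⟩
    apply hk0
    by_cases hk : (k0 : ℕ) = d + 1
    · rw [show k0 = (⟨d + 1, by omega⟩ : Fin (d + 2)) from Fin.ext hk]
      exact hl0
    · have h1 := hall ((k0 : ℕ) + 1)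
      rw [hmudef] at h1; simp only at h1
      rw [dif_pos ⟨by omega, by omega⟩] at h1
      rw [show k0 = (⟨(k0 : ℕ) + 1 - 1, by omega⟩ : Fin (d + 2)) from Fin.ext (by simp)]
      exact h1
  have hlx0 : lx ≠ 0 := by
    intro hl0
    apply hnz
    refine ⟨hl0, ?_⟩
    have hhom : ∀ m, 1 ≤ m → m + 1 ≤ d + 2 → μ (m - 1) + μ m + μ (m + 1) = 0 := by
      intro m h1 h2
      have h3 := hEv m h1 (by omega)
      by_cases h : m = i
      · rw [if_pos h, hl0] at h3; linarith
      · rw [if_neg h] at h3; linarith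
    have hL := leftPattern μ (d + 2) hμ0 hhom
    have ha : μ 1 = 0 := by
      have h4 := hL (d + 2) le_rfl
      rw [hμtop, if_neg (by omega), if_pos (by omega)] at h4
      linarith
    intro m
    by_cases hm : m ≤ d + 2
    · rw [hL m hm, ha]; simp
    · rw [hmudef]; simp only; rw [dif_neg (by omega)]
  have hhomL : ∀ m, 1 ≤ m → m + 1 ≤ i → μ (m - 1) + μ m + μ (m + 1) = 0 := by
    intro m h1 h2
    have h3 := hEv m h1 (by omega)
    rw [if_neg (by omega)] at h3; linarith
  have hhomR : ∀ m, i + 1 ≤ m → m ≤ d + 1 → μ (m - 1) + μ m + μ (m + 1) = 0 := by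
    intro m h1 h2
    have h3 := hEv m (by omega) h2
    rw [if_neg (by omega)] at h3; linarith
  have hL := leftPattern μ i hμ0 hhomL
  have hR := rightPattern μ d i hd3 hμtop hhomR
  have hi3 : i % 3 = 1 := by
    by_contra hc
    rcases (by omega : i % 3 = 0 ∨ i % 3 = 2) with h | h
    · have h4 := hL i le_rfl
      rw [h] at h4
      norm_num at h4
      rw [h4, zero_add] at hEx
      exact hlx0 hEx
    · have h4 := hR i le_rfl (by omega)
      rw [h] at h4
      norm_num at h4
      rw [h4, zero_add] at hEx
      exact hlx0 hEx
  have hμi1 : μ i = μ 1 := by rw [hL i le_rfl, if_pos hi3]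
  have hμid : μ i = μ (d + 1) := by rw [hR i le_rfl (by omega), if_pos hi3]
  have hμine : μ i ≠ 0 := fun h => hlx0 (by rw [h, zero_add] at hEx; exact hEx)
  constructor
  · intro hij
    by_contra hc
    have hj' := hR j (by omega) (by omega)
    have hj1' := hR (j + 1) (by omega) (by omega)
    apply hμine
    rw [hμid]
    rcases (by omega : j % 3 = 1 ∨ j % 3 = 2) with h | h
    · have e1 : (j + 1) % 3 = 2 := by omega
      rw [h] at hj'; rw [e1] at hj1'
      norm_num at hj' hj1'
      rwa [hj', hj1', add_zero] at hEu
    · have e1 : (j + 1) % 3 = 0 := by omega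
      rw [h] at hj'; rw [e1] at hj1'
      norm_num at hj' hj1'
      rw [hj', hj1', zero_add] at hEu
      exact neg_eq_zero.mp hEu
  · intro hji
    by_contra hc
    have hj' := hL j (by omega)
    have hj1' := hL (j + 1) (by omega)
    apply hμine
    rw [hμi1]
    rcases (by omega : j % 3 = 0 ∨ j % 3 = 2) with h | h
    · have e1 : (j + 1) % 3 = 1 := by omega
      rw [h] at hj'; rw [e1] at hj1'
      norm_num at hj' hj1'
      rwa [hj', hj1', zero_add] at hEu
    · have e1 : (j + 1) % 3 = 0 := by omega
      rw [h] at hj'; rw [e1] at hj1'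
      norm_num at hj' hj1'
      rw [hj', hj1', add_zero] at hEu
      exact neg_eq_zero.mp hEu
end

section
/- Let G be a finite simple connected C-canonical graph of order n and diameter d with d ≡ 0 (mod 3) and m_G(−1) = n − d − 1, and let P = v_1 v_2 ⋯ v_{d+1} be a diameter path of G. Suppose x is a vertex not on P whose unique neighbor on P is v_i, and u is a vertex not on P adjacent to exactly v_j and v_{j+1} on P. If x is adjacent to u, then j = i or j = i − 1. -/
attribute [local instance] Classical.propDecidable

noncomputable def epsAux : ℕ → ℝ := fun a =>
  if a % 3 = 1 then 1 else if a % 3 = 2 then -1 else 0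

lemma epsAux_rec (a : ℕ) : epsAux (a + 2) = -epsAux (a + 1) - epsAux a := by
  have h : a % 3 = 0 ∨ a % 3 = 1 ∨ a % 3 = 2 := by omega
  rcases h with h | h | h <;>
  · have h1 : (a + 1) % 3 = (a % 3 + 1) % 3 := by omega
    have h2 : (a + 2) % 3 = (a % 3 + 2) % 3 := by omega
    simp [epsAux, h, h1, h2]

lemma epsAux_val0 (a : ℕ) (h : a % 3 = 0) : epsAux a = 0 := by simp [epsAux, h]
lemma epsAux_val1 (a : ℕ) (h : a % 3 = 1) : epsAux a = 1 := by simp [epsAux, h]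
lemma epsAux_val2 (a : ℕ) (h : a % 3 = 2) : epsAux a = -1 := by simp [epsAux, h]

lemma solveRec (g : ℕ → ℝ) (N : ℕ) (h0 : g 0 = 0)
    (hrec : ∀ a, 1 ≤ a → a ≤ N → g (a - 1) + g a + g (a + 1) = 0) :
    ∀ a, a ≤ N + 1 → g a = g 1 * epsAux a := by
  intro a
  induction a using Nat.strong_induction_on with
  | _ a ih =>
    intro ha
    match a, ih with
    | 0, _ => simp [epsAux, h0]
    | 1, _ => simp [epsAux]
    | (b+2), ih =>
      have hb1 := ih (b+1) (by omega) (by omega)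
      have hb := ih b (by omega) (by omega)
      have hr : g b + g (b+1) + g (b+2) = 0 := by
        have := hrec (b+1) (by omega) (by omega)
        simpa using this
      rw [epsAux_rec b]
      linear_combination hr - hb1 - hb

set_option maxHeartbeats 1600000 in
theorem stmt_15 {V : Type*} [Fintype V] (G : SimpleGraph V) (n d : ℕ)
    (hconn : G.Connected)
    (hcard : Fintype.card V = n)
    (hcanon : ∀ a b : V, (∀ z : V, (z = a ∨ G.Adj a z) ↔ (z = b ∨ G.Adj b z)) → a = b)
    (hd3 : d % 3 = 0)
    (hdiam : ∀ a b : V, G.dist a b ≤ d)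
    (v : ℕ → V)
    (hpath : ∀ i ∈ Finset.Icc 1 (d + 1), ∀ j ∈ Finset.Icc 1 (d + 1),
      G.dist (v i) (v j) = max i j - min i j)
    (hmult : multNegOne G = n - d - 1)
    (x u : V) (hxP : ∀ i ∈ Finset.Icc 1 (d + 1), x ≠ v i) (huP : ∀ i ∈ Finset.Icc 1 (d + 1), u ≠ v i) (i j : ℕ)
    (hx : pathNbrs G d v x = {i})
    (hu : pathNbrs G d v u = {j, j + 1})
    (hadj : G.Adj x u) :
    j = i ∨ j = i - 1 := by
  classical
  unfold pathNbrs at hx hu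
  -- membership facts
  have hiI : i ∈ Finset.Icc 1 (d+1) ∧ G.Adj x (v i) := by
    have : i ∈ (Finset.Icc 1 (d+1)).filter fun b => G.Adj x (v b) := by
      rw [hx]; exact Finset.mem_singleton_self i
    exact Finset.mem_filter.mp this
  have hjI : j ∈ Finset.Icc 1 (d+1) ∧ G.Adj u (v j) := by
    have : j ∈ (Finset.Icc 1 (d+1)).filter fun b => G.Adj u (v b) := by
      rw [hu]; exact Finset.mem_insert_self j _
    exact Finset.mem_filter.mp this
  have hj1I : j + 1 ∈ Finset.Icc 1 (d+1) ∧ G.Adj u (v (j+1)) := by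
    have : j + 1 ∈ (Finset.Icc 1 (d+1)).filter fun b => G.Adj u (v b) := by
      rw [hu]; exact Finset.mem_insert.mpr (Or.inr (Finset.mem_singleton_self _))
    exact Finset.mem_filter.mp this
  have hAdjx : ∀ a ∈ Finset.Icc 1 (d+1), G.Adj x (v a) ↔ a = i := by
    intro a ha
    constructor
    · intro h
      have : a ∈ (Finset.Icc 1 (d+1)).filter fun b => G.Adj x (v b) :=
        Finset.mem_filter.mpr ⟨ha, h⟩
      rw [hx] at this; exact Finset.mem_singleton.mp this
    · rintro rfl; exact hiI.2
  have hAdju : ∀ a ∈ Finset.Icc 1 (d+1), G.Adj u (v a) ↔ (a = j ∨ a = j+1) := by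
    intro a ha
    constructor
    · intro h
      have : a ∈ (Finset.Icc 1 (d+1)).filter fun b => G.Adj u (v b) :=
        Finset.mem_filter.mpr ⟨ha, h⟩
      rw [hu] at this
      simpa using this
    · rintro (rfl | rfl)
      · exact hjI.2
      · exact hj1I.2
  have hbi := Finset.mem_Icc.mp hiI.1
  have hbj := Finset.mem_Icc.mp hjI.1
  have hbj1 := Finset.mem_Icc.mp hj1I.1
  -- injectivity of v on the path
  have vinj : ∀ a ∈ Finset.Icc 1 (d+1), ∀ b ∈ Finset.Icc 1 (d+1), v a = v b → a = b := by
    intro a ha b hb h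
    have := hpath a ha b hb
    rw [h, SimpleGraph.dist_self] at this
    omega
  have vadj : ∀ a ∈ Finset.Icc 1 (d+1), ∀ b ∈ Finset.Icc 1 (d+1),
      (G.Adj (v a) (v b) ↔ (b = a + 1 ∨ a = b + 1)) := by
    intro a ha b hb
    rw [← SimpleGraph.dist_eq_one_iff_adj, hpath a ha b hb]
    omega
  -- distance window
  have dvix : G.dist (v i) x = 1 := by
    rw [SimpleGraph.dist_comm]; exact SimpleGraph.dist_eq_one_iff_adj.mpr hiI.2
  have dxu : G.dist x u = 1 := SimpleGraph.dist_eq_one_iff_adj.mpr hadj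
  have duj : G.dist u (v j) = 1 := SimpleGraph.dist_eq_one_iff_adj.mpr hjI.2
  have duj1 : G.dist u (v (j+1)) = 1 := SimpleGraph.dist_eq_one_iff_adj.mpr hj1I.2
  have hw1 : max i j - min i j ≤ 3 := by
    rw [← hpath i hiI.1 j hjI.1]
    have a1 := hconn.dist_triangle (u := v i) (v := x) (w := v j)
    have a2 := hconn.dist_triangle (u := x) (v := u) (w := v j)
    rw [dvix] at a1
    rw [dxu, duj] at a2
    omega
  have hw2 : max i (j+1) - min i (j+1) ≤ 3 := by
    rw [← hpath i hiI.1 (j+1) hj1I.1]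
    have a1 := hconn.dist_triangle (u := v i) (v := x) (w := v (j+1))
    have a2 := hconn.dist_triangle (u := x) (v := u) (w := v (j+1))
    rw [dvix] at a1
    rw [dxu, duj1] at a2
    omega
  -- the path vertex set
  set T : Finset V := (Finset.Icc 1 (d+1)).image v with hT
  have hxT : x ∉ T := by
    rw [hT]
    intro h
    obtain ⟨a, ha, hva⟩ := Finset.mem_image.mp h
    exact hxP a ha hva.symm
  have huT : u ∉ T := by
    rw [hT]
    intro h
    obtain ⟨a, ha, hva⟩ := Finset.mem_image.mp h
    exact huP a ha hva.symm
  have hxu : u ≠ x := (hadj.ne).symm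
  -- matrix facts
  set M : Matrix V V ℝ := G.adjMatrix ℝ + 1 with hM
  have hMdiag : ∀ w : V, M w w = 1 := by
    intro w
    simp [hM, Matrix.add_apply, Matrix.one_apply]
  have hMne : ∀ w z : V, w ≠ z → M w z = if G.Adj w z then 1 else 0 := by
    intro w z h
    simp [hM, Matrix.add_apply, Matrix.one_apply, h]
  have hMpath : ∀ a ∈ Finset.Icc 1 (d+1), ∀ b ∈ Finset.Icc 1 (d+1),
      M (v a) (v b) = if b = a - 1 ∨ b = a ∨ b = a + 1 then 1 else 0 := by
    intro a ha b hb
    have ha' := Finset.mem_Icc.mp ha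
    have hb' := Finset.mem_Icc.mp hb
    rcases eq_or_ne (v a) (v b) with hvv | hvv
    · have hab : a = b := vinj a ha b hb hvv
      rw [hvv, hMdiag, if_pos (Or.inr (Or.inl hab.symm))]
    · have hab : a ≠ b := fun h => hvv (h ▸ rfl)
      rw [hMne _ _ hvv]
      by_cases hc : G.Adj (v a) (v b)
      · have := (vadj a ha b hb).mp hc
        rw [if_pos hc, if_pos (by omega)]
      · have : ¬(b = a + 1 ∨ a = b + 1) := fun h => hc ((vadj a ha b hb).mpr h)
        rw [if_neg hc, if_neg (by omega)]
  -- the coefficient extraction function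
  set gg : (V → ℝ) → ℕ → ℝ :=
    fun y c => if c ∈ Finset.Icc 1 (d+1) then y (v c) else 0 with hgg
  have hsum3 : ∀ (y : V → ℝ), ∀ a ∈ Finset.Icc 1 (d+1),
      ∑ b ∈ Finset.Icc 1 (d+1), M (v a) (v b) * y (v b)
        = gg y (a-1) + gg y a + gg y (a+1) := by
    intro y a ha
    have ha' := Finset.mem_Icc.mp ha
    have hterm : ∀ b ∈ Finset.Icc 1 (d+1), M (v a) (v b) * y (v b)
        = ((if b = a - 1 then y (v b) else 0) + (if b = a then y (v b) else 0))
          + (if b = a + 1 then y (v b) else 0) := by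
      intro b hb
      have hb' := Finset.mem_Icc.mp hb
      rw [hMpath a ha b hb]
      split_ifs <;> first | ring1 | (exfalso; omega)
    rw [Finset.sum_congr rfl hterm, Finset.sum_add_distrib, Finset.sum_add_distrib,
      Finset.sum_ite_eq', Finset.sum_ite_eq', Finset.sum_ite_eq']
  -- summation over support
  have hrow : ∀ yy : V → ℝ, (∀ z, z ∉ T → z ≠ x → yy z = 0) → ∀ w : V,
      M.mulVec yy w = M w x * yy x + ∑ a ∈ Finset.Icc 1 (d+1), M w (v a) * yy (v a) := by
    intro yy hsupp w
    have h1 : M.mulVec yy w = ∑ z ∈ insert x T, M w z * yy z := by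
      have hdef : M.mulVec yy w = ∑ z : V, M w z * yy z := rfl
      rw [hdef]
      symm
      apply Finset.sum_subset (Finset.subset_univ _)
      intro z _ hz
      have hz1 : z ∉ T := fun h => hz (Finset.mem_insert_of_mem h)
      have hz2 : z ≠ x := fun h => hz (h ▸ Finset.mem_insert_self x T)
      rw [hsupp z hz1 hz2, mul_zero]
    rw [h1, Finset.sum_insert hxT, hT,
      Finset.sum_image (fun a ha b hb hvv => vinj a ha b hb hvv)]
  -- the kernel of M restricted to functions supported on the path is trivial
  have hker0 : ∀ yy : V → ℝ, Matrix.toLin' M yy = 0 → (∀ z, z ∉ T → yy z = 0) → yy = 0 := by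
    intro yy hy0 hsupp
    have hmv : M.mulVec yy = 0 := by rwa [Matrix.toLin'_apply] at hy0
    have hrec : ∀ a, 1 ≤ a → a ≤ d+1 → gg yy (a-1) + gg yy a + gg yy (a+1) = 0 := by
      intro a h1 h2
      have ha : a ∈ Finset.Icc 1 (d+1) := Finset.mem_Icc.mpr ⟨h1, h2⟩
      have h := congrFun hmv (v a)
      rw [hrow yy (fun z hz _ => hsupp z hz) (v a), hsum3 yy a ha] at h
      simp only [Pi.zero_apply] at h
      rw [hsupp x hxT, mul_zero, zero_add] at h
      exact h
    have h0 : gg yy 0 = 0 := by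
      simp only [gg]
      rw [if_neg (by rw [Finset.mem_Icc]; omega)]
    have hall := solveRec (gg yy) (d+1) h0 hrec
    have hk1 : gg yy (d+2) = 0 := by
      simp only [gg]
      rw [if_neg (by rw [Finset.mem_Icc]; omega)]
    have heps : epsAux (d+2) = -1 := epsAux_val2 _ (by omega)
    have hg1 : gg yy 1 = 0 := by
      have hh := hall (d+2) (by omega)
      rw [hk1, heps] at hh
      linarith
    funext z
    by_cases hz : z ∈ T
    · rw [hT] at hz
      obtain ⟨a, ha, rfl⟩ := Finset.mem_image.mp hz
      have ha' := Finset.mem_Icc.mp ha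
      have hh := hall a (by omega)
      rw [hg1, zero_mul] at hh
      have : gg yy a = yy (v a) := by simp only [gg]; rw [if_pos ha]
      rw [this] at hh
      simpa using hh
    · simpa using hsupp z hz
  -- dimension counting: restriction to off-path coordinates is surjective on the kernel
  set K := LinearMap.ker (Matrix.toLin' M) with hK
  set φ : K →ₗ[ℝ] ({z : V // z ∉ T} → ℝ) :=
    (LinearMap.funLeft ℝ ℝ (fun c : {z : V // z ∉ T} => (c : V))).comp K.subtype with hφ
  have hφapp : ∀ (yy : K) (c : {z : V // z ∉ T}), φ yy c = (yy : V → ℝ) c := by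
    intro yy c
    simp [hφ, LinearMap.funLeft_apply]
  have hφinj : Function.Injective φ := by
    intro y1 y2 heq
    have hker : Matrix.toLin' M ((y1 : V → ℝ) - (y2 : V → ℝ)) = 0 := by
      rw [map_sub, LinearMap.mem_ker.mp y1.2, LinearMap.mem_ker.mp y2.2, sub_zero]
    have hsupp : ∀ z, z ∉ T → ((y1 : V → ℝ) - (y2 : V → ℝ)) z = 0 := by
      intro z hz
      have h := congrFun heq ⟨z, hz⟩
      rw [hφapp, hφapp] at h
      simp [h]
    have := hker0 _ hker hsupp
    have hveq : (y1 : V → ℝ) = (y2 : V → ℝ) := by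
      have := sub_eq_zero.mp this
      exact this
    exact Subtype.ext hveq
  have hTcard : T.card = d + 1 := by
    rw [hT, Finset.card_image_of_injOn (fun a ha b hb h => vinj a ha b hb h)]
    simp
  have hn2 : d + 2 ≤ n := by
    have : (insert x T).card ≤ Fintype.card V := Finset.card_le_univ _
    rw [Finset.card_insert_of_notMem hxT, hTcard, hcard] at this
    omega
  have hcardC : Fintype.card {z : V // z ∉ T} = n - d - 1 := by
    have h1 : Fintype.card {z : V // z ∈ T} = d + 1 := by
      rw [← hTcard]
      exact (Fintype.card_congr (Equiv.refl _)).trans (Fintype.card_coe T)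
    rw [Fintype.card_subtype_compl, h1, hcard]
    omega
  have hφsurj : Function.Surjective φ := by
    have hfr : Module.finrank ℝ K = Module.finrank ℝ ({z : V // z ∉ T} → ℝ) := by
      rw [Module.finrank_fintype_fun_eq_card, hcardC]
      rw [hK, ← hmult]
      rfl
    exact (LinearMap.injective_iff_surjective_of_finrank_eq_finrank hfr).mp hφinj
  -- obtain the kernel vector supported on path ∪ {x}
  obtain ⟨Y, hY⟩ := hφsurj (fun c => if (c : V) = x then (1:ℝ) else 0)
  set y : V → ℝ := (Y : V → ℝ) with hy
  have hyval : ∀ z, (hz : z ∉ T) → y z = if z = x then 1 else 0 := by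
    intro z hz
    have h := congrFun hY ⟨z, hz⟩
    rw [hφapp] at h
    exact h
  have hyx : y x = 1 := by rw [hyval x hxT, if_pos rfl]
  have hysupp : ∀ z, z ∉ T → z ≠ x → y z = 0 := by
    intro z hz hzx
    rw [hyval z hz, if_neg hzx]
  have hmv : M.mulVec y = 0 := by
    have h := LinearMap.mem_ker.mp Y.2
    rwa [Matrix.toLin'_apply] at h
  -- row equation at x
  have hrowx : y (v i) = -1 := by
    have h := congrFun hmv x
    rw [hrow y hysupp x] at h
    simp only [Pi.zero_apply] at h
    have hterm : ∀ a ∈ Finset.Icc 1 (d+1), M x (v a) * y (v a)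
        = if a = i then y (v a) else 0 := by
      intro a ha
      rw [hMne x (v a) (hxP a ha)]
      by_cases hc : a = i
      · rw [if_pos ((hAdjx a ha).mpr hc), if_pos hc, one_mul]
      · rw [if_neg (fun hh => hc ((hAdjx a ha).mp hh)), if_neg hc, zero_mul]
    rw [Finset.sum_congr rfl hterm, Finset.sum_ite_eq', if_pos hiI.1, hMdiag, hyx] at h
    linarith
  -- row equation at u
  have hrowu : y (v j) + y (v (j+1)) = -1 := by
    have h := congrFun hmv u
    rw [hrow y hysupp u] at h
    simp only [Pi.zero_apply] at h
    have hterm : ∀ a ∈ Finset.Icc 1 (d+1), M u (v a) * y (v a)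
        = (if a = j then y (v a) else 0) + (if a = j + 1 then y (v a) else 0) := by
      intro a ha
      rw [hMne u (v a) (huP a ha)]
      by_cases hc : G.Adj u (v a)
      · have hor := (hAdju a ha).mp hc
        rw [if_pos hc, one_mul]
        rcases hor with rfl | rfl
        · rw [if_pos rfl, if_neg (by omega)];  ring
        · rw [if_neg (by omega), if_pos rfl];  ring
      · have : ¬(a = j ∨ a = j + 1) := fun hh => hc ((hAdju a ha).mpr hh)
        rw [if_neg hc, zero_mul, if_neg (by omega), if_neg (by omega)]
        ring
    rw [Finset.sum_congr rfl hterm, Finset.sum_add_distrib, Finset.sum_ite_eq',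
      Finset.sum_ite_eq', if_pos hjI.1, if_pos hj1I.1] at h
    have hMux : M u x = 1 := by rw [hMne u x hxu, if_pos hadj.symm]
    rw [hMux, one_mul, hyx] at h
    linarith
  -- row equations along the path
  have hrecfull : ∀ a, 1 ≤ a → a ≤ d+1 →
      (if a = i then (1:ℝ) else 0) + (gg y (a-1) + gg y a + gg y (a+1)) = 0 := by
    intro a h1 h2
    have ha : a ∈ Finset.Icc 1 (d+1) := Finset.mem_Icc.mpr ⟨h1, h2⟩
    have h := congrFun hmv (v a)
    rw [hrow y hysupp (v a), hsum3 y a ha] at h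
    simp only [Pi.zero_apply] at h
    have hvx : M (v a) x = if a = i then 1 else 0 := by
      rw [hMne (v a) x (Ne.symm (hxP a ha))]
      by_cases hc : a = i
      · rw [if_pos (((hAdjx a ha).mpr hc).symm), if_pos hc]
      · rw [if_neg (fun hh => hc ((hAdjx a ha).mp hh.symm)), if_neg hc]
    rw [hvx, hyx, mul_one] at h
    exact h
  -- values of gg y
  have hgval : ∀ a, 1 ≤ a → a ≤ d + 1 → gg y a = y (v a) := by
    intro a h1 h2
    simp only [gg]
    rw [if_pos (Finset.mem_Icc.mpr ⟨h1, h2⟩)]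
  have hgout : ∀ a, (a = 0 ∨ d + 2 ≤ a) → gg y a = 0 := by
    intro a ha
    simp only [gg]
    rw [if_neg (by rw [Finset.mem_Icc]; omega)]
  have hgi : gg y i = -1 := by rw [hgval i hbi.1 hbi.2]; exact hrowx
  -- solve the recurrence to the left of i
  have hrecL : ∀ a, 1 ≤ a → a ≤ i - 1 → gg y (a-1) + gg y a + gg y (a+1) = 0 := by
    intro a h1 h2
    have := hrecfull a h1 (by omega)
    rw [if_neg (by omega)] at this
    linarith
  have hL := solveRec (gg y) (i-1) (hgout 0 (Or.inl rfl)) hrecL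
  -- solve the recurrence to the right of i
  have hrecR : ∀ m, 1 ≤ m → m ≤ d + 1 - i →
      gg y (d + 2 - (m-1)) + gg y (d + 2 - m) + gg y (d + 2 - (m+1)) = 0 := by
    intro m h1 h2
    have ha1 : d + 2 - (m - 1) = (d + 2 - m) + 1 := by omega
    have ha2 : d + 2 - (m + 1) = (d + 2 - m) - 1 := by omega
    have := hrecfull (d + 2 - m) (by omega) (by omega)
    rw [if_neg (by omega)] at this
    rw [ha1, ha2]
    linarith
  have hR := solveRec (fun m => gg y (d + 2 - m)) (d + 1 - i)
    (by simpa using hgout (d+2) (Or.inr (by omega))) hrecR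
  have hRa : ∀ a, i ≤ a → a ≤ d + 1 →
      gg y a = gg y (d + 1) * epsAux (d + 2 - a) := by
    intro a h1 h2
    have hh := hR (d + 2 - a) (by omega)
    rw [show d + 2 - (d + 2 - a) = a from by omega, show d + 2 - 1 = d + 1 from by omega] at hh
    exact hh
  -- i ≡ 1 (mod 3)
  have hLi : gg y i = gg y 1 * epsAux i := hL i (by omega)
  have hRi : gg y i = gg y (d+1) * epsAux (d + 2 - i) := hRa i le_rfl hbi.2
  have hi3 : i % 3 = 1 := by
    have hcase : i % 3 = 0 ∨ i % 3 = 1 ∨ i % 3 = 2 := by omega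
    rcases hcase with hc | hc | hc
    · exfalso
      have : epsAux i = 0 := epsAux_val0 i hc
      rw [this, mul_zero] at hLi
      rw [hgi] at hLi
      norm_num at hLi
    · exact hc
    · exfalso
      have hm : (d + 2 - i) % 3 = 0 := by omega
      have : epsAux (d + 2 - i) = 0 := epsAux_val0 _ hm
      rw [this, mul_zero] at hRi
      rw [hgi] at hRi
      norm_num at hRi
  have hg1 : gg y 1 = -1 := by
    have : epsAux i = 1 := epsAux_val1 i hi3
    rw [this, mul_one] at hLi
    rw [hgi] at hLi
    exact hLi.symm
  have hgd1 : gg y (d+1) = -1 := by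
    have hm : (d + 2 - i) % 3 = 1 := by omega
    have : epsAux (d + 2 - i) = 1 := epsAux_val1 _ hm
    rw [this, mul_one] at hRi
    rw [hgi] at hRi
    exact hRi.symm
  -- the cross equation
  have hju : gg y j + gg y (j+1) = -1 := by
    rw [hgval j hbj.1 hbj.2, hgval (j+1) hbj1.1 hbj1.2]
    exact hrowu
  -- case analysis over the window
  have hcases : (j = i ∨ j = i - 1) ∨ (j + 2 = i ∨ j + 3 = i ∨ j = i + 1 ∨ j = i + 2) := by
    clear * - hw1 hw2 hbi hbj hbj1
    omega
  rcases hcases with hc | hc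
  · exact hc
  exfalso
  rcases hc with hc | hc | hc | hc
  · -- j = i - 2
    have e1 : epsAux j = -1 := epsAux_val2 j (by clear * - hc hi3 hd3 hbi hbj hbj1; omega)
    have e2 : epsAux (j+1) = 0 := epsAux_val0 (j+1) (by clear * - hc hi3 hd3 hbi hbj hbj1; omega)
    have v1 := hL j (by clear * - hc hi3 hd3 hbi hbj hbj1; omega)
    have v2 := hL (j+1) (by clear * - hc hi3 hd3 hbi hbj hbj1; omega)
    rw [e1, hg1] at v1
    rw [e2, hg1] at v2
    rw [v1, v2] at hju
    norm_num at hju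
  · -- j = i - 3
    have e1 : epsAux j = 1 := epsAux_val1 j (by clear * - hc hi3 hd3 hbi hbj hbj1; omega)
    have e2 : epsAux (j+1) = -1 := epsAux_val2 (j+1) (by clear * - hc hi3 hd3 hbi hbj hbj1; omega)
    have v1 := hL j (by clear * - hc hi3 hd3 hbi hbj hbj1; omega)
    have v2 := hL (j+1) (by clear * - hc hi3 hd3 hbi hbj hbj1; omega)
    rw [e1, hg1] at v1
    rw [e2, hg1] at v2
    rw [v1, v2] at hju
    norm_num at hju
  · -- j = i + 1
    have e1 : epsAux (d + 2 - j) = 0 := epsAux_val0 _ (by clear * - hc hi3 hd3 hbi hbj hbj1; omega)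
    have e2 : epsAux (d + 2 - (j+1)) = -1 := epsAux_val2 _ (by clear * - hc hi3 hd3 hbi hbj hbj1; omega)
    have v1 := hRa j (by clear * - hc hi3 hd3 hbi hbj hbj1; omega) hbj.2
    have v2 := hRa (j+1) (by clear * - hc hi3 hd3 hbi hbj hbj1; omega) hbj1.2
    rw [e1, hgd1] at v1
    rw [e2, hgd1] at v2
    rw [v1, v2] at hju
    norm_num at hju
  · -- j = i + 2
    have e1 : epsAux (d + 2 - j) = -1 := epsAux_val2 _ (by clear * - hc hi3 hd3 hbi hbj hbj1; omega)
    have e2 : epsAux (d + 2 - (j+1)) = 1 := epsAux_val1 _ (by clear * - hc hi3 hd3 hbi hbj hbj1; omega)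
    have v1 := hRa j (by clear * - hc hi3 hd3 hbi hbj hbj1; omega) hbj.2
    have v2 := hRa (j+1) (by clear * - hc hi3 hd3 hbi hbj hbj1; omega) hbj1.2
    rw [e1, hgd1] at v1
    rw [e2, hgd1] at v2
    rw [v1, v2] at hju
    norm_num at hju
end

section
/- Let G be a finite simple connected C-canonical graph of order n and diameter d with d ≡ 1 (mod 3) and m_G(−1) = n − d − 1, and let P = v_1 v_2 ⋯ v_{d+1} be a diameter path of G. Then every vertex of G is at distance at most 2 from the vertex set of P. -/
attribute [local instance] Classical.propDecidable

lemma keyLemma {V : Type*} [Fintype V] (G : SimpleGraph V) (d : ℕ) (v : ℕ → V)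
    (hadj : ∀ i, 1 ≤ i → i ≤ d → G.Adj (v i) (v (i + 1)))
    (hfar : ∀ i j, 1 ≤ i → 1 ≤ j → j ≤ d + 1 → i + 2 ≤ j →
      ¬ G.Adj (v i) (v j) ∧ v i ≠ v j)
    (z w1 w2 : V)
    (hzw2 : G.Adj z w2) (hw2w1 : G.Adj w2 w1)
    (hzw1 : ¬ G.Adj z w1) (hzw1ne : z ≠ w1)
    (hzv : ∀ i, 1 ≤ i → i ≤ d + 1 → ¬ G.Adj z (v i) ∧ z ≠ v i)
    (hw2v : ∀ i, 1 ≤ i → i ≤ d + 1 → ¬ G.Adj w2 (v i) ∧ w2 ≠ v i) :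
    multNegOne G + (d + 2) ≤ Fintype.card V := by
  set M : Matrix V V ℝ := G.adjMatrix ℝ + 1 with hM
  have Mdiag : ∀ x : V, M x x = 1 := by intro x; simp [hM, Matrix.one_apply]
  have Madj : ∀ x y : V, G.Adj x y → M x y = 1 := by
    intro x y h; simp [hM, Matrix.one_apply, h, h.ne]
  have Mzero : ∀ x y : V, ¬ G.Adj x y → x ≠ y → M x y = 0 := by
    intro x y h h2; simp [hM, Matrix.one_apply, h, h2]
  -- the family of vertices
  set U : ℕ → V := fun m =>
    if m ≤ d then v (m + 1) else if m = d + 1 then w1 else if m = d + 2 then w2 else z with hU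
  have hU1 : ∀ m, m ≤ d → U m = v (m + 1) := by intro m h; simp [hU, h]
  have hUw1 : U (d + 1) = w1 := by simp [hU]
  have hUw2 : U (d + 2) = w2 := by
    have h1 : ¬ (d + 2 ≤ d) := by omega
    have h2 : d + 2 ≠ d + 1 := by omega
    simp [hU, h1, h2]
  have hUz : U (d + 3) = z := by
    have h1 : ¬ (d + 3 ≤ d) := by omega
    have h2 : d + 3 ≠ d + 1 := by omega
    have h3 : d + 3 ≠ d + 2 := by omega
    simp [hU, h1, h2, h3]
  set T : Matrix V (Fin (d + 4)) ℝ := fun x k => M x (U k.val) with hT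
  -- range of T is contained in range of M
  have hrange : LinearMap.range (Matrix.toLin' T) ≤ LinearMap.range (Matrix.toLin' M) := by
    rintro _ ⟨a, rfl⟩
    refine ⟨fun y => ∑ k : Fin (d + 4), if y = U k.val then a k else 0, ?_⟩
    ext x
    simp only [Matrix.toLin'_apply, Matrix.mulVec, dotProduct]
    simp only [Finset.mul_sum]
    rw [Finset.sum_comm]
    refine Finset.sum_congr rfl fun k _ => ?_
    simp only [mul_ite, mul_zero]
    rw [Finset.sum_ite_eq' Finset.univ (U k.val) (fun y => M x y * a k)]
    simp [hT]
  -- the kernel of T has dimension at most 2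
  have hker2 : Module.finrank ℝ (LinearMap.ker (Matrix.toLin' T)) ≤ 2 := by
    have h2 : Module.finrank ℝ (ℝ × ℝ) = 2 := by simp
    rw [← h2]
    refine LinearMap.finrank_le_finrank_of_injective
      (f := ((LinearMap.proj (⟨0, by omega⟩ : Fin (d + 4))).prod
             (LinearMap.proj (⟨d + 2, by omega⟩ : Fin (d + 4)))).domRestrict _) ?_
    refine (injective_iff_map_eq_zero _).mpr ?_
    rintro ⟨a, haker⟩ hzero
    simp only [LinearMap.domRestrict_apply, LinearMap.prod_apply, Function.prod,
      LinearMap.proj_apply, Prod.mk_eq_zero] at hzero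
    rw [LinearMap.mem_ker] at haker
    set A : ℕ → ℝ := fun m => if h : m < d + 4 then a ⟨m, h⟩ else 0 with hA
    have hAval : ∀ k : Fin (d + 4), A k.val = a k := by
      intro k; simp only [hA]; rw [dif_pos k.isLt]
    have hA0 : A 0 = 0 := by
      rw [show (0 : ℕ) = (⟨0, by omega⟩ : Fin (d + 4)).val from rfl, hAval]; exact hzero.1
    have hAd2 : A (d + 2) = 0 := by
      rw [show d + 2 = (⟨d + 2, by omega⟩ : Fin (d + 4)).val from rfl, hAval]; exact hzero.2
    have hsum : ∀ x : V, ∑ m ∈ Finset.range (d + 4), M x (U m) * A m = 0 := by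
      intro x
      have h := congrFun haker x
      rw [Matrix.toLin'_apply] at h
      have h2 : (T.mulVec a) x = ∑ k : Fin (d + 4), M x (U k.val) * A k.val := by
        simp only [Matrix.mulVec, dotProduct, hT]
        exact Finset.sum_congr rfl fun k _ => by rw [hAval]
      rw [h2] at h
      rw [← Fin.sum_univ_eq_sum_range (fun m => M x (U m) * A m)]
      exact h
    -- evaluation at z
    have hAd3 : A (d + 3) = 0 := by
      have h := hsum z
      rw [Finset.sum_range_succ, Finset.sum_range_succ] at h
      rw [Finset.sum_eq_zero (fun m hm => ?_)] at h
      · rw [hUw2, hUz, Madj z w2 hzw2, Mdiag, one_mul, one_mul, zero_add, hAd2, zero_add] at h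
        exact h
      · rw [Finset.mem_range] at hm
        rcases Nat.lt_or_ge m (d + 1) with hmd | hmd
        · obtain ⟨hna, hne⟩ := hzv (m + 1) (by omega) (by omega)
          rw [hU1 m (by omega), Mzero z (v (m + 1)) hna hne, zero_mul]
        · have hmeq : m = d + 1 := by omega
          rw [hmeq, hUw1, Mzero z w1 hzw1 hzw1ne, zero_mul]
    -- evaluation at w2
    have hAd1 : A (d + 1) = 0 := by
      have h := hsum w2
      rw [Finset.sum_range_succ, Finset.sum_range_succ, Finset.sum_range_succ] at h
      rw [Finset.sum_eq_zero (fun m hm => ?_)] at h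
      · rw [hUw1, hUw2, hUz, Madj w2 w1 hw2w1, Mdiag, Madj w2 z hzw2.symm,
          one_mul, one_mul, one_mul, zero_add, hAd2, hAd3, add_zero, add_zero] at h
        exact h
      · rw [Finset.mem_range] at hm
        obtain ⟨hna, hne⟩ := hw2v (m + 1) (by omega) (by omega)
        rw [hU1 m (by omega), Mzero w2 (v (m + 1)) hna hne, zero_mul]
    -- evaluation at path vertices
    have hpathsum : ∀ j, 1 ≤ j → j ≤ d + 1 →
        ∑ m ∈ Finset.range (d + 1), M (v j) (U m) * A m = 0 := by
      intro j h1 h2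
      have h := hsum (v j)
      rw [Finset.sum_range_succ, Finset.sum_range_succ, Finset.sum_range_succ,
        hAd1, hAd2, hAd3, mul_zero, mul_zero, mul_zero, add_zero, add_zero, add_zero] at h
      exact h
    -- induction along the path
    have hApath : ∀ m, m ≤ d → A m = 0 := by
      intro m
      induction m using Nat.strong_induction_on with
      | _ m ih =>
        intro hmd
        rcases Nat.eq_zero_or_pos m with hm0 | hm1
        · rw [hm0]; exact hA0
        · have h := hpathsum m hm1 (by omega)
          rw [Finset.sum_eq_single m (fun b hb hbm => ?_) (fun hm => ?_)] at h
          · rw [hU1 m hmd, Madj (v m) (v (m + 1)) (hadj m hm1 hmd), one_mul] at h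
            exact h
          · rw [Finset.mem_range] at hb
            rcases Nat.lt_or_ge b m with hbm' | hbm'
            · rw [ih b hbm' (by omega), mul_zero]
            · have hbgt : m + 2 ≤ b + 1 := by omega
              obtain ⟨hna, hne⟩ := hfar m (b + 1) hm1 (by omega) (by omega) hbgt
              rw [hU1 b (by omega), Mzero (v m) (v (b + 1)) hna hne, zero_mul]
          · exact absurd (Finset.mem_range.mpr (by omega)) hm
    -- conclude a = 0
    have ha : a = 0 := by
      funext k
      have : a k = A k.val := (hAval k).symm
      rw [this]
      rcases Nat.lt_or_ge k.val (d + 1) with hk | hk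
      · exact hApath k.val (by omega)
      · have hlt := k.isLt
        have : k.val = d + 1 ∨ k.val = d + 2 ∨ k.val = d + 3 := by omega
        rcases this with h | h | h <;> rw [h]
        · exact hAd1
        · exact hAd2
        · exact hAd3
    exact Subtype.ext ha
  -- rank computations
  have hcardV : Module.finrank ℝ (V → ℝ) = Fintype.card V := by simp
  have hcardF : Module.finrank ℝ (Fin (d + 4) → ℝ) = d + 4 := by simp
  have hrnM := LinearMap.finrank_range_add_finrank_ker (Matrix.toLin' M)
  have hrnT := LinearMap.finrank_range_add_finrank_ker (Matrix.toLin' T)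
  rw [hcardV] at hrnM
  rw [hcardF] at hrnT
  have hmono := Submodule.finrank_mono hrange
  have hmn : multNegOne G = Module.finrank ℝ (LinearMap.ker (Matrix.toLin' M)) := rfl
  omega

theorem stmt_16 {V : Type*} [Fintype V] (G : SimpleGraph V) (n d : ℕ)
    (hconn : G.Connected)
    (hcard : Fintype.card V = n)
    (hcanon : ∀ a b : V, (∀ z : V, (z = a ∨ G.Adj a z) ↔ (z = b ∨ G.Adj b z)) → a = b)
    (hd3 : d % 3 = 1)
    (hdiam : ∀ a b : V, G.dist a b ≤ d)
    (v : ℕ → V)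
    (hpath : ∀ i ∈ Finset.Icc 1 (d + 1), ∀ j ∈ Finset.Icc 1 (d + 1),
      G.dist (v i) (v j) = max i j - min i j)
    (hmult : multNegOne G = n - d - 1) :
    ∀ z : V, ∃ i ∈ Finset.Icc 1 (d + 1), G.dist z (v i) ≤ 2 := by
  intro z
  by_contra hz
  push_neg at hz
  have hdistv : ∀ i j, 1 ≤ i → i ≤ d + 1 → 1 ≤ j → j ≤ d + 1 →
      G.dist (v i) (v j) = max i j - min i j := fun i j h1 h2 h3 h4 =>
    hpath i (Finset.mem_Icc.mpr ⟨h1, h2⟩) j (Finset.mem_Icc.mpr ⟨h3, h4⟩)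
  have hadj : ∀ i, 1 ≤ i → i ≤ d → G.Adj (v i) (v (i + 1)) := by
    intro i h1 h2
    rw [← SimpleGraph.dist_eq_one_iff_adj]
    have := hdistv i (i + 1) h1 (by omega) (by omega) (by omega)
    omega
  have hfar : ∀ i j, 1 ≤ i → 1 ≤ j → j ≤ d + 1 → i + 2 ≤ j →
      ¬ G.Adj (v i) (v j) ∧ v i ≠ v j := by
    intro i j h1 h2 h3 h4
    have hd : G.dist (v i) (v j) = max i j - min i j := hdistv i j h1 (by omega) h2 h3
    constructor
    · intro h
      have := SimpleGraph.dist_eq_one_iff_adj.mpr h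
      omega
    · intro h
      rw [h, SimpleGraph.dist_self] at hd
      omega
  have hzfar : ∀ i, 1 ≤ i → i ≤ d + 1 → 3 ≤ G.dist z (v i) := by
    intro i h1 h2
    have := hz i (Finset.mem_Icc.mpr ⟨h1, h2⟩)
    omega
  have hzv : ∀ i, 1 ≤ i → i ≤ d + 1 → ¬ G.Adj z (v i) ∧ z ≠ v i := by
    intro i h1 h2
    have h3 := hzfar i h1 h2
    constructor
    · intro h
      have := SimpleGraph.dist_eq_one_iff_adj.mpr h
      omega
    · intro h
      rw [h, SimpleGraph.dist_self] at h3
      omega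
  have hne : G.dist z (v 1) ≠ 0 := by have := hzfar 1 le_rfl (by omega); omega
  obtain ⟨p, hp⟩ := SimpleGraph.exists_walk_of_dist_ne_zero hne
  cases p with
  | nil =>
    simp only [SimpleGraph.Walk.length_nil] at hp
    have := hzfar 1 le_rfl (by omega)
    omega
  | @cons _ b _ hab q =>
    cases q with
    | nil =>
      simp only [SimpleGraph.Walk.length_cons, SimpleGraph.Walk.length_nil] at hp
      have := hzfar 1 le_rfl (by omega)
      omega
    | @cons _ c _ hbc r =>
      simp only [SimpleGraph.Walk.length_cons] at hp
      have hrd : G.dist c (v 1) ≤ r.length := SimpleGraph.dist_le r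
      have h31 := hzfar 1 le_rfl (by omega)
      have hzw1 : ¬ G.Adj z c := by
        intro h
        have h1 := SimpleGraph.dist_eq_one_iff_adj.mpr h
        have h2 := hconn.dist_triangle (u := z) (v := c) (w := v 1)
        omega
      have hzw1ne : z ≠ c := by
        intro h
        have heq : G.dist z (v 1) = G.dist c (v 1) := by rw [h]
        omega
      have hw2v : ∀ i, 1 ≤ i → i ≤ d + 1 → ¬ G.Adj b (v i) ∧ b ≠ v i := by
        intro i h1 h2
        have h3 := hzfar i h1 h2
        have hzb : G.dist z b = 1 := SimpleGraph.dist_eq_one_iff_adj.mpr hab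
        have htri := hconn.dist_triangle (u := z) (v := b) (w := v i)
        constructor
        · intro h
          have := SimpleGraph.dist_eq_one_iff_adj.mpr h
          omega
        · intro h
          rw [h] at hzb
          omega
      have hkey := keyLemma G d v hadj hfar z c b hab hbc hzw1 hzw1ne hzv hw2v
      have hcard2 : d + 1 ≤ Fintype.card V := by
        have hinj : Set.InjOn v (Finset.Icc 1 (d + 1)) := by
          intro i hi j hj hij
          simp only [Finset.coe_Icc, Set.mem_Icc] at hi hj
          have := hdistv i j hi.1 hi.2 hj.1 hj.2
          rw [hij, SimpleGraph.dist_self] at this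
          omega
        have := Finset.card_le_card_of_injOn v (fun a _ => Finset.mem_univ (v a)) hinj
        simpa using this
      rw [hcard] at hkey hcard2
      rw [hmult] at hkey
      omega
end

section
/- Let G be a finite simple connected C-canonical graph of order n and diameter d with d ≡ 1 (mod 3) and m_G(−1) = n − d − 1, and let P = v_1 v_2 ⋯ v_{d+1} be a diameter path of G. If x is a vertex not on P whose unique neighbor on P is v_i, then i ≡ 0 (mod 3), and the induced subgraph of G on V(P) ∪ {x} has −1 as an eigenvalue of multiplicity exactly 1. -/
attribute [local instance] Classical.propDecidable

/-- pattern before the pendant vertex -/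
def qseq : ℕ → ℝ := fun k => if k % 3 = 1 then 1 else if k % 3 = 2 then -1 else 0

/-- pattern after the pendant vertex (depends on `i % 3`) -/
def rseq (i : ℕ) : ℕ → ℝ := fun k =>
  if i % 3 = 1 then (if k % 3 = 1 then 1 else if k % 3 = 2 then 0 else -1)
  else (if k % 3 = 1 then 2 else if k % 3 = 2 then -1 else -1)

/-- solution pattern for the path with a pendant at position `i` -/
def Pseq (i : ℕ) : ℕ → ℝ := fun k => if k ≤ i then qseq k else rseq i k

lemma qseq_add (k : ℕ) (h : 1 ≤ k) : qseq (k+1) + qseq k + qseq (k-1) = 0 := by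
  have h3 : k % 3 = 0 ∨ k % 3 = 1 ∨ k % 3 = 2 := by omega
  rcases h3 with h3 | h3 | h3 <;>
    · have h1 : (k+1) % 3 = (k+1) % 3 := rfl
      have e1 : (k+1) % 3 = 0 ∨ (k+1) % 3 = 1 ∨ (k+1) % 3 = 2 := by omega
      simp only [qseq]
      rcases e1 with e1 | e1 | e1 <;> first
        | (exfalso; omega)
        | (have e2 : (k-1) % 3 = 0 ∨ (k-1) % 3 = 1 ∨ (k-1) % 3 = 2 := by omega
           rcases e2 with e2 | e2 | e2 <;> first
            | (exfalso; omega)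
            | (rw [h3, e1, e2]; norm_num))
  
lemma rseq_add (i k : ℕ) (h : 1 ≤ k) : rseq i (k+1) + rseq i k + rseq i (k-1) = 0 := by
  have h3 : k % 3 = 0 ∨ k % 3 = 1 ∨ k % 3 = 2 := by omega
  by_cases hi : i % 3 = 1 <;>
  rcases h3 with h3 | h3 | h3 <;>
    · have e1 : (k+1) % 3 = 0 ∨ (k+1) % 3 = 1 ∨ (k+1) % 3 = 2 := by omega
      simp only [rseq, hi, if_true, if_false]
      rcases e1 with e1 | e1 | e1 <;> first
        | (exfalso; omega)
        | (have e2 : (k-1) % 3 = 0 ∨ (k-1) % 3 = 1 ∨ (k-1) % 3 = 2 := by omega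
           rcases e2 with e2 | e2 | e2 <;> first
            | (exfalso; omega)
            | (rw [h3, e1, e2]; norm_num))

lemma qr_eq (i : ℕ) (hi : i % 3 ≠ 0) : qseq i = rseq i i := by
  have h3 : i % 3 = 1 ∨ i % 3 = 2 := by omega
  rcases h3 with h3 | h3 <;> simp only [qseq, rseq, h3] <;> norm_num

lemma Pseq_eq_r (i m : ℕ) (hi : i % 3 ≠ 0) (him : i ≤ m) : Pseq i m = rseq i m := by
  unfold Pseq
  split
  · next h => rw [le_antisymm h him]; exact qr_eq i hi
  · rfl

lemma Pseq_one (i : ℕ) (h1 : 1 ≤ i) : Pseq i 1 = 1 := by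
  simp [Pseq, h1, qseq]

lemma Pseq_rec (i : ℕ) (hi : i % 3 ≠ 0) (h1i : 1 ≤ i) (k : ℕ) (h2 : 2 ≤ k) :
    Pseq i (k+1) = -Pseq i k - Pseq i (k-1) + (if k = i then Pseq i i else 0) := by
  have h3 : i % 3 = 1 ∨ i % 3 = 2 := by omega
  rcases Nat.lt_trichotomy k i with hk | hk | hk
  · -- k + 1 ≤ i : all in q region
    have hk1 : k + 1 ≤ i := hk
    have hki : k ≠ i := by omega
    simp only [Pseq, if_pos hk1, if_pos (le_of_lt hk), if_pos (by omega : k - 1 ≤ i),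
      if_neg hki, add_zero]
    have := qseq_add k (by omega)
    linarith
  · -- k = i
    subst hk
    have hnk : ¬ (k + 1 ≤ k) := by omega
    simp only [Pseq, if_pos (le_refl k), if_pos (by omega : k - 1 ≤ k), if_neg hnk,
      if_pos rfl]
    -- goal: rseq k (k+1) = -qseq k - qseq (k-1) + qseq k
    have e1 : (k+1) % 3 = 0 ∨ (k+1) % 3 = 1 ∨ (k+1) % 3 = 2 := by omega
    rcases h3 with h3 | h3 <;>
      · have e2 : (k-1) % 3 = (k-1) % 3 := rfl
        simp only [qseq, rseq, h3]
        rcases e1 with e1 | e1 | e1 <;> first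
          | (exfalso; omega)
          | (have e3 : (k-1) % 3 = 0 ∨ (k-1) % 3 = 1 ∨ (k-1) % 3 = 2 := by omega
             rcases e3 with e3 | e3 | e3 <;> first
              | (exfalso; omega)
              | (rw [e1, e3]; norm_num))
  · -- k > i : r region
    have hki : k ≠ i := by omega
    rw [Pseq_eq_r i (k+1) hi (by omega), Pseq_eq_r i k hi (by omega),
      Pseq_eq_r i (k-1) hi (by omega), if_neg hki]
    have := rseq_add i k (by omega)
    linarith

lemma Pseq_terminal (i d : ℕ) (hi : i % 3 ≠ 0) (hid : i ≤ d) (hd3 : d % 3 = 1) :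
    Pseq i d + Pseq i (d+1) = 1 := by
  rw [Pseq_eq_r i d hi hid, Pseq_eq_r i (d+1) hi (by omega)]
  have h3 : i % 3 = 1 ∨ i % 3 = 2 := by omega
  have e1 : (d+1) % 3 = 2 := by omega
  rcases h3 with h3 | h3 <;> simp only [rseq, h3, hd3, e1] <;> norm_num

lemma Pseq_d (i d : ℕ) (hd3 : d % 3 = 1) (hdi : d ≤ i) : Pseq i d = 1 := by
  simp [Pseq, hdi, qseq, hd3]

lemma Pseq_two (i : ℕ) (hi : i % 3 ≠ 0) (h1 : 1 ≤ i) :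
    Pseq i 2 = if i = 1 then 0 else -1 := by
  by_cases h : i = 1
  · subst h
    norm_num [Pseq, rseq]
  · have h2 : 2 ≤ i := by omega
    simp [Pseq, h2, qseq, h]

lemma sum_ite_three {α : Type*} [Fintype α] [DecidableEq α] (f : α → ℝ)
    (P₁ P₂ P₃ : Prop) [Decidable P₁] [Decidable P₂] [Decidable P₃] (a b c : α)
    (hab : P₁ → P₂ → a ≠ b) (hac : P₁ → P₃ → a ≠ c) (hbc : P₂ → P₃ → b ≠ c) :
    ∑ w, (if (P₁ ∧ w = a) ∨ (P₂ ∧ w = b) ∨ (P₃ ∧ w = c) then f w else 0) =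
      (if P₁ then f a else 0) + (if P₂ then f b else 0) + (if P₃ then f c else 0) := by
  have key : ∀ w, (if (P₁ ∧ w = a) ∨ (P₂ ∧ w = b) ∨ (P₃ ∧ w = c) then f w else 0) =
      (if P₁ ∧ w = a then f w else 0) + (if P₂ ∧ w = b then f w else 0) +
      (if P₃ ∧ w = c then f w else 0) := by
    intro w
    by_cases h1 : P₁ ∧ w = a
    · by_cases h2 : P₂ ∧ w = b
      · exact absurd (h1.2.symm.trans h2.2) (hab h1.1 h2.1)
      · by_cases h3 : P₃ ∧ w = c
        · exact absurd (h1.2.symm.trans h3.2) (hac h1.1 h3.1)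
        · rw [if_pos (Or.inl h1), if_pos h1, if_neg h2, if_neg h3]; ring
    · by_cases h2 : P₂ ∧ w = b
      · by_cases h3 : P₃ ∧ w = c
        · exact absurd (h2.2.symm.trans h3.2) (hbc h2.1 h3.1)
        · rw [if_pos (Or.inr (Or.inl h2)), if_pos h2, if_neg h1, if_neg h3]; ring
      · by_cases h3 : P₃ ∧ w = c
        · rw [if_pos (Or.inr (Or.inr h3)), if_pos h3, if_neg h1, if_neg h2]; ring
        · rw [if_neg (by tauto), if_neg h1, if_neg h2, if_neg h3]; ring
  rw [Finset.sum_congr rfl (fun w _ => key w)]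
  rw [Finset.sum_add_distrib, Finset.sum_add_distrib]
  congr 1
  · congr 1
    · by_cases hP : P₁ <;> simp [hP, Finset.sum_ite_eq']
    · by_cases hP : P₂ <;> simp [hP, Finset.sum_ite_eq']
  · by_cases hP : P₃ <;> simp [hP, Finset.sum_ite_eq']

lemma rank_principal_le {V : Type*} [Fintype V] (A : Matrix V V ℝ) (W : Set V) [Fintype ↥W] :
    Matrix.rank (A.submatrix ((↑) : W → V) ((↑) : W → V)) ≤ A.rank := by
  classical
  let E : (W → ℝ) →ₗ[ℝ] (V → ℝ) :=
  { toFun := fun g u => if h : u ∈ W then g ⟨u, h⟩ else 0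
    map_add' := by intro g h; funext u; by_cases hu : u ∈ W <;> simp [hu]
    map_smul' := by intro m g; funext u; by_cases hu : u ∈ W <;> simp [hu] }
  have hfact : (A.submatrix ((↑) : W → V) ((↑) : W → V)).mulVecLin
      = LinearMap.funLeft ℝ ℝ (Subtype.val) ∘ₗ (A.mulVecLin ∘ₗ E) := by
    apply LinearMap.ext; intro g; funext u
    simp only [Matrix.mulVecLin_apply, LinearMap.comp_apply, LinearMap.funLeft_apply]
    simp only [Matrix.mulVec, dotProduct, Matrix.submatrix_apply]
    have : ∀ w' : V, A ↑u w' * (E g w') =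
        if h : w' ∈ W then A ↑u ↑(⟨w', h⟩ : W) * g ⟨w', h⟩ else 0 := by
      intro w'
      by_cases h : w' ∈ W <;> simp [E, h]
    rw [Finset.sum_congr rfl (fun w' _ => this w')]
    rw [← Finset.sum_subset (Finset.subset_univ W.toFinset)
      (fun w' _ hw' => dif_neg (fun hmem => hw' (Set.mem_toFinset.mpr hmem)))]
    rw [Finset.sum_subtype W.toFinset (fun z => Set.mem_toFinset)
      (fun w' => if h : w' ∈ W then A ↑u ↑(⟨w', h⟩ : W) * g ⟨w', h⟩ else 0)]
    apply Finset.sum_congr rfl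
    intro w _
    rw [dif_pos w.2]
  rw [Matrix.rank, Matrix.rank, hfact, LinearMap.range_comp]
  calc Module.finrank ℝ (Submodule.map (LinearMap.funLeft ℝ ℝ (Subtype.val : W → V))
        (LinearMap.range (A.mulVecLin ∘ₗ E)))
      ≤ Module.finrank ℝ (LinearMap.range (A.mulVecLin ∘ₗ E)) :=
        Submodule.finrank_map_le _ _
    _ ≤ Module.finrank ℝ (LinearMap.range A.mulVecLin) :=
        Submodule.finrank_mono (LinearMap.range_comp_le_range E A.mulVecLin)



lemma multNegOne_eq_nullity {V : Type*} [Fintype V] (G : SimpleGraph V)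
    (M : Matrix V V ℝ)
    (hM : ∀ a b : V, M a b = (if G.Adj a b then 1 else 0) + (if a = b then 1 else 0)) :
    multNegOne G = Module.finrank ℝ (LinearMap.ker M.mulVecLin) := by
  unfold multNegOne
  rw [Matrix.toLin'_apply']
  apply congrArg (fun N : Matrix V V ℝ => Module.finrank ℝ (LinearMap.ker N.mulVecLin))
  ext a b
  rw [hM a b]
  simp only [Matrix.add_apply, SimpleGraph.adjMatrix_apply, Matrix.one_apply]

set_option maxHeartbeats 1000000 in
theorem stmt_17 {V : Type*} [Fintype V] (G : SimpleGraph V) (n d : ℕ)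
    (hconn : G.Connected)
    (hcard : Fintype.card V = n)
    (hcanon : ∀ a b : V, (∀ z : V, (z = a ∨ G.Adj a z) ↔ (z = b ∨ G.Adj b z)) → a = b)
    (hd3 : d % 3 = 1)
    (hdiam : ∀ a b : V, G.dist a b ≤ d)
    (v : ℕ → V)
    (hpath : ∀ i ∈ Finset.Icc 1 (d + 1), ∀ j ∈ Finset.Icc 1 (d + 1),
      G.dist (v i) (v j) = max i j - min i j)
    (hmult : multNegOne G = n - d - 1)
    (x : V) (hxP : ∀ i ∈ Finset.Icc 1 (d + 1), x ≠ v i) (i : ℕ) (hNP : pathNbrs G d v x = {i}) :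
    i % 3 = 0 ∧ multNegOne (G.induce ((v '' Set.Icc 1 (d + 1)) ∪ {x})) = 1 := by
  have hd1 : 1 ≤ d := by omega
  -- injectivity of v on the path
  have hvinj : ∀ j k, 1 ≤ j → j ≤ d + 1 → 1 ≤ k → k ≤ d + 1 → v j = v k → j = k := by
    intro j k hj1 hj2 hk1 hk2 hjk
    by_contra hne
    have h := hpath j (Finset.mem_Icc.mpr ⟨hj1, hj2⟩) k (Finset.mem_Icc.mpr ⟨hk1, hk2⟩)
    rw [hjk, SimpleGraph.dist_self] at h
    omega
  -- adjacency on the path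
  have hadj : ∀ j k, 1 ≤ j → j ≤ d + 1 → 1 ≤ k → k ≤ d + 1 →
      (G.Adj (v j) (v k) ↔ (j = k + 1 ∨ k = j + 1)) := by
    intro j k hj1 hj2 hk1 hk2
    have h := hpath j (Finset.mem_Icc.mpr ⟨hj1, hj2⟩) k (Finset.mem_Icc.mpr ⟨hk1, hk2⟩)
    constructor
    · intro hA
      have h1 : G.dist (v j) (v k) = 1 := SimpleGraph.dist_eq_one_iff_adj.mpr hA
      omega
    · intro hjk
      apply SimpleGraph.dist_eq_one_iff_adj.mp
      omega
  -- facts about i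
  have hi_mem : i ∈ pathNbrs G d v x := by rw [hNP]; exact Finset.mem_singleton_self i
  rw [pathNbrs, Finset.mem_filter, Finset.mem_Icc] at hi_mem
  obtain ⟨⟨hi1, hi2⟩, hxi⟩ := hi_mem
  have hadjx : ∀ j, 1 ≤ j → j ≤ d + 1 → (G.Adj x (v j) ↔ j = i) := by
    intro j hj1 hj2
    constructor
    · intro hA
      have hmem : j ∈ pathNbrs G d v x := by
        rw [pathNbrs, Finset.mem_filter, Finset.mem_Icc]; exact ⟨⟨hj1, hj2⟩, hA⟩
      rw [hNP] at hmem; exact Finset.mem_singleton.mp hmem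
    · rintro rfl; exact hxi
  have hxv : ∀ j, 1 ≤ j → j ≤ d + 1 → x ≠ v j := fun j h1 h2 =>
    hxP j (Finset.mem_Icc.mpr ⟨h1, h2⟩)
  set W : Set V := (v '' Set.Icc 1 (d + 1)) ∪ {x} with hWdef
  have hmemv : ∀ k, 1 ≤ k → k ≤ d + 1 → v k ∈ W := fun k h1 h2 =>
    Set.mem_union_left _ ⟨k, Set.mem_Icc.mpr ⟨h1, h2⟩, rfl⟩
  have hmemx : x ∈ W := Set.mem_union_right _ rfl
  set xx : ↥W := ⟨x, hmemx⟩ with hxxdef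
  let vv : ℕ → ↥W := fun k =>
    if h : 1 ≤ k ∧ k ≤ d + 1 then ⟨v k, hmemv k h.1 h.2⟩ else xx
  have hvv : ∀ k, 1 ≤ k → k ≤ d + 1 → (vv k : V) = v k := by
    intro k h1 h2
    have h : vv k = ⟨v k, hmemv k h1 h2⟩ := dif_pos ⟨h1, h2⟩
    rw [h]
  -- cardinality of W
  have hcardW : Fintype.card ↥W = d + 2 := by
    rw [← Set.toFinset_card]
    have h1 : W.toFinset = (Finset.Icc 1 (d + 1)).image v ∪ {x} := by
      ext z
      simp only [Set.mem_toFinset, hWdef, Set.mem_union, Set.mem_image, Set.mem_Icc,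
        Set.mem_singleton_iff, Finset.mem_union, Finset.mem_image, Finset.mem_Icc,
        Finset.mem_singleton]
    rw [h1, Finset.card_union_of_disjoint, Finset.card_image_of_injOn, Nat.card_Icc]
    · simp
    · intro a ha b hb hab
      simp only [Finset.coe_Icc, Set.mem_Icc] at ha hb
      exact hvinj a b ha.1 ha.2 hb.1 hb.2 hab
    · rw [Finset.disjoint_singleton_right]
      intro hx
      obtain ⟨j, hj, hjx⟩ := Finset.mem_image.mp hx
      rw [Finset.mem_Icc] at hj
      exact hxv j hj.1 hj.2 hjx.symm
  have hn : d + 2 ≤ n := by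
    calc d + 2 = Fintype.card ↥W := hcardW.symm
      _ ≤ Fintype.card V := Fintype.card_le_of_injective _ Subtype.val_injective
      _ = n := hcard
  -- rank considerations
  set A : Matrix V V ℝ := G.adjMatrix ℝ + 1 with hAdef
  have hrn : Module.finrank ℝ (LinearMap.range (Matrix.toLin' A)) +
      Module.finrank ℝ (LinearMap.ker (Matrix.toLin' A)) = n := by
    rw [LinearMap.finrank_range_add_finrank_ker, Module.finrank_pi, hcard]
  have hrankA : A.rank = d + 1 := by
    have h1 : A.rank = Module.finrank ℝ (LinearMap.range (Matrix.toLin' A)) := by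
      rw [Matrix.rank, Matrix.toLin'_apply']
    rw [multNegOne, ← hAdef] at hmult
    rw [h1]
    omega
  set M' : Matrix ↥W ↥W ℝ := (G.induce W).adjMatrix ℝ + 1 with hM'def
  have hsub : M' = A.submatrix ((↑) : ↥W → V) ((↑) : ↥W → V) := by
    ext u w
    simp only [hM'def, hAdef, Matrix.add_apply, Matrix.submatrix_apply,
      SimpleGraph.adjMatrix_apply, Matrix.one_apply, SimpleGraph.comap_adj,
      Function.Embedding.coe_subtype]
    congr 1
    by_cases h : u = w
    · rw [if_pos h, if_pos (congrArg Subtype.val h)]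
    · rw [if_neg h, if_neg (fun hc => h (Subtype.ext hc))]
  have hrankM' : M'.rank ≤ d + 1 := by
    rw [hsub]; exact le_trans (rank_principal_le A W) (le_of_eq hrankA)
  have hker1 : 1 ≤ Module.finrank ℝ (LinearMap.ker (Matrix.toLin' M')) := by
    have h2 := LinearMap.finrank_range_add_finrank_ker (Matrix.toLin' M')
    rw [Module.finrank_pi, hcardW] at h2
    have h3 : Module.finrank ℝ (LinearMap.range (Matrix.toLin' M')) = M'.rank := by
      rw [Matrix.rank, Matrix.toLin'_apply']
    omega
  -- row equations for kernel vectors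
  have hrow : ∀ f : ↥W → ℝ, Matrix.toLin' M' f = 0 → ∀ u : ↥W,
      (∑ w : ↥W, if (G.induce W).Adj u w then f w else 0) + f u = 0 := by
    intro f hf u
    have h0 : (M'.mulVec f) u = 0 := by
      rw [← Matrix.toLin'_apply, hf]; rfl
    rw [hM'def, Matrix.add_mulVec, Matrix.one_mulVec, Pi.add_apply,
      SimpleGraph.adjMatrix_mulVec_apply, SimpleGraph.neighborFinset_eq_filter,
      Finset.sum_filter] at h0
    exact h0
  -- neighbours of path vertices
  have hcharv : ∀ k, 1 ≤ k → k ≤ d + 1 → ∀ w : ↥W,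
      ((G.induce W).Adj (vv k) w ↔
        ((2 ≤ k ∧ w = vv (k - 1)) ∨ (k ≤ d ∧ w = vv (k + 1)) ∨ (k = i ∧ w = xx))) := by
    intro k hk1 hk2 w
    have hadj_iff : (G.induce W).Adj (vv k) w ↔ G.Adj (v k) ↑w := by
      simp only [SimpleGraph.comap_adj, Function.Embedding.coe_subtype, hvv k hk1 hk2]
    rw [hadj_iff]
    rcases w.2 with ⟨j, hj, hjw⟩ | hwx0
    · rw [Set.mem_Icc] at hj
      rw [← hjw, hadj k j hk1 hk2 hj.1 hj.2]
      constructor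
      · intro hkj
        rcases hkj with hkj | hkj
        · refine Or.inl ⟨by omega, ?_⟩
          apply Subtype.ext
          rw [hvv (k-1) (by omega) (by omega), ← hjw]
          exact congrArg v (by omega)
        · refine Or.inr (Or.inl ⟨by omega, ?_⟩)
          apply Subtype.ext
          rw [hvv (k+1) (by omega) (by omega), ← hjw]
          exact congrArg v (by omega)
      · rintro (⟨h2k, hw'⟩ | ⟨hkd, hw'⟩ | ⟨hki, hw'⟩)
        · have he : (w : V) = v (k-1) := by rw [hw', hvv (k-1) (by omega) (by omega)]
          rw [← hjw] at he
          have := hvinj j (k-1) hj.1 hj.2 (by omega) (by omega) he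
          omega
        · have he : (w : V) = v (k+1) := by rw [hw', hvv (k+1) (by omega) (by omega)]
          rw [← hjw] at he
          have := hvinj j (k+1) hj.1 hj.2 (by omega) (by omega) he
          omega
        · exfalso
          have he : (w : V) = x := by rw [hw']
          rw [← hjw] at he
          exact hxv j hj.1 hj.2 he.symm
    · have hwx : (w : V) = x := hwx0
      constructor
      · intro hA
        rw [hwx] at hA
        have hki : k = i := (hadjx k hk1 hk2).mp hA.symm
        exact Or.inr (Or.inr ⟨hki, Subtype.ext hwx⟩)
      · rintro (⟨h2k, hw'⟩ | ⟨hkd, hw'⟩ | ⟨hki, hw'⟩)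
        · exfalso
          have he : (w : V) = v (k-1) := by rw [hw', hvv (k-1) (by omega) (by omega)]
          rw [hwx] at he
          exact hxv (k-1) (by omega) (by omega) he
        · exfalso
          have he : (w : V) = v (k+1) := by rw [hw', hvv (k+1) (by omega) (by omega)]
          rw [hwx] at he
          exact hxv (k+1) (by omega) (by omega) he
        · rw [hwx, hki]
          exact hxi.symm
  -- neighbours of x
  have hcharx : ∀ w : ↥W, ((G.induce W).Adj xx w ↔ w = vv i) := by
    intro w
    have hadj_iff : (G.induce W).Adj xx w ↔ G.Adj x ↑w := by
      simp only [SimpleGraph.comap_adj, Function.Embedding.coe_subtype]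
      exact Iff.rfl
    rw [hadj_iff]
    rcases w.2 with ⟨j, hj, hjw⟩ | hwx0
    · rw [Set.mem_Icc] at hj
      rw [← hjw, hadjx j hj.1 hj.2]
      constructor
      · intro hji
        apply Subtype.ext
        rw [hvv i hi1 hi2, ← hjw]
        exact congrArg v hji
      · intro hw'
        have he : (w : V) = v i := by rw [hw', hvv i hi1 hi2]
        rw [← hjw] at he
        exact hvinj j i hj.1 hj.2 hi1 hi2 he
    · have hwx : (w : V) = x := hwx0
      rw [hwx]
      constructor
      · intro hA
        exact absurd hA (G.loopless.irrefl x)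
      · intro hw'
        exfalso
        have he : (w : V) = v i := by rw [hw', hvv i hi1 hi2]
        rw [hwx] at he
        exact hxv i hi1 hi2 he
  -- scalar equation at x
  have hEx : ∀ f : ↥W → ℝ, Matrix.toLin' M' f = 0 → f (vv i) + f xx = 0 := by
    intro f hf
    have h := hrow f hf xx
    have hs : (∑ w : ↥W, if (G.induce W).Adj xx w then f w else 0) = f (vv i) := by
      rw [Finset.sum_congr rfl (fun w _ => if_congr (hcharx w) rfl rfl)]
      simp [Finset.sum_ite_eq']
    rw [hs] at h
    exact h
  -- scalar equations along the path
  have hEk : ∀ f : ↥W → ℝ, Matrix.toLin' M' f = 0 → ∀ k, 1 ≤ k → k ≤ d + 1 →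
      (if 2 ≤ k then f (vv (k-1)) else 0) + (if k ≤ d then f (vv (k+1)) else 0) +
        (if k = i then f xx else 0) + f (vv k) = 0 := by
    intro f hf k hk1 hk2
    have h := hrow f hf (vv k)
    have hs : (∑ w : ↥W, if (G.induce W).Adj (vv k) w then f w else 0) =
        (if 2 ≤ k then f (vv (k-1)) else 0) + (if k ≤ d then f (vv (k+1)) else 0) +
          (if k = i then f xx else 0) := by
      rw [Finset.sum_congr rfl (fun w _ => if_congr (hcharv k hk1 hk2 w) rfl rfl)]
      refine sum_ite_three f _ _ _ _ _ _ ?_ ?_ ?_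
      · intro h2 hd' heq
        have he : v (k-1) = v (k+1) := by
          rw [← hvv (k-1) (by omega) (by omega), ← hvv (k+1) (by omega) (by omega), heq]
        have := hvinj (k-1) (k+1) (by omega) (by omega) (by omega) (by omega) he
        omega
      · intro h2 hki heq
        have he : v (k-1) = x := by rw [← hvv (k-1) (by omega) (by omega), heq]
        exact hxv (k-1) (by omega) (by omega) he.symm
      · intro hd' hki heq
        have he : v (k+1) = x := by rw [← hvv (k+1) (by omega) (by omega), heq]
        exact hxv (k+1) (by omega) (by omega) he.symm
    rw [hs] at h
    exact h
  -- the recurrence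
  have hrec : ∀ f : ↥W → ℝ, Matrix.toLin' M' f = 0 → ∀ k, 2 ≤ k → k ≤ d →
      f (vv (k+1)) = -f (vv k) - f (vv (k-1)) + (if k = i then f (vv i) else 0) := by
    intro f hf k h2 hkd
    have h := hEk f hf k (by omega) (by omega)
    rw [if_pos h2, if_pos hkd] at h
    have hc := hEx f hf
    by_cases hki : k = i
    · rw [if_pos hki] at h ⊢
      linarith
    · rw [if_neg hki] at h ⊢
      linarith
  -- zero propagation
  have hzero : ∀ f : ↥W → ℝ, Matrix.toLin' M' f = 0 → f (vv 1) = 0 → f = 0 := by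
    intro f hf h1
    have hc := hEx f hf
    have hall : ∀ k, 1 ≤ k → k ≤ d + 1 → f (vv k) = 0 := by
      intro k
      induction k using Nat.strong_induction_on with
      | _ k ih =>
        intro hk1 hk2
        rcases Nat.lt_or_ge k 3 with hk3 | hk3
        · interval_cases k
          · exact h1
          · have h := hEk f hf 1 (by omega) (by omega)
            rw [if_neg (by omega : ¬ 2 ≤ 1), if_pos hd1] at h
            by_cases h1i : 1 = i
            · rw [if_pos h1i] at h
              rw [← h1i] at hc
              linarith
            · rw [if_neg h1i] at h
              linarith
        · have h := hrec f hf (k-1) (by omega) (by omega)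
          have e1 : k - 1 + 1 = k := by omega
          have e2 : k - 1 - 1 = k - 2 := by omega
          rw [e1, e2] at h
          have z1 : f (vv (k-1)) = 0 := ih (k-1) (by omega) (by omega) (by omega)
          have z2 : f (vv (k-2)) = 0 := ih (k-2) (by omega) (by omega) (by omega)
          by_cases hki : k - 1 = i
          · have zi : f (vv i) = 0 := hki ▸ z1
            rw [if_pos hki, zi, z1, z2] at h
            rw [h]; ring
          · rw [if_neg hki] at h
            rw [h, z1, z2]; ring
    have hxx0 : f xx = 0 := by
      have := hall i hi1 hi2; linarith
    funext w
    rcases w.2 with ⟨j, hj, hjw⟩ | hwx0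
    · rw [Set.mem_Icc] at hj
      have hw' : w = vv j := Subtype.ext (by rw [hvv j hj.1 hj.2]; exact hjw.symm)
      rw [hw']
      simpa using hall j hj.1 hj.2
    · have hw' : w = xx := Subtype.ext hwx0
      rw [hw']
      simpa using hxx0
  -- closed form in the degenerate case
  have hclosed : i % 3 ≠ 0 → ∀ f : ↥W → ℝ, Matrix.toLin' M' f = 0 →
      ∀ k, 1 ≤ k → k ≤ d + 1 → f (vv k) = f (vv 1) * Pseq i k := by
    intro hi3 f hf
    have hc := hEx f hf
    intro k
    induction k using Nat.strong_induction_on with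
    | _ k ih =>
      intro hk1 hk2
      rcases Nat.lt_or_ge k 3 with hk3 | hk3
      · interval_cases k
        · rw [Pseq_one i hi1, mul_one]
        · have h := hEk f hf 1 (by omega) (by omega)
          rw [if_neg (by omega : ¬ 2 ≤ 1), if_pos hd1] at h
          rw [Pseq_two i hi3 hi1]
          by_cases h1i : 1 = i
          · rw [if_pos h1i] at h
            rw [← h1i] at hc
            rw [if_pos h1i.symm]
            linarith
          · rw [if_neg h1i] at h
            rw [if_neg (fun hh => h1i hh.symm)]
            linarith
      · have h := hrec f hf (k-1) (by omega) (by omega)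
        have e1 : k - 1 + 1 = k := by omega
        have e2 : k - 1 - 1 = k - 2 := by omega
        rw [e1, e2] at h
        have z1 : f (vv (k-1)) = f (vv 1) * Pseq i (k-1) :=
          ih (k-1) (by omega) (by omega) (by omega)
        have z2 : f (vv (k-2)) = f (vv 1) * Pseq i (k-2) :=
          ih (k-2) (by omega) (by omega) (by omega)
        have hP := Pseq_rec i hi3 hi1 (k-1) (by omega)
        rw [e1, e2] at hP
        by_cases hki : k - 1 = i
        · have hPi : f (vv i) = f (vv 1) * Pseq i i := by
            have hPi' := z1
            rw [hki] at hPi'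
            exact hPi'
          rw [if_pos hki, hPi, z1, z2] at h
          rw [if_pos hki] at hP
          rw [h, hP]; ring
        · rw [if_neg hki, z1, z2] at h
          rw [if_neg hki] at hP
          rw [h, hP]; ring
  -- i ≡ 0 (mod 3)
  have hi30 : i % 3 = 0 := by
    by_contra hi3
    have hbot : LinearMap.ker (Matrix.toLin' M') = ⊥ := by
      rw [Submodule.eq_bot_iff]
      intro f hf0
      have hf : Matrix.toLin' M' f = 0 := LinearMap.mem_ker.mp hf0
      have hcl := hclosed hi3 f hf
      have hterm := hEk f hf (d+1) (by omega) (le_refl (d+1))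
      rw [if_pos (by omega : 2 ≤ d + 1), if_neg (by omega : ¬ d + 1 ≤ d)] at hterm
      have e1 : d + 1 - 1 = d := by omega
      rw [e1] at hterm
      have hc := hEx f hf
      have hf1 : f (vv 1) = 0 := by
        by_cases hid : d + 1 = i
        · rw [if_pos hid] at hterm
          rw [← hid] at hc
          have hfd : f (vv d) = 0 := by linarith
          have hd' := hcl d (by omega) (by omega)
          rw [Pseq_d i d hd3 (by omega), mul_one] at hd'
          rw [hfd] at hd'
          exact hd'.symm
        · rw [if_neg hid] at hterm
          have h1 := hcl d (by omega) (by omega)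
          have h2 := hcl (d+1) (by omega) (by omega)
          have hsum := Pseq_terminal i d hi3 (by omega) hd3
          rw [h1, h2] at hterm
          have hmul : f (vv 1) * (Pseq i d + Pseq i (d+1)) = 0 := by linarith
          rw [hsum, mul_one] at hmul
          exact hmul
      exact hzero f hf hf1
    rw [hbot] at hker1
    simp [finrank_bot] at hker1
  -- nullity at most one
  have hle : Module.finrank ℝ (LinearMap.ker (Matrix.toLin' M')) ≤ 1 := by
    have hinj : Function.Injective
        ((LinearMap.proj (vv 1) : (↥W → ℝ) →ₗ[ℝ] ℝ).comp
          (LinearMap.ker (Matrix.toLin' M')).subtype) := by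
      rw [← LinearMap.ker_eq_bot, Submodule.eq_bot_iff]
      intro g hg
      have hg' : (g : ↥W → ℝ) (vv 1) = 0 := by
        have := LinearMap.mem_ker.mp hg
        simpa using this
      have hgker : Matrix.toLin' M' (g : ↥W → ℝ) = 0 := LinearMap.mem_ker.mp g.2
      have := hzero (g : ↥W → ℝ) hgker hg'
      exact Subtype.ext (by simpa using this)
    have hfin := LinearMap.finrank_le_finrank_of_injective hinj
    simpa using hfin
  refine ⟨hi30, ?_⟩
  have hfin := multNegOne_eq_nullity (G.induce W) M' (by
    intro a b
    simp [hM'def, Matrix.add_apply, SimpleGraph.adjMatrix_apply, Matrix.one_apply])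
  rw [Matrix.toLin'_apply'] at hker1 hle
  exact hfin.trans (by omega)
end

section
/- Let G be a finite simple connected C-canonical graph of order n and diameter d with d ≡ 1 (mod 3) and m_G(−1) = n − d − 1, and let P = v_1 v_2 ⋯ v_{d+1} be a diameter path of G. If x and y are distinct vertices not on P, each having exactly one neighbor on P, say x is adjacent to v_{3a} and y is adjacent to v_{3b}, then a ≠ b and x is adjacent to y. Consequently, there are at most two vertices not on P having exactly one neighbor on P. -/
attribute [local instance] Classical.propDecidable

set_option linter.unusedSectionVars false
set_option linter.unusedVariables false
set_option maxHeartbeats 1000000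
open Finset
noncomputable def xiP (k : ℕ) : ℝ := if k % 3 = 1 then 1 else if k % 3 = 2 then -1 else 0

lemma xiP_step (m : ℕ) : xiP (m+2) = - xiP (m+1) - xiP m := by
  unfold xiP
  have h3 : m % 3 = 0 ∨ m % 3 = 1 ∨ m % 3 = 2 := by omega
  rcases h3 with h | h | h <;>
    · have h1 : (m+1) % 3 = (m % 3 + 1) % 3 := by omega
      have h2 : (m+2) % 3 = (m % 3 + 2) % 3 := by omega
      rw [h] at h1 h2; norm_num at h1 h2; simp [h, h1, h2]

lemma xiP_zero {k : ℕ} (h : k % 3 = 0) : xiP k = 0 := by unfold xiP; rw [h]; norm_num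
lemma xiP_one {k : ℕ} (h : k % 3 = 1) : xiP k = 1 := by unfold xiP; rw [h]; norm_num
lemma xiP_two {k : ℕ} (h : k % 3 = 2) : xiP k = -1 := by unfold xiP; rw [h]; norm_num

lemma core_pair (d a b : ℕ) (lam : ℕ → ℝ) (mu nu eps : ℝ)
    (ha : 1 ≤ a) (hab : a ≤ b) (hq : 3*b ≤ d+1)
    (heps : eps = 0 ∨ eps = 1)
    (hlow : ∀ j, j ≤ 1 → lam j = 0) (hhigh : ∀ j, d+1 < j → lam j = 0)
    (hE : ∀ j, 1 ≤ j → j ≤ d+1 → lam (j-1) + lam j + lam (j+1)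
        + (if j = 3*a then mu else 0) + (if j = 3*b then nu else 0) = 0)
    (hEx : lam (3*a) + mu + nu * eps = 0)
    (hEy : lam (3*b) + mu * eps + nu = 0) :
    (eps = 0 → mu = 0 ∧ nu = 0 ∧ ∀ j, lam j = 0) ∧
    (a = b → mu + nu = 0 ∧ ∀ j, lam j = 0) := by
  have hp3 : 3 ≤ 3*a := by omega
  have hpq : 3*a ≤ 3*b := by omega
  -- Claim A : lam vanishes up to 3*a
  have auxA : ∀ m, m + 1 ≤ 3*a → lam m = 0 ∧ lam (m+1) = 0 := by
    intro m; induction m with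
    | zero => intro _; exact ⟨hlow 0 (by omega), hlow 1 (by omega)⟩
    | succ k ih =>
      intro hk
      have ihh := ih (by omega)
      refine ⟨ihh.2, ?_⟩
      have he := hE (k+1) (by omega) (by omega)
      rw [if_neg (by omega), if_neg (by omega)] at he
      simp only [Nat.add_sub_cancel] at he
      have h1 := ihh.1; have h2 := ihh.2
      linarith
  have claimA : ∀ m, m ≤ 3*a → lam m = 0 := by
    intro m hm
    rcases Nat.lt_or_ge m (3*a) with h | h
    · exact (auxA m (by omega)).1
    · have hm' : m = 3*a := by omega
      obtain ⟨-, h2⟩ := auxA (3*a - 1) (by omega)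
      have h3 : 3*a - 1 + 1 = 3*a := by omega
      rw [h3] at h2; rw [hm']; exact h2
  -- Claim B : between 3a and 3b, lam (3a + m) = -mu * xiP m
  have auxB : ∀ m, m + 1 ≤ 3*b - 3*a → lam (3*a+m) = -mu * xiP m ∧ lam (3*a+m+1) = -mu * xiP (m+1) := by
    intro m; induction m with
    | zero =>
      intro h0
      constructor
      · rw [Nat.add_zero, claimA (3*a) le_rfl, xiP_zero (by omega)]; ring
      · have he := hE (3*a) (by omega) (by omega)
        rw [if_pos rfl, if_neg (by omega)] at he
        have e1 := claimA (3*a - 1) (by omega)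
        have e2 := claimA (3*a) le_rfl
        rw [e1, e2] at he
        rw [xiP_one (show 1 % 3 = 1 by norm_num), Nat.add_zero]
        linarith
    | succ k ih =>
      intro hk
      have ihh := ih (by omega)
      have harr : 3*a + (k+1) = 3*a + k + 1 := by omega
      refine ⟨by rw [harr]; exact ihh.2, ?_⟩
      have he := hE (3*a+k+1) (by omega) (by omega)
      rw [if_neg (by omega), if_neg (by omega)] at he
      have h4 : 3*a + k + 1 - 1 = 3*a + k := by omega
      rw [h4] at he
      have h1 := ihh.1; have h2 := ihh.2
      have hx2 : 3*a + (k+1) + 1 = 3*a + k + 1 + 1 := by omega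
      rw [hx2, xiP_step]
      linarith
  have claimB : ∀ m, m ≤ 3*b - 3*a → lam (3*a+m) = -mu * xiP m := by
    intro m hm
    rcases Nat.lt_or_ge m (3*b - 3*a) with h | h
    · exact (auxB m (by omega)).1
    · rcases Nat.eq_zero_or_pos m with h0 | h0
      · subst h0; rw [Nat.add_zero, claimA (3*a) le_rfl, xiP_zero (by omega)]; ring
      · have hm' : m = 3*b - 3*a := by omega
        obtain ⟨-, h2⟩ := auxB (m-1) (by omega)
        have h3 : 3*a + (m-1) + 1 = 3*a + m := by omega
        have h4 : m - 1 + 1 = m := by omega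
        rw [h3, h4] at h2; exact h2
  have lamP : lam (3*a) = 0 := claimA (3*a) le_rfl
  have lamQ : lam (3*b) = 0 := by
    have hcb := claimB (3*b - 3*a) le_rfl
    have h3 : 3*a + (3*b - 3*a) = 3*b := by omega
    rw [h3] at hcb
    rw [hcb, xiP_zero (by omega)]; ring
  -- value just past 3*b
  have lamQ1 : lam (3*b + 1) = -(mu + nu) := by
    have he := hE (3*b) (by omega) (by omega)
    rw [if_pos rfl] at he
    rcases Nat.eq_or_lt_of_le hpq with heq | hlt
    · rw [if_pos heq.symm] at he
      have e1 : lam (3*b - 1) = 0 := claimA (3*b-1) (by omega)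
      rw [e1, lamQ] at he; linarith
    · rw [if_neg (by omega)] at he
      have e1 : lam (3*b - 1) = mu := by
        have hcb := claimB (3*b - 3*a - 1) (by omega)
        have h3 : 3*a + (3*b - 3*a - 1) = 3*b - 1 := by omega
        rw [h3] at hcb
        rw [hcb, xiP_two (by omega)]; ring
      rw [e1, lamQ] at he; linarith
  -- Claim C : beyond 3*b
  have auxC : ∀ m, 3*b + m + 1 ≤ d+2 →
      lam (3*b+m) = -(mu+nu) * xiP m ∧ lam (3*b+m+1) = -(mu+nu) * xiP (m+1) := by
    intro m; induction m with
    | zero =>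
      intro h0
      constructor
      · rw [Nat.add_zero, lamQ, xiP_zero (by omega)]; ring
      · rw [Nat.add_zero, lamQ1, xiP_one (show 1 % 3 = 1 by norm_num)]; ring
    | succ k ih =>
      intro hk
      have ihh := ih (by omega)
      have harr : 3*b + (k+1) = 3*b + k + 1 := by omega
      refine ⟨by rw [harr]; exact ihh.2, ?_⟩
      have he := hE (3*b+k+1) (by omega) (by omega)
      rw [if_neg (by omega), if_neg (by omega)] at he
      have h4 : 3*b + k + 1 - 1 = 3*b + k := by omega
      rw [h4] at he
      have h1 := ihh.1; have h2 := ihh.2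
      have hx2 : 3*b + (k+1) + 1 = 3*b + k + 1 + 1 := by omega
      rw [hx2, xiP_step]
      linarith
  have claimC : ∀ m, 3*b + m ≤ d+2 → lam (3*b+m) = -(mu+nu) * xiP m := by
    intro m hm
    rcases Nat.eq_zero_or_pos m with h0 | h0
    · subst h0; rw [Nat.add_zero, lamQ, xiP_zero (by omega)]; ring
    · obtain ⟨-, h2⟩ := auxC (m-1) (by omega)
      have h3 : 3*b + (m-1) + 1 = 3*b + m := by omega
      have h4 : m - 1 + 1 = m := by omega
      rw [h3, h4] at h2; exact h2
  -- vanishing of everything under suitable coefficient conditions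
  have hvanish : ((mu = 0 ∧ nu = 0) ∨ (a = b ∧ mu + nu = 0)) → ∀ j, lam j = 0 := by
    rintro h j
    rcases le_or_gt j (3*a) with hj | hj
    · exact claimA j hj
    rcases le_or_gt j (3*b) with hj2 | hj2
    · have hcb := claimB (j - 3*a) (by omega)
      have h3 : 3*a + (j - 3*a) = j := by omega
      rw [h3] at hcb
      rcases h with ⟨hm, -⟩ | ⟨hab2, -⟩
      · rw [hcb, hm]; ring
      · omega
    rcases le_or_gt j (d+2) with hj3 | hj3
    · have hcc := claimC (j - 3*b) (by omega)
      have h3 : 3*b + (j - 3*b) = j := by omega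
      rw [h3] at hcc
      have hmn : mu + nu = 0 := by rcases h with ⟨hm, hn⟩ | ⟨-, hmn⟩; · rw [hm, hn]; ring
                                   · exact hmn
      rw [hcc, hmn]; ring
    · exact hhigh j (by omega)
  constructor
  · intro he0
    rw [he0] at hEx hEy
    have hmu : mu = 0 := by rw [lamP] at hEx; linarith
    have hnu : nu = 0 := by rw [lamQ] at hEy; linarith
    exact ⟨hmu, hnu, hvanish (Or.inl ⟨hmu, hnu⟩)⟩
  · intro haeq
    have hmn : mu + nu = 0 := by
      rw [lamP] at hEx; rw [lamQ] at hEy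
      rcases heps with h | h <;> rw [h] at hEx hEy <;> linarith
    exact ⟨hmn, hvanish (Or.inr ⟨haeq, hmn⟩)⟩

lemma core_single (d k : ℕ) (lam : ℕ → ℝ) (mu : ℝ)
    (hd : d % 3 = 1) (hk1 : 1 ≤ k) (hk2 : k ≤ d+1) (hk3 : k % 3 ≠ 0)
    (hlow : lam 0 = 0) (hhigh : ∀ j, d+1 < j → lam j = 0)
    (hE : ∀ j, 1 ≤ j → j ≤ d+1 → lam (j-1) + lam j + lam (j+1) + (if j = k then mu else 0) = 0)
    (hEz : lam k + mu = 0) :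
    mu = 0 ∧ ∀ j, lam j = 0 := by
  set t := lam 1 with ht
  have auxA : ∀ m, m + 1 ≤ k → lam m = t * xiP m ∧ lam (m+1) = t * xiP (m+1) := by
    intro m; induction m with
    | zero =>
      intro _
      constructor
      · rw [hlow, xiP_zero (by omega)]; ring
      · rw [xiP_one (show 1 % 3 = 1 by norm_num)]; ring
    | succ j ih =>
      intro hk'
      have ihh := ih (by omega)
      refine ⟨ihh.2, ?_⟩
      have he := hE (j+1) (by omega) (by omega)
      rw [if_neg (by omega)] at he
      simp only [Nat.add_sub_cancel] at he
      have h1 := ihh.1; have h2 := ihh.2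
      rw [xiP_step]
      linarith
  have claimA : ∀ m, m ≤ k → lam m = t * xiP m := by
    intro m hm
    rcases Nat.lt_or_ge m k with h | h
    · exact (auxA m (by omega)).1
    · have hm' : m = k := by omega
      obtain ⟨-, h2⟩ := auxA (k - 1) (by omega)
      have h3 : k - 1 + 1 = k := by omega
      rw [h3] at h2; rw [hm']; exact h2
  have lamK1 : lam (k+1) = t * xiP (k+1) - mu := by
    have he := hE k (by omega) (by omega)
    rw [if_pos rfl] at he
    have e1 := claimA (k-1) (by omega)
    have e2 := claimA k le_rfl
    rw [e1, e2] at he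
    have hstep : xiP (k+1) = - xiP k - xiP (k-1) := by
      have := xiP_step (k-1)
      have h3 : k - 1 + 2 = k + 1 := by omega
      have h4 : k - 1 + 1 = k := by omega
      rw [h3, h4] at this; exact this
    rw [hstep]; linarith
  have auxC : ∀ m, k + m + 1 ≤ d + 2 →
      lam (k+m) = t * xiP (k+m) - mu * xiP m ∧ lam (k+m+1) = t * xiP (k+m+1) - mu * xiP (m+1) := by
    intro m; induction m with
    | zero =>
      intro _
      constructor
      · rw [Nat.add_zero, claimA k le_rfl, show xiP 0 = 0 from xiP_zero (by norm_num)]; ring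
      · rw [Nat.add_zero, lamK1, xiP_one (show 1 % 3 = 1 by norm_num)]; ring
    | succ j ih =>
      intro hk'
      have ihh := ih (by omega)
      have harr : k + (j+1) = k + j + 1 := by omega
      refine ⟨by rw [harr]; exact ihh.2, ?_⟩
      have he := hE (k+j+1) (by omega) (by omega)
      rw [if_neg (by omega)] at he
      have h4 : k + j + 1 - 1 = k + j := by omega
      rw [h4] at he
      have h1 := ihh.1; have h2 := ihh.2
      have hx2 : k + (j+1) + 1 = k + j + 1 + 1 := by omega
      have hx3 : k + (j + 1 + 1) = k + j + 1 + 1 := by omega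
      rw [hx2, xiP_step, xiP_step]
      rw [hx3] at *
      linarith [xiP_step (k+j), xiP_step j]
  have claimC : ∀ m, k + m ≤ d + 2 → lam (k+m) = t * xiP (k+m) - mu * xiP m := by
    intro m hm
    rcases Nat.eq_zero_or_pos m with h0 | h0
    · subst h0; rw [Nat.add_zero, claimA k le_rfl, show xiP 0 = 0 from xiP_zero (by norm_num)]; ring
    · obtain ⟨-, h2⟩ := auxC (m-1) (by omega)
      have h3 : k + (m-1) + 1 = k + m := by omega
      have h4 : m - 1 + 1 = m := by omega
      rw [h3, h4] at h2; exact h2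
  -- evaluate at d+2
  have hend := claimC (d+2-k) (by omega)
  have h3 : k + (d+2-k) = d+2 := by omega
  rw [h3, hhigh (d+2) (by omega), xiP_zero (by omega)] at hend
  have hk3' : k % 3 = 1 ∨ k % 3 = 2 := by omega
  have hmu : mu = 0 := by
    rcases hk3' with h | h
    · rw [xiP_two (by omega)] at hend; linarith
    · rw [xiP_one (by omega)] at hend; linarith
  have htz : t = 0 := by
    have e2 := claimA k le_rfl
    rw [hmu] at hEz
    rw [e2] at hEz
    rcases hk3' with h | h
    · rw [xiP_one h] at hEz; linarith
    · rw [xiP_two h] at hEz; linarith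
  refine ⟨hmu, fun j => ?_⟩
  rcases le_or_gt j k with hj | hj
  · rw [claimA j hj, htz]; ring
  rcases le_or_gt j (d+2) with hj2 | hj2
  · have hcc := claimC (j - k) (by omega)
    have h3 : k + (j - k) = j := by omega
    rw [h3] at hcc
    rw [hcc, htz, hmu]; ring
  · exact hhigh j (by omega)

section Glue
variable {V : Type*} [Fintype V] (G : SimpleGraph V) (d : ℕ) (v : ℕ → V)

lemma path_inj (hconn : G.Connected)
    (hpath : ∀ i ∈ Finset.Icc 1 (d + 1), ∀ j ∈ Finset.Icc 1 (d + 1),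
      G.dist (v i) (v j) = max i j - min i j) :
    ∀ i ∈ Finset.Icc 1 (d+1), ∀ j ∈ Finset.Icc 1 (d+1), v i = v j → i = j := by
  intro i hi j hj he
  have h1 := hpath i hi j hj
  rw [he, SimpleGraph.dist_self] at h1
  rcases le_total i j with h | h
  · rw [max_eq_right h, min_eq_left h] at h1; omega
  · rw [max_eq_left h, min_eq_right h] at h1; omega

lemma path_adj
    (hpath : ∀ i ∈ Finset.Icc 1 (d + 1), ∀ j ∈ Finset.Icc 1 (d + 1),
      G.dist (v i) (v j) = max i j - min i j) :
    ∀ i ∈ Finset.Icc 1 (d+1), ∀ j ∈ Finset.Icc 1 (d+1),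
      (G.Adj (v i) (v j) ↔ (i = j + 1 ∨ j = i + 1)) := by
  intro i hi j hj
  have h1 := hpath i hi j hj
  constructor
  · intro h
    have h2 := SimpleGraph.dist_eq_one_iff_adj.mpr h
    rw [h1] at h2
    rcases le_total i j with h3 | h3
    · rw [max_eq_right h3, min_eq_left h3] at h2; omega
    · rw [max_eq_left h3, min_eq_right h3] at h2; omega
  · intro h
    apply SimpleGraph.dist_eq_one_iff_adj.mp
    rw [h1]
    rcases h with h | h <;> subst h
    · rw [max_eq_left (by omega), min_eq_right (by omega)]; omega
    · rw [max_eq_right (by omega), min_eq_left (by omega)]; omega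

lemma path_card (n : ℕ) (hcard : Fintype.card V = n) (hconn : G.Connected)
    (hpath : ∀ i ∈ Finset.Icc 1 (d + 1), ∀ j ∈ Finset.Icc 1 (d + 1),
      G.dist (v i) (v j) = max i j - min i j) : d + 1 ≤ n := by
  have hinj := path_inj G d v hconn hpath
  have h1 : ((Finset.Icc 1 (d+1)).image v).card = d + 1 := by
    rw [Finset.card_image_of_injOn (fun i hi j hj => hinj i hi j hj), Nat.card_Icc]
    omega
  calc d + 1 = ((Finset.Icc 1 (d+1)).image v).card := h1.symm
    _ ≤ Fintype.card V := Finset.card_le_univ _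
    _ = n := hcard

lemma entry_M (w u : V) :
    (G.adjMatrix ℝ + 1) w u = (if G.Adj w u then 1 else 0) + (if w = u then 1 else 0) := by
  simp [Matrix.add_apply, Matrix.one_apply]

lemma M_vv (hconn : G.Connected)
    (hpath : ∀ i ∈ Finset.Icc 1 (d + 1), ∀ j ∈ Finset.Icc 1 (d + 1),
      G.dist (v i) (v j) = max i j - min i j) :
    ∀ i ∈ Finset.Icc 1 (d+1), ∀ j ∈ Finset.Icc 1 (d+1),
      (G.adjMatrix ℝ + 1) (v i) (v j) = if j + 1 = i ∨ j = i ∨ j = i + 1 then 1 else 0 := by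
  intro i hi j hj
  rw [entry_M]
  by_cases hij : i = j
  · subst hij
    rw [if_neg (by simp), if_pos rfl, if_pos (by omega)]
    norm_num
  · rw [if_neg (fun he => hij (path_inj G d v hconn hpath i hi j hj he))]
    by_cases hadj : G.Adj (v i) (v j)
    · have := (path_adj G d v hpath i hi j hj).mp hadj
      rw [if_pos hadj, if_pos (by omega)]
      norm_num
    · rw [if_neg hadj, if_neg ?_]
      · norm_num
      · intro h
        exact hadj ((path_adj G d v hpath i hi j hj).mpr (by omega))

lemma pathNbrs_spec (z : V) (k : ℕ)
    (hz : (Finset.Icc 1 (d + 1)).filter (fun i => G.Adj z (v i)) = {k}) :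
    k ∈ Finset.Icc 1 (d+1) ∧ ∀ i ∈ Finset.Icc 1 (d+1), (G.Adj z (v i) ↔ i = k) := by
  have hk : k ∈ (Finset.Icc 1 (d + 1)).filter (fun i => G.Adj z (v i)) := by
    rw [hz]; exact Finset.mem_singleton_self k
  rw [Finset.mem_filter] at hk
  refine ⟨hk.1, fun i hi => ⟨fun h => ?_, fun h => h ▸ hk.2⟩⟩
  have : i ∈ (Finset.Icc 1 (d + 1)).filter (fun i => G.Adj z (v i)) :=
    Finset.mem_filter.mpr ⟨hi, h⟩
  rw [hz, Finset.mem_singleton] at this; exact this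

lemma M_vz (z : V) (k : ℕ) (hzP : ∀ i ∈ Finset.Icc 1 (d+1), z ≠ v i)
    (hz : (Finset.Icc 1 (d + 1)).filter (fun i => G.Adj z (v i)) = {k}) :
    ∀ i ∈ Finset.Icc 1 (d+1), (G.adjMatrix ℝ + 1) (v i) z = (if i = k then 1 else 0)
      ∧ (G.adjMatrix ℝ + 1) z (v i) = (if i = k then 1 else 0) := by
  intro i hi
  obtain ⟨hk, hiff⟩ := pathNbrs_spec G d v z k hz
  have hne : z ≠ v i := hzP i hi
  have h1 : G.Adj z (v i) ↔ i = k := hiff i hi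
  constructor
  · rw [entry_M, if_neg (fun he : v i = z => hne he.symm), add_zero,
      show G.Adj (v i) z ↔ i = k from (G.adj_comm _ _).trans h1]
    split_ifs <;> rfl
  · rw [entry_M, if_neg (fun he : z = v i => hne he), add_zero, show G.Adj z (v i) ↔ i = k from h1]
    split_ifs <;> rfl

lemma rank_range (n : ℕ) (hcard : Fintype.card V = n) (hn : d + 1 ≤ n)
    (hmult : multNegOne G = n - d - 1) :
    Module.finrank ℝ (LinearMap.range (Matrix.toLin' (G.adjMatrix ℝ + 1))) = d + 1 := by
  have h := LinearMap.finrank_range_add_finrank_ker (Matrix.toLin' (G.adjMatrix ℝ + 1))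
  rw [Module.finrank_pi, hcard] at h
  unfold multNegOne at hmult
  omega

lemma nontriv_rel (T : (V → ℝ) →ₗ[ℝ] (V → ℝ))
    (hrank : Module.finrank ℝ (LinearMap.range T) = d + 1)
    (H : Fin (d+2) → (V → ℝ)) (hmem : ∀ i, H i ∈ LinearMap.range T) :
    ∃ g : Fin (d+2) → ℝ, ∑ i, g i • H i = 0 ∧ ∃ i, g i ≠ 0 := by
  have hnli : ¬ LinearIndependent ℝ H := by
    intro hli
    have hli' : LinearIndependent ℝ (fun i => (⟨H i, hmem i⟩ : LinearMap.range T)) :=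
      LinearIndependent.of_comp (LinearMap.range T).subtype hli
    have := hli'.fintype_card_le_finrank
    rw [hrank, Fintype.card_fin] at this
    omega
  rw [Fintype.not_linearIndependent_iff] at hnli
  exact hnli

lemma col_mem (u : V) :
    (fun w => (G.adjMatrix ℝ + 1) w u) ∈ LinearMap.range (Matrix.toLin' (G.adjMatrix ℝ + 1)) := by
  refine ⟨Pi.single u 1, ?_⟩
  rw [Matrix.toLin'_apply]
  ext w
  rw [Matrix.mulVec_single]
  simp

lemma triple_sum (lo i : ℕ) (hi : 1 ≤ i) (lam : ℕ → ℝ)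
    (hlam : ∀ j, j ∉ Finset.Icc lo (d+1) → lam j = 0) :
    ∑ j ∈ Finset.Icc lo (d+1), (if j + 1 = i ∨ j = i ∨ j = i + 1 then lam j else 0)
      = lam (i-1) + lam i + lam (i+1) := by
  have h1 : ∀ j, (j + 1 = i ∨ j = i ∨ j = i + 1) ↔ j ∈ ({i-1, i, i+1} : Finset ℕ) := by
    intro j; simp only [Finset.mem_insert, Finset.mem_singleton]; omega
  calc ∑ j ∈ Finset.Icc lo (d+1), (if j + 1 = i ∨ j = i ∨ j = i + 1 then lam j else 0)
      = ∑ j ∈ Finset.Icc lo (d+1), (if j ∈ ({i-1, i, i+1} : Finset ℕ) then lam j else 0) := by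
        apply Finset.sum_congr rfl; intro j _; rw [if_congr (h1 j) rfl rfl]
    _ = ∑ j ∈ Finset.Icc lo (d+1) ∩ {i-1, i, i+1}, lam j := by
        rw [← Finset.sum_filter, Finset.filter_mem_eq_inter]
    _ = ∑ j ∈ ({i-1, i, i+1} : Finset ℕ), lam j := by
        apply Finset.sum_subset (Finset.inter_subset_right)
        intro j hj hj2
        apply hlam
        intro hmem
        exact hj2 (Finset.mem_inter.mpr ⟨hmem, hj⟩)
    _ = lam (i-1) + lam i + lam (i+1) := by
        rw [Finset.sum_insert (by simp only [Finset.mem_insert, Finset.mem_singleton]; omega),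
          Finset.sum_insert (by simp only [Finset.mem_singleton]; omega),
          Finset.sum_singleton, add_assoc]

end Glue

lemma pos_lemma {V : Type*} [Fintype V] (G : SimpleGraph V) (n d : ℕ)
    (hconn : G.Connected) (hcard : Fintype.card V = n) (hd3 : d % 3 = 1)
    (v : ℕ → V)
    (hpath : ∀ i ∈ Finset.Icc 1 (d + 1), ∀ j ∈ Finset.Icc 1 (d + 1),
      G.dist (v i) (v j) = max i j - min i j)
    (hmult : multNegOne G = n - d - 1)
    (z : V) (hzP : ∀ i ∈ Finset.Icc 1 (d+1), z ≠ v i) (k : ℕ)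
    (hz : (Finset.Icc 1 (d + 1)).filter (fun i => G.Adj z (v i)) = {k}) :
    k % 3 = 0 := by
  by_contra hk3
  have hn := path_card G d v n hcard hconn hpath
  have hrank := rank_range G d n hcard hn hmult
  obtain ⟨hkIcc, hiff⟩ := pathNbrs_spec G d v z k hz
  have hkIcc' := hkIcc
  rw [Finset.mem_Icc] at hkIcc'
  set col : V → (V → ℝ) := fun u w => (G.adjMatrix ℝ + 1) w u with hcol
  set F : ℕ → (V → ℝ) := fun j => if j = 0 then col z else col (v j) with hF
  have hmem : ∀ i : Fin (d+2), F i.val ∈ LinearMap.range (Matrix.toLin' (G.adjMatrix ℝ + 1)) := by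
    intro i
    simp only [hF]
    split_ifs
    · exact col_mem G z
    · exact col_mem G (v i.val)
  obtain ⟨g, hsum, i0, hgi0⟩ := nontriv_rel d _ hrank (fun i => F i.val) hmem
  set gg : ℕ → ℝ := fun j => if h : j < d + 2 then g ⟨j, h⟩ else 0 with hgg
  set lam : ℕ → ℝ := fun j => if 1 ≤ j ∧ j ≤ d+1 then gg j else 0 with hlamdef
  set mu : ℝ := gg 0 with hmu
  have hggg : ∀ i : Fin (d+2), g i = gg i.val := by
    intro i; rw [hgg]; simp only [i.isLt, dif_pos]
  have hlamout : ∀ j, j ∉ Finset.Icc 1 (d+1) → lam j = 0 := by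
    intro j hj
    rw [Finset.mem_Icc] at hj
    rw [hlamdef]
    exact if_neg (by omega)
  have hev : ∀ w : V, mu * (G.adjMatrix ℝ + 1) w z
      + ∑ j ∈ Finset.Icc 1 (d+1), lam j * (G.adjMatrix ℝ + 1) w (v j) = 0 := by
    intro w
    have h0 := congrFun hsum w
    simp only [Finset.sum_apply, Pi.smul_apply, smul_eq_mul, Pi.zero_apply] at h0
    have h1 : ∑ i : Fin (d+2), g i * F i.val w = ∑ j ∈ Finset.range (d+2), gg j * F j w := by
      rw [← Fin.sum_univ_eq_sum_range (fun j => gg j * F j w) (d+2)]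
      exact Finset.sum_congr rfl (fun i _ => by rw [hggg i])
    have h2 : Finset.range (d+2) = insert 0 (Finset.Icc 1 (d+1)) := by
      ext j; simp only [Finset.mem_range, Finset.mem_insert, Finset.mem_Icc]; omega
    rw [h1, h2, Finset.sum_insert (by simp)] at h0
    have h3 : ∀ j ∈ Finset.Icc 1 (d+1), gg j * F j w = lam j * (G.adjMatrix ℝ + 1) w (v j) := by
      intro j hj
      rw [Finset.mem_Icc] at hj
      rw [hF, hlamdef]
      simp only
      rw [if_neg (by omega : ¬ j = 0), if_pos (by omega : 1 ≤ j ∧ j ≤ d+1)]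
    rw [Finset.sum_congr rfl h3] at h0
    have h4 : F 0 w = (G.adjMatrix ℝ + 1) w z := by simp [hF, hcol]
    rw [h4] at h0
    exact h0
  have hE : ∀ i, 1 ≤ i → i ≤ d+1 →
      lam (i-1) + lam i + lam (i+1) + (if i = k then mu else 0) = 0 := by
    intro i h1 h2
    have hIi : i ∈ Finset.Icc 1 (d+1) := Finset.mem_Icc.mpr ⟨h1, h2⟩
    have he := hev (v i)
    rw [(M_vz G d v z k hzP hz i hIi).1] at he
    have h4 : ∀ j ∈ Finset.Icc 1 (d+1), lam j * (G.adjMatrix ℝ + 1) (v i) (v j)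
        = (if j + 1 = i ∨ j = i ∨ j = i+1 then lam j else 0) := by
      intro j hj
      rw [M_vv G d v hconn hpath i hIi j hj, mul_ite, mul_one, mul_zero]
    rw [Finset.sum_congr rfl h4, triple_sum d 1 i h1 lam hlamout, mul_ite, mul_one, mul_zero] at he
    linarith
  have hEz : lam k + mu = 0 := by
    have he := hev z
    have hself : (G.adjMatrix ℝ + 1) z z = 1 := by
      rw [entry_M]; simp
    rw [hself, mul_one] at he
    have h4 : ∀ j ∈ Finset.Icc 1 (d+1), lam j * (G.adjMatrix ℝ + 1) z (v j)
        = (if j = k then lam j else 0) := by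
      intro j hj
      rw [(M_vz G d v z k hzP hz j hj).2, mul_ite, mul_one, mul_zero]
    rw [Finset.sum_congr rfl h4, Finset.sum_ite_eq' (Finset.Icc 1 (d+1)) k lam,
      if_pos hkIcc] at he
    linarith
  obtain ⟨hmu0, hlam0⟩ := core_single d k lam mu hd3 hkIcc'.1 hkIcc'.2 hk3
    (by rw [hlamdef]; exact if_neg (by omega))
    (fun j hj => hlamout j (by rw [Finset.mem_Icc]; omega)) hE hEz
  apply hgi0
  rw [hggg i0]
  rcases Nat.eq_zero_or_pos i0.val with h | h
  · rw [h]; exact hmu0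
  · have h5 : lam i0.val = gg i0.val := by
      rw [hlamdef]
      exact if_pos ⟨h, by have := i0.isLt; omega⟩
    rw [← h5]; exact hlam0 _

lemma one_side {V : Type*} (G : SimpleGraph V) (u z z' : V)
    (h : (if G.Adj u z then (1:ℝ) else 0) + (if u = z then 1 else 0)
       = (if G.Adj u z' then 1 else 0) + (if u = z' then 1 else 0)) :
    (u = z ∨ G.Adj z u) → (u = z' ∨ G.Adj z' u) := by
  intro hl
  by_contra hr
  push_neg at hr
  rw [if_neg (show ¬ G.Adj u z' from fun hA => hr.2 hA.symm), if_neg hr.1, add_zero] at h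
  rcases hl with rfl | hA
  · have h2 : (if u = u then (1:ℝ) else 0) = 1 := if_pos rfl
    rw [h2] at h
    split_ifs at h <;> norm_num at h
  · have h2 : (if G.Adj u z then (1:ℝ) else 0) = 1 := if_pos hA.symm
    rw [h2] at h
    split_ifs at h <;> norm_num at h

lemma pair_aux {V : Type*} [Fintype V] (G : SimpleGraph V) (n d : ℕ)
    (hconn : G.Connected) (hcard : Fintype.card V = n)
    (hcanon : ∀ a b : V, (∀ z : V, (z = a ∨ G.Adj a z) ↔ (z = b ∨ G.Adj b z)) → a = b)
    (hd3 : d % 3 = 1)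
    (v : ℕ → V)
    (hpath : ∀ i ∈ Finset.Icc 1 (d + 1), ∀ j ∈ Finset.Icc 1 (d + 1),
      G.dist (v i) (v j) = max i j - min i j)
    (hmult : multNegOne G = n - d - 1)
    (z z' : V) (hzz' : z ≠ z')
    (hzP : ∀ i ∈ Finset.Icc 1 (d+1), z ≠ v i) (hzP' : ∀ i ∈ Finset.Icc 1 (d+1), z' ≠ v i)
    (a b : ℕ) (hab : a ≤ b)
    (hz : (Finset.Icc 1 (d + 1)).filter (fun i => G.Adj z (v i)) = {3*a})
    (hz' : (Finset.Icc 1 (d + 1)).filter (fun i => G.Adj z' (v i)) = {3*b}) :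
    a ≠ b ∧ G.Adj z z' := by
  have hn := path_card G d v n hcard hconn hpath
  have hrank := rank_range G d n hcard hn hmult
  obtain ⟨haIcc, hiffa⟩ := pathNbrs_spec G d v z (3*a) hz
  obtain ⟨hbIcc, hiffb⟩ := pathNbrs_spec G d v z' (3*b) hz'
  rw [Finset.mem_Icc] at haIcc hbIcc
  have ha1 : 1 ≤ a := by omega
  set col : V → (V → ℝ) := fun u w => (G.adjMatrix ℝ + 1) w u with hcol
  set F : ℕ → (V → ℝ) := fun j => if j = 0 then col z else if j = 1 then col z' else col (v j)
    with hF
  have hmem : ∀ i : Fin (d+2), F i.val ∈ LinearMap.range (Matrix.toLin' (G.adjMatrix ℝ + 1)) := by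
    intro i
    simp only [hF]
    split_ifs
    · exact col_mem G z
    · exact col_mem G z'
    · exact col_mem G (v i.val)
  obtain ⟨g, hsum, i0, hgi0⟩ := nontriv_rel d _ hrank (fun i => F i.val) hmem
  set gg : ℕ → ℝ := fun j => if h : j < d + 2 then g ⟨j, h⟩ else 0 with hgg
  set lam : ℕ → ℝ := fun j => if 2 ≤ j ∧ j ≤ d+1 then gg j else 0 with hlamdef
  set mu : ℝ := gg 0 with hmu
  set nu : ℝ := gg 1 with hnu
  set eps : ℝ := if G.Adj z z' then 1 else 0 with heps
  have hepsor : eps = 0 ∨ eps = 1 := by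
    rw [heps]; split_ifs <;> simp
  have hggg : ∀ i : Fin (d+2), g i = gg i.val := by
    intro i; rw [hgg]; simp only [i.isLt, dif_pos]
  have hlamout : ∀ j, j ∉ Finset.Icc 2 (d+1) → lam j = 0 := by
    intro j hj
    rw [Finset.mem_Icc] at hj
    rw [hlamdef]
    exact if_neg (by omega)
  have hMzz' : (G.adjMatrix ℝ + 1) z z' = eps := by
    rw [entry_M, if_neg hzz', add_zero, heps]
  have hMz'z : (G.adjMatrix ℝ + 1) z' z = eps := by
    rw [entry_M, if_neg (Ne.symm hzz'), add_zero, heps,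
      show G.Adj z' z ↔ G.Adj z z' from G.adj_comm _ _]
  have hev : ∀ w : V, mu * (G.adjMatrix ℝ + 1) w z + nu * (G.adjMatrix ℝ + 1) w z'
      + ∑ j ∈ Finset.Icc 2 (d+1), lam j * (G.adjMatrix ℝ + 1) w (v j) = 0 := by
    intro w
    have h0 := congrFun hsum w
    simp only [Finset.sum_apply, Pi.smul_apply, smul_eq_mul, Pi.zero_apply] at h0
    have h1 : ∑ i : Fin (d+2), g i * F i.val w = ∑ j ∈ Finset.range (d+2), gg j * F j w := by
      rw [← Fin.sum_univ_eq_sum_range (fun j => gg j * F j w) (d+2)]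
      exact Finset.sum_congr rfl (fun i _ => by rw [hggg i])
    have h2 : Finset.range (d+2) = insert 0 (insert 1 (Finset.Icc 2 (d+1))) := by
      ext j
      simp only [Finset.mem_range, Finset.mem_insert, Finset.mem_Icc]
      omega
    rw [h1, h2, Finset.sum_insert (by simp), Finset.sum_insert (by simp)] at h0
    have h3 : ∀ j ∈ Finset.Icc 2 (d+1), gg j * F j w = lam j * (G.adjMatrix ℝ + 1) w (v j) := by
      intro j hj
      rw [Finset.mem_Icc] at hj
      rw [hF, hlamdef]
      simp only
      rw [if_neg (by omega : ¬ j = 0), if_neg (by omega : ¬ j = 1),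
        if_pos (by omega : 2 ≤ j ∧ j ≤ d+1)]
    rw [Finset.sum_congr rfl h3] at h0
    have h4 : F 0 w = (G.adjMatrix ℝ + 1) w z := by simp [hF, hcol]
    have h5 : F 1 w = (G.adjMatrix ℝ + 1) w z' := by simp [hF, hcol]
    rw [h4, h5] at h0
    linarith
  have hE : ∀ i, 1 ≤ i → i ≤ d+1 →
      lam (i-1) + lam i + lam (i+1) + (if i = 3*a then mu else 0)
        + (if i = 3*b then nu else 0) = 0 := by
    intro i h1 h2
    have hIi : i ∈ Finset.Icc 1 (d+1) := Finset.mem_Icc.mpr ⟨h1, h2⟩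
    have he := hev (v i)
    rw [(M_vz G d v z (3*a) hzP hz i hIi).1, (M_vz G d v z' (3*b) hzP' hz' i hIi).1] at he
    have h4 : ∀ j ∈ Finset.Icc 2 (d+1), lam j * (G.adjMatrix ℝ + 1) (v i) (v j)
        = (if j + 1 = i ∨ j = i ∨ j = i+1 then lam j else 0) := by
      intro j hj
      rw [Finset.mem_Icc] at hj
      rw [M_vv G d v hconn hpath i hIi j (Finset.mem_Icc.mpr (by omega)), mul_ite, mul_one,
        mul_zero]
    rw [Finset.sum_congr rfl h4, triple_sum d 2 i h1 lam hlamout, mul_ite, mul_one, mul_zero,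
      mul_ite, mul_one, mul_zero] at he
    linarith
  have haIcc2 : 3*a ∈ Finset.Icc 2 (d+1) := Finset.mem_Icc.mpr (by omega)
  have hbIcc2 : 3*b ∈ Finset.Icc 2 (d+1) := Finset.mem_Icc.mpr (by omega)
  have hEx : lam (3*a) + mu + nu * eps = 0 := by
    have he := hev z
    have hself : (G.adjMatrix ℝ + 1) z z = 1 := by rw [entry_M]; simp
    rw [hself, mul_one, hMzz'] at he
    have h4 : ∀ j ∈ Finset.Icc 2 (d+1), lam j * (G.adjMatrix ℝ + 1) z (v j)
        = (if j = 3*a then lam j else 0) := by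
      intro j hj
      have hj1 : j ∈ Finset.Icc 1 (d+1) := by
        rw [Finset.mem_Icc] at *; omega
      rw [(M_vz G d v z (3*a) hzP hz j hj1).2, mul_ite, mul_one, mul_zero]
    rw [Finset.sum_congr rfl h4, Finset.sum_ite_eq' (Finset.Icc 2 (d+1)) (3*a) lam,
      if_pos haIcc2] at he
    linarith
  have hEy : lam (3*b) + mu * eps + nu = 0 := by
    have he := hev z'
    have hself : (G.adjMatrix ℝ + 1) z' z' = 1 := by rw [entry_M]; simp
    rw [hself, mul_one, hMz'z] at he
    have h4 : ∀ j ∈ Finset.Icc 2 (d+1), lam j * (G.adjMatrix ℝ + 1) z' (v j)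
        = (if j = 3*b then lam j else 0) := by
      intro j hj
      have hj1 : j ∈ Finset.Icc 1 (d+1) := by
        rw [Finset.mem_Icc] at *; omega
      rw [(M_vz G d v z' (3*b) hzP' hz' j hj1).2, mul_ite, mul_one, mul_zero]
    rw [Finset.sum_congr rfl h4, Finset.sum_ite_eq' (Finset.Icc 2 (d+1)) (3*b) lam,
      if_pos hbIcc2] at he
    linarith
  have hcore := core_pair d a b lam mu nu eps ha1 hab (by omega) hepsor
    (fun j hj => by rw [hlamdef]; exact if_neg (by omega))
    (fun j hj => hlamout j (by rw [Finset.mem_Icc]; omega)) hE hEx hEy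
  have hzero : (mu = 0 ∧ nu = 0 ∧ ∀ j, lam j = 0) → False := by
    rintro ⟨hm, hn', hl⟩
    apply hgi0
    rw [hggg i0]
    rcases Nat.lt_or_ge i0.val 2 with h | h
    · have h01 : i0.val = 0 ∨ i0.val = 1 := by omega
      rcases h01 with h0 | h0 <;> rw [h0]
      · exact hm
      · exact hn'
    · have h5 : lam i0.val = gg i0.val := by
        rw [hlamdef]
        exact if_pos ⟨h, by have := i0.isLt; omega⟩
      rw [← h5]; exact hl _
  have hadjzz' : G.Adj z z' := by
    by_contra hA
    have he0 : eps = 0 := by rw [heps, if_neg hA]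
    exact hzero (hcore.1 he0)
  refine ⟨?_, hadjzz'⟩
  intro haeq
  obtain ⟨hmn, hl⟩ := hcore.2 haeq
  have hmune : mu ≠ 0 := by
    intro hm
    exact hzero ⟨hm, by linarith, hl⟩
  -- columns of z and z' coincide
  have hcols : ∀ w, (G.adjMatrix ℝ + 1) w z = (G.adjMatrix ℝ + 1) w z' := by
    intro w
    have he := hev w
    have hs : ∑ j ∈ Finset.Icc 2 (d+1), lam j * (G.adjMatrix ℝ + 1) w (v j) = 0 := by
      apply Finset.sum_eq_zero
      intro j _
      rw [hl j, zero_mul]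
    rw [hs, add_zero] at he
    have hnv : nu = -mu := by linarith
    rw [hnv] at he
    have : mu * ((G.adjMatrix ℝ + 1) w z - (G.adjMatrix ℝ + 1) w z') = 0 := by ring_nf; linarith
    rcases mul_eq_zero.mp this with h | h
    · exact absurd h hmune
    · linarith
  exfalso
  apply hzz'
  apply hcanon
  intro u
  have h := hcols u
  rw [entry_M, entry_M] at h
  exact ⟨one_side G u z z' h, one_side G u z' z h.symm⟩

lemma dist_le_one_of_adj {V : Type*} {G : SimpleGraph V} {u w : V} (h : G.Adj u w) :
    G.dist u w ≤ 1 := le_of_eq (SimpleGraph.dist_eq_one_iff_adj.mpr h)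

theorem stmt_18_aux {V : Type*} [Fintype V] (G : SimpleGraph V) (n d : ℕ)
    (hconn : G.Connected)
    (hcard : Fintype.card V = n)
    (hcanon : ∀ a b : V, (∀ z : V, (z = a ∨ G.Adj a z) ↔ (z = b ∨ G.Adj b z)) → a = b)
    (hd3 : d % 3 = 1)
    (hdiam : ∀ a b : V, G.dist a b ≤ d)
    (v : ℕ → V)
    (hpath : ∀ i ∈ Finset.Icc 1 (d + 1), ∀ j ∈ Finset.Icc 1 (d + 1),
      G.dist (v i) (v j) = max i j - min i j)
    (hmult : multNegOne G = n - d - 1)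
    (x y : V) (hxy : x ≠ y) (hxP : ∀ i ∈ Finset.Icc 1 (d + 1), x ≠ v i) (hyP : ∀ i ∈ Finset.Icc 1 (d + 1), y ≠ v i) (a b : ℕ)
    (hx : (Finset.Icc 1 (d + 1)).filter (fun i => G.Adj x (v i)) = {3 * a})
    (hy : (Finset.Icc 1 (d + 1)).filter (fun i => G.Adj y (v i)) = {3 * b}) :
    a ≠ b ∧ G.Adj x y ∧
    {z : V | (∀ i ∈ Finset.Icc 1 (d + 1), z ≠ v i) ∧
      ((Finset.Icc 1 (d + 1)).filter (fun i => G.Adj z (v i))).card = 1}.ncard ≤ 2 := by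
  have hmul3 : ∀ c : ℕ, 3 * c = c * 3 := fun c => by ring
  -- parts 1 and 2
  have hpart12 : a ≠ b ∧ G.Adj x y := by
    rcases le_total a b with hab | hab
    · exact pair_aux G n d hconn hcard hcanon hd3 v hpath hmult x y hxy hxP hyP a b hab hx hy
    · obtain ⟨h1, h2⟩ := pair_aux G n d hconn hcard hcanon hd3 v hpath hmult y x (Ne.symm hxy)
        hyP hxP b a hab hy hx
      exact ⟨fun h => h1 h.symm, h2.symm⟩
  refine ⟨hpart12.1, hpart12.2, ?_⟩
  -- part 3
  set S : Set V := {z : V | (∀ i ∈ Finset.Icc 1 (d + 1), z ≠ v i) ∧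
      ((Finset.Icc 1 (d + 1)).filter (fun i => G.Adj z (v i))).card = 1} with hS
  have key : ∀ z ∈ S, ∃ c : ℕ, 1 ≤ c ∧ 3*c ≤ d+1 ∧
      (Finset.Icc 1 (d + 1)).filter (fun i => G.Adj z (v i)) = {3*c} ∧ G.Adj z (v (3*c)) := by
    intro z hz
    obtain ⟨hzP, hzcard⟩ := hz
    obtain ⟨k, hk⟩ := Finset.card_eq_one.mp hzcard
    have hk3 := pos_lemma G n d hconn hcard hd3 v hpath hmult z hzP k hk
    obtain ⟨hkIcc, hiffk⟩ := pathNbrs_spec G d v z k hk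
    rw [Finset.mem_Icc] at hkIcc
    refine ⟨k / 3, by omega, by omega, ?_, ?_⟩
    · rw [show 3 * (k/3) = k by omega]; exact hk
    · rw [show 3 * (k/3) = k by omega]
      exact (hiffk k (Finset.mem_Icc.mpr hkIcc)).mpr rfl
  have pairres : ∀ z ∈ S, ∀ z' ∈ S, z ≠ z' → ∀ c c' : ℕ, 1 ≤ c → 1 ≤ c' →
      3*c ≤ d+1 → 3*c' ≤ d+1 →
      (Finset.Icc 1 (d + 1)).filter (fun i => G.Adj z (v i)) = {3*c} →
      (Finset.Icc 1 (d + 1)).filter (fun i => G.Adj z' (v i)) = {3*c'} →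
      G.Adj z (v (3*c)) → G.Adj z' (v (3*c')) →
      c ≠ c' ∧ 3*c' ≤ 3*c + 3 ∧ 3*c ≤ 3*c' + 3 := by
    intro z hz z' hz' hne c c' hc hc' hcd hcd' hfz hfz' hA hA'
    have hcne : c ≠ c' ∧ G.Adj z z' := by
      rcases le_total c c' with hcc | hcc
      · exact pair_aux G n d hconn hcard hcanon hd3 v hpath hmult z z' hne hz.1 hz'.1 c c' hcc hfz hfz'
      · obtain ⟨h1, h2⟩ := pair_aux G n d hconn hcard hcanon hd3 v hpath hmult z' z
          (Ne.symm hne) hz'.1 hz.1 c' c hcc hfz' hfz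
        exact ⟨fun h => h1 h.symm, h2.symm⟩
    have hdist : G.dist (v (3*c)) (v (3*c')) ≤ 3 := by
      calc G.dist (v (3*c)) (v (3*c'))
          ≤ G.dist (v (3*c)) z + G.dist z (v (3*c')) := hconn.dist_triangle
        _ ≤ G.dist (v (3*c)) z + (G.dist z z' + G.dist z' (v (3*c'))) := by
            have := hconn.dist_triangle (u := z) (v := z') (w := v (3*c'))
            omega
        _ ≤ 1 + (1 + 1) := by
            have h1 := dist_le_one_of_adj hA.symm
            have h2 := dist_le_one_of_adj hcne.2
            have h3 := dist_le_one_of_adj hA'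
            omega
        _ = 3 := by norm_num
    rw [hpath (3*c) (Finset.mem_Icc.mpr (by omega)) (3*c') (Finset.mem_Icc.mpr (by omega))] at hdist
    refine ⟨hcne.1, ?_, ?_⟩ <;>
      rcases le_total (3*c) (3*c') with h | h <;>
        first
          | (rw [max_eq_right h, min_eq_left h] at hdist; omega)
          | (rw [max_eq_left h, min_eq_right h] at hdist; omega)
  by_contra hcon
  push_neg at hcon
  obtain ⟨t, hts, htcard⟩ := Set.exists_subset_card_eq (show 3 ≤ S.ncard by omega)
  obtain ⟨z1, z2, z3, h12, h13, h23, ht⟩ := Set.ncard_eq_three.mp htcard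
  have hz1 : z1 ∈ S := hts (by rw [ht]; simp)
  have hz2 : z2 ∈ S := hts (by rw [ht]; simp)
  have hz3 : z3 ∈ S := hts (by rw [ht]; simp)
  obtain ⟨c1, hc1a, hc1b, hc1f, hc1adj⟩ := key z1 hz1
  obtain ⟨c2, hc2a, hc2b, hc2f, hc2adj⟩ := key z2 hz2
  obtain ⟨c3, hc3a, hc3b, hc3f, hc3adj⟩ := key z3 hz3
  obtain ⟨e12, f12, g12⟩ := pairres z1 hz1 z2 hz2 h12 c1 c2 hc1a hc2a hc1b hc2b hc1f hc2f hc1adj hc2adj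
  obtain ⟨e13, f13, g13⟩ := pairres z1 hz1 z3 hz3 h13 c1 c3 hc1a hc3a hc1b hc3b hc1f hc3f hc1adj hc3adj
  obtain ⟨e23, f23, g23⟩ := pairres z2 hz2 z3 hz3 h23 c2 c3 hc2a hc3a hc2b hc3b hc2f hc3f hc2adj hc3adj
  omega


theorem stmt_18 {V : Type*} [Fintype V] (G : SimpleGraph V) (n d : ℕ)
    (hconn : G.Connected)
    (hcard : Fintype.card V = n)
    (hcanon : ∀ a b : V, (∀ z : V, (z = a ∨ G.Adj a z) ↔ (z = b ∨ G.Adj b z)) → a = b)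
    (hd3 : d % 3 = 1)
    (hdiam : ∀ a b : V, G.dist a b ≤ d)
    (v : ℕ → V)
    (hpath : ∀ i ∈ Finset.Icc 1 (d + 1), ∀ j ∈ Finset.Icc 1 (d + 1),
      G.dist (v i) (v j) = max i j - min i j)
    (hmult : multNegOne G = n - d - 1)
    (x y : V) (hxy : x ≠ y) (hxP : ∀ i ∈ Finset.Icc 1 (d + 1), x ≠ v i) (hyP : ∀ i ∈ Finset.Icc 1 (d + 1), y ≠ v i) (a b : ℕ)
    (hx : pathNbrs G d v x = {3 * a}) (hy : pathNbrs G d v y = {3 * b}) :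
    a ≠ b ∧ G.Adj x y ∧
    {z : V | (∀ i ∈ Finset.Icc 1 (d + 1), z ≠ v i) ∧
      (pathNbrs G d v z).card = 1}.ncard ≤ 2 := by
  unfold pathNbrs at hx hy ⊢
  exact stmt_18_aux G n d hconn hcard hcanon hd3 hdiam v hpath hmult x y hxy hxP hyP a b hx hy
end
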